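/- arXiv:2111.11994 — 6 statements merged into one kernel-verified Lean document; each statement's English description precedes it below -/
import Mathlib

section
/- Vizing's theorem: for every finite simple graph G, the edge chromatic number χ'(G) satisfies χ'(G) ≤ Δ(G) + 1. -/
open Finset

set_option linter.unusedSectionVars false
set_option linter.unusedVariables false
set_option maxHeartbeats 1000000

section Vizing

variable {V : Type*} [Fintype V] [DecidableEq V]
  (G : SimpleGraph V) [DecidableRel G.Adj]

structure PC where
  c : V → V → Option (Fin (G.maxDegree + 1))
  symm : ∀ u v, c u v = c v u
  adj : ∀ u v, (c u v).isSome → G.Adj u v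
  proper : ∀ u v w, c u v = c u w → (c u v).isSome → v = w

variable {G}

def Free (C : PC G) (a : Fin (G.maxDegree + 1)) (v : V) : Prop :=
  ∀ u, C.c v u ≠ some a

lemma exists_free (C : PC G) (v : V) : ∃ a, Free C a v := by
  classical
  set P : Finset (Fin (G.maxDegree + 1)) :=
    univ.filter (fun a => ∃ u, C.c v u = some a) with hP
  have hcard : P.card ≤ G.degree v := by
    set f : Fin (G.maxDegree + 1) → V :=
      fun a => if h : ∃ u, C.c v u = some a then h.choose else v with hfdef
    have hf : ∀ a ∈ P, C.c v (f a) = some a := by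
      intro a ha
      have h : ∃ u, C.c v u = some a := by simpa [hP] using ha
      simp only [hfdef, dif_pos h]
      exact h.choose_spec
    have : P.card ≤ (G.neighborFinset v).card := by
      apply Finset.card_le_card_of_injOn f
      · intro a ha
        rw [Finset.mem_coe, SimpleGraph.mem_neighborFinset]
        exact C.adj v (f a) (by rw [hf a ha]; rfl)
      · intro a ha b hb hab
        have h2 : C.c v (f a) = C.c v (f b) := by rw [hab]
        rw [hf a ha, hf b hb] at h2
        exact Option.some_injective _ h2
    simpa [SimpleGraph.card_neighborFinset_eq_degree] using this
  have hlt : P.card < Fintype.card (Fin (G.maxDegree + 1)) := by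
    have := G.degree_le_maxDegree v
    simp only [Fintype.card_fin]
    omega
  have : P ≠ univ := by
    intro h; rw [h] at hlt; simp [Finset.card_univ] at hlt
  obtain ⟨a, ha⟩ : ∃ a, a ∉ P := by
    by_contra h
    push_neg at h
    exact this (Finset.eq_univ_iff_forall.2 h)
  refine ⟨a, fun u hu => ha ?_⟩
  simp only [hP, Finset.mem_filter, Finset.mem_univ, true_and]
  exact ⟨u, hu⟩


def updf (C : PC G) (x y : V) (o : Option (Fin (G.maxDegree + 1))) : V → V → Option (Fin (G.maxDegree + 1)) :=
  fun u v => if (u = x ∧ v = y) ∨ (u = y ∧ v = x) then o else C.c u v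

lemma updf_eq₁ (C : PC G) (x y : V) (o) : updf C x y o x y = o := by simp [updf]

lemma updf_eq₂ (C : PC G) (x y : V) (o) : updf C x y o y x = o := by simp [updf]

lemma updf_ne (C : PC G) (x y : V) (o) {u v : V}
    (h : ¬((u = x ∧ v = y) ∨ (u = y ∧ v = x))) : updf C x y o u v = C.c u v := by
  simp [updf, h]

lemma updf_ne' (C : PC G) (x y : V) (o) {u v : V}
    (hu : u ≠ x ∧ u ≠ y) : updf C x y o u v = C.c u v := by
  apply updf_ne; tauto

lemma updf_symm (C : PC G) (x y : V) (o) (u v : V) :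
    updf C x y o u v = updf C x y o v u := by
  unfold updf
  by_cases h : (u = x ∧ v = y) ∨ (u = y ∧ v = x)
  · have h' : (v = x ∧ u = y) ∨ (v = y ∧ u = x) := by tauto
    simp [h, h']
  · have h' : ¬((v = x ∧ u = y) ∨ (v = y ∧ u = x)) := by tauto
    simp [h, h', C.symm u v]

/-- Uncolor the edge xy. -/
def unset (C : PC G) (x y : V) : PC G where
  c := updf C x y none
  symm := updf_symm C x y none
  adj u v h := by
    by_cases hc : (u = x ∧ v = y) ∨ (u = y ∧ v = x)
    · simp [updf, hc] at h
    · rw [updf_ne C x y none hc] at h; exact C.adj u v h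
  proper u v w h hs := by
    by_cases h1 : (u = x ∧ v = y) ∨ (u = y ∧ v = x)
    · simp [updf, h1] at hs
    · by_cases h2 : (u = x ∧ w = y) ∨ (u = y ∧ w = x)
      · rw [updf_ne C x y none h1] at h hs
        simp [updf, h2] at h
        simp [h] at hs
      · rw [updf_ne C x y none h1] at h hs
        rw [updf_ne C x y none h2] at h
        exact C.proper u v w h hs

/-- Color the edge xy with color a. -/
def setc (C : PC G) (x y : V) (a : Fin (G.maxDegree + 1)) (hxy : G.Adj x y)
    (hx : ∀ u, u ≠ y → C.c x u ≠ some a) (hy : ∀ u, u ≠ x → C.c y u ≠ some a) : PC G where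
  c := updf C x y (some a)
  symm := updf_symm C x y (some a)
  adj u v h := by
    by_cases hc : (u = x ∧ v = y) ∨ (u = y ∧ v = x)
    · rcases hc with ⟨rfl, rfl⟩ | ⟨rfl, rfl⟩
      · exact hxy
      · exact hxy.symm
    · rw [updf_ne C x y _ hc] at h; exact C.adj u v h
  proper u v w h hs := by
    have hne : x ≠ y := hxy.ne
    by_cases h1 : (u = x ∧ v = y) ∨ (u = y ∧ v = x)
    · by_cases h2 : (u = x ∧ w = y) ∨ (u = y ∧ w = x)
      · rcases h1 with ⟨rfl, rfl⟩ | ⟨rfl, rfl⟩ <;>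
          rcases h2 with ⟨h2a, rfl⟩ | ⟨h2a, rfl⟩ <;> first | rfl | (exact absurd h2a (by tauto))
      · exfalso
        rw [updf_ne C x y _ h2] at h
        rcases h1 with ⟨rfl, rfl⟩ | ⟨rfl, rfl⟩
        · rw [updf_eq₁] at h
          have hwv : w ≠ v := by rintro rfl; exact h2 (Or.inl ⟨rfl, rfl⟩)
          exact hx w (fun hwy => hwv (hwy.trans rfl)) h.symm
        · rw [updf_eq₂] at h
          have hwv : w ≠ v := by rintro rfl; exact h2 (Or.inr ⟨rfl, rfl⟩)
          exact hy w (fun hwx => hwv (hwx.trans rfl)) h.symm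
    · rw [updf_ne C x y _ h1] at h hs
      by_cases h2 : (u = x ∧ w = y) ∨ (u = y ∧ w = x)
      · exfalso
        rcases h2 with ⟨rfl, rfl⟩ | ⟨rfl, rfl⟩
        · rw [updf_eq₁] at h
          have hvw : v ≠ w := by rintro rfl; exact h1 (Or.inl ⟨rfl, rfl⟩)
          exact hx v hvw h
        · rw [updf_eq₂] at h
          have hvw : v ≠ w := by rintro rfl; exact h1 (Or.inr ⟨rfl, rfl⟩)
          exact hy v hvw h
      · rw [updf_ne C x y _ h2] at h
        exact C.proper u v w h hs

lemma unset_c (C : PC G) (x y : V) : (unset C x y).c = updf C x y none := rfl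

lemma setc_c (C : PC G) (x y : V) (a : Fin (G.maxDegree + 1)) (hxy hx hy) :
    (setc C x y a hxy hx hy).c = updf C x y (some a) := rfl


section Flip

variable (C : PC G) (x : V) (c d : Fin (G.maxDegree + 1))

/-- The color swap. -/
def swapc (a : Fin (G.maxDegree + 1)) : Fin (G.maxDegree + 1) :=
  if a = c then d else if a = d then c else a

lemma swapc_c : swapc c d c = d := by simp [swapc]
lemma swapc_d (hcd : c ≠ d) : swapc c d d = c := by simp [swapc, hcd.symm]
lemma swapc_other {a} (h1 : a ≠ c) (h2 : a ≠ d) : swapc c d a = a := by simp [swapc, h1, h2]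

lemma swapc_swapc (hcd : c ≠ d) (a : Fin (G.maxDegree + 1)) :
    swapc c d (swapc c d a) = a := by
  unfold swapc; split_ifs <;> simp_all

open Classical in
/-- The unique `a`-colored neighbor of `v`, if any. -/
noncomputable def nextv (v : V) (a : Fin (G.maxDegree + 1)) : Option V :=
  if h : ∃ u, C.c v u = some a then some h.choose else none

lemma nextv_eq_some {v u : V} {a : Fin (G.maxDegree + 1)} :
    nextv C v a = some u ↔ C.c v u = some a := by
  classical
  constructor
  · intro h
    unfold nextv at h
    split_ifs at h with hex
    · obtain rfl : hex.choose = u := by simpa using h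
      exact hex.choose_spec
  · intro h
    have hex : ∃ u, C.c v u = some a := ⟨u, h⟩
    unfold nextv
    rw [dif_pos hex]
    have := C.proper v hex.choose u (hex.choose_spec.trans h.symm) (by rw [hex.choose_spec]; rfl)
    rw [this]

lemma nextv_eq_none {v : V} {a : Fin (G.maxDegree + 1)} (h : ∀ u, C.c v u ≠ some a) :
    nextv C v a = none := by
  unfold nextv
  rw [dif_neg]; push_neg; exact h

/-- The alternating trajectory starting at `x`, with colors d, c, d, c, ... -/
noncomputable def seqv : ℕ → Option V
  | 0 => some x
  | n + 1 => (seqv n).bind (fun v => nextv C v (if Even n then d else c))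

lemma seqv_none_mono {m : ℕ} (h : seqv C x c d m = none) :
    ∀ k, m ≤ k → seqv C x c d k = none := by
  intro k hk
  induction k with
  | zero =>
    have : m = 0 := by omega
    rw [← this]; exact h
  | succ n ih =>
    rcases Nat.lt_or_ge m (n+1) with h1 | h1
    · have := ih (by omega)
      rw [seqv, this]; rfl
    · have : m = n + 1 := by omega
      rw [← this]; exact h

def InT (v : V) : Prop := ∃ n, seqv C x c d n = some v

end Flip

section Flip2
variable {V : Type*} [Fintype V] [DecidableEq V]
  {G : SimpleGraph V} [DecidableRel G.Adj]
  (C : PC G) (x : V) (c d : Fin (G.maxDegree + 1))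

lemma InT_closed (hcx : Free C c x) (hcd : c ≠ d) {v u : V}
    (hv : InT C x c d v) (h : C.c v u = some c ∨ C.c v u = some d) :
    InT C x c d u := by
  obtain ⟨n, hn⟩ := hv
  obtain ⟨b, hb, hbcd⟩ : ∃ b, C.c v u = some b ∧ (b = c ∨ b = d) := by
    rcases h with h | h
    · exact ⟨c, h, Or.inl rfl⟩
    · exact ⟨d, h, Or.inr rfl⟩
  by_cases hcol : b = (if Even n then d else c)
  · refine ⟨n + 1, ?_⟩
    rw [seqv, hn, Option.bind_some, ← hcol]
    exact (nextv_eq_some C).mpr hb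
  · -- b is the "incoming" color
    match n, hn with
    | 0, hn =>
      obtain rfl : x = v := Option.some_injective _ hn
      simp only [Even.zero, if_true] at hcol
      have hbc : b = c := by tauto
      exact absurd hb (by rw [hbc]; exact hcx u)
    | (m+1), hn =>
      rw [seqv] at hn
      obtain ⟨w, hw, hnext⟩ := Option.bind_eq_some_iff.mp hn
      have hcv : C.c w v = some (if Even m then d else c) := (nextv_eq_some C).mp hnext
      have hpar : (if Even m then d else c) = b := by
        rcases Nat.even_or_odd m with hm | hm
        · have : ¬ Even (m+1) := by rw [Nat.even_add_one]; exact not_not_intro hm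
          simp only [hm, if_true]
          simp only [this, if_false] at hcol
          tauto
        · have hm' : ¬ Even m := Nat.not_even_iff_odd.mpr hm
          have : Even (m+1) := Nat.even_add_one.mpr hm'
          simp only [hm', if_false]
          simp only [this, if_true] at hcol
          tauto
      have hvw : C.c v w = some b := by rw [C.symm, hcv, hpar]
      have : u = w := C.proper v u w (hb.trans hvw.symm) (by rw [hb]; rfl)
      exact ⟨m, this ▸ hw⟩

lemma seqv_terminal {v : V} (hv : InT C x c d v) (hvx : v ≠ x) (hcd : c ≠ d)
    (hd : ∀ z, C.c v z ≠ some d) :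
    ∃ m, seqv C x c d m = some v ∧ seqv C x c d (m+1) = none := by
  obtain ⟨m, hm⟩ := hv
  refine ⟨m, hm, ?_⟩
  rw [seqv, hm, Option.bind_some]
  rcases Nat.even_or_odd m with hme | hmo
  · simp only [hme, if_true]
    exact nextv_eq_none C hd
  · exfalso
    obtain ⟨m', rfl⟩ : ∃ m', m = m' + 1 := by
      rcases m with _ | m'
      · exact absurd hmo (by simp)
      · exact ⟨m', rfl⟩
    rw [seqv] at hm
    obtain ⟨w, hw, hnext⟩ := Option.bind_eq_some_iff.mp hm
    have hm'e : Even m' := by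
      obtain ⟨k, hk⟩ := hmo
      exact ⟨k, by omega⟩
    rw [if_pos hm'e] at hnext
    have : C.c v w = some d := by rw [C.symm]; exact (nextv_eq_some C).mp hnext
    exact hd w this

lemma no_two_terminals {u w : V} (hcd : c ≠ d)
    (hu : InT C x c d u) (hw : InT C x c d w) (hux : u ≠ x) (hwx : w ≠ x) (huw : u ≠ w)
    (hdu : ∀ z, C.c u z ≠ some d) (hdw : ∀ z, C.c w z ≠ some d) : False := by
  obtain ⟨m, hm, hm'⟩ := seqv_terminal C x c d hu hux hcd hdu
  obtain ⟨n, hn, hn'⟩ := seqv_terminal C x c d hw hwx hcd hdw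
  rcases lt_trichotomy m n with h | h | h
  · rw [seqv_none_mono C x c d hm' n (by omega)] at hn
    simp at hn
  · subst h
    rw [hm] at hn
    exact huw (by simpa using hn)
  · rw [seqv_none_mono C x c d hn' m (by omega)] at hm
    simp at hm

open Classical in
noncomputable def flipf : V → V → Option (Fin (G.maxDegree + 1)) :=
  fun u v => if InT C x c d u ∨ InT C x c d v then (C.c u v).map (swapc c d) else C.c u v

open Classical in
lemma flipf_eq (hcx : Free C c x) (hcd : c ≠ d) (u v : V) :
    flipf C x c d u v = if InT C x c d u then (C.c u v).map (swapc c d) else C.c u v := by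
  unfold flipf
  by_cases hu : InT C x c d u
  · simp [hu]
  · simp only [hu, false_or, if_false]
    by_cases hv : InT C x c d v
    · rw [if_pos hv]
      have hnot : C.c v u ≠ some c ∧ C.c v u ≠ some d := by
        constructor <;> intro h <;> exact hu (InT_closed C x c d hcx hcd hv (by tauto))
      rw [C.symm] at hnot
      match hcc : C.c u v with
      | none => rfl
      | some a =>
        rw [hcc] at hnot
        simp only [Option.map_some]
        rw [swapc_other c d (by simpa using fun h => hnot.1 (by rw [h])) (by simpa using fun h => hnot.2 (by rw [h]))]
    · rw [if_neg hv]

lemma swapc_inj (hcd : c ≠ d) : Function.Injective (swapc c d) := by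
  intro a b h
  have := congrArg (swapc c d) h
  rwa [swapc_swapc c d hcd, swapc_swapc c d hcd] at this

noncomputable def cflip (hcx : Free C c x) (hcd : c ≠ d) : PC G where
  c := flipf C x c d
  symm u v := by
    unfold flipf
    by_cases h : InT C x c d u ∨ InT C x c d v
    · rw [if_pos h, if_pos (Or.symm h), C.symm]
    · rw [if_neg h, if_neg (fun h' => h (Or.symm h')), C.symm]
  adj u v h := by
    apply C.adj u v
    unfold flipf at h
    split_ifs at h with h1
    · simpa using h
    · exact h
  proper u v w h hs := by
    rw [flipf_eq C x c d hcx hcd u v, flipf_eq C x c d hcx hcd u w] at h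
    rw [flipf_eq C x c d hcx hcd u v] at hs
    split_ifs at h hs with h1
    · have := Option.map_injective (swapc_inj c d hcd) h
      apply C.proper u v w this
      simpa using hs
    · exact C.proper u v w h hs

lemma cflip_c (hcx : Free C c x) (hcd : c ≠ d) :
    (cflip C x c d hcx hcd).c = flipf C x c d := rfl

lemma cflip_isSome (hcx : Free C c x) (hcd : c ≠ d) (u v : V) :
    ((cflip C x c d hcx hcd).c u v).isSome = (C.c u v).isSome := by
  rw [cflip_c]; unfold flipf
  split_ifs <;> simp

lemma InT_self : InT C x c d x := ⟨0, rfl⟩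

lemma cflip_c_of_inT (hcx : Free C c x) (hcd : c ≠ d) {v : V} (hv : InT C x c d v) (u : V) :
    (cflip C x c d hcx hcd).c v u = (C.c v u).map (swapc c d) := by
  rw [cflip_c]; unfold flipf; rw [if_pos (Or.inl hv)]

lemma cflip_c_of_notT (hcx : Free C c x) (hcd : c ≠ d) {v : V} (hv : ¬ InT C x c d v) (u : V) :
    (cflip C x c d hcx hcd).c v u = C.c v u := by
  rw [cflip_c, flipf_eq C x c d hcx hcd, if_neg hv]

lemma free_cflip_of_inT (hcx : Free C c x) (hcd : c ≠ d) {v : V} (hv : InT C x c d v)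
    (a : Fin (G.maxDegree + 1)) :
    Free (cflip C x c d hcx hcd) a v ↔ Free C (swapc c d a) v := by
  unfold Free
  constructor
  · intro h u hu
    apply h u
    rw [cflip_c_of_inT C x c d hcx hcd hv u, hu, Option.map_some, swapc_swapc c d hcd]
  · intro h u hu
    rw [cflip_c_of_inT C x c d hcx hcd hv u] at hu
    match hcc : C.c v u with
    | none => rw [hcc] at hu; simp at hu
    | some b =>
      rw [hcc, Option.map_some] at hu
      have hb : b = swapc c d a := by
        have h1 := Option.some_injective _ hu
        have h2 := congrArg (swapc c d) h1
        rwa [swapc_swapc c d hcd] at h2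
      exact h u (by rw [hcc, hb])

lemma free_cflip_of_notT (hcx : Free C c x) (hcd : c ≠ d) {v : V} (hv : ¬ InT C x c d v)
    (a : Fin (G.maxDegree + 1)) :
    Free (cflip C x c d hcx hcd) a v ↔ Free C a v := by
  unfold Free
  constructor
  · intro h u
    rw [← cflip_c_of_notT C x c d hcx hcd hv u]
    exact h u
  · intro h u
    rw [cflip_c_of_notT C x c d hcx hcd hv u]
    exact h u

end Flip2

section Fan
variable {V : Type*} [Fintype V] [DecidableEq V]
  {G : SimpleGraph V} [DecidableRel G.Adj]

/-- The last vertex of `f0 :: rest`. -/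
def lastv : V → List V → V
  | v, [] => v
  | _, u :: rest => lastv u rest

lemma lastv_mem (f0 : V) (rest : List V) : lastv f0 rest ∈ f0 :: rest := by
  induction rest generalizing f0 with
  | nil => simp [lastv]
  | cons f1 rest ih =>
    rw [lastv]
    have := ih f1
    simp at this ⊢
    tauto

lemma lastv_append (f0 z : V) (pre post : List V) :
    lastv f0 (pre ++ z :: post) = lastv z post := by
  induction pre generalizing f0 with
  | nil => rw [List.nil_append, lastv]
  | cons p pre ih => rw [List.cons_append, lastv, ih]

/-- `FanTail C x f0 rest` : each vertex of `rest` is the next spoke of a fan at `x`: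
the color of the edge to it is free at the previous spoke. -/
def FanTail (C : PC G) (x : V) : V → List V → Prop
  | _, [] => True
  | u, v :: rest => (∃ a, C.c x v = some a ∧ Free C a u) ∧ FanTail C x v rest

lemma fanTail_split (C : PC G) (x f0 z : V) (pre post : List V)
    (h : FanTail C x f0 (pre ++ z :: post)) :
    FanTail C x f0 pre ∧ (∃ a, C.c x z = some a ∧ Free C a (lastv f0 pre)) ∧
      FanTail C x z post := by
  induction pre generalizing f0 with
  | nil =>
    rw [List.nil_append, FanTail] at h
    exact ⟨trivial, h.1, h.2⟩
  | cons p pre ih =>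
    rw [List.cons_append, FanTail] at h
    obtain ⟨hseam, htail⟩ := h
    obtain ⟨h1, h2, h3⟩ := ih p htail
    exact ⟨⟨hseam, h1⟩, by rwa [lastv], h3⟩

lemma fanTail_join (C : PC G) (x f0 z : V) (pre post : List V)
    (h1 : FanTail C x f0 pre) (h2 : ∃ a, C.c x z = some a ∧ Free C a (lastv f0 pre))
    (h3 : FanTail C x z post) :
    FanTail C x f0 (pre ++ z :: post) := by
  induction pre generalizing f0 with
  | nil => exact ⟨h2, h3⟩
  | cons p pre ih =>
    rw [FanTail] at h1
    rw [lastv] at h2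
    exact ⟨h1.1, ih p h1.2 h2⟩

lemma fanTail_congr (C C' : PC G) (x : V) : ∀ (rest : List V) (f0 : V),
    (∀ v ∈ rest, C'.c x v = C.c x v) →
    (∀ u ∈ f0 :: rest, ∀ v ∈ rest, ∀ a, C.c x v = some a → Free C a u → Free C' a u) →
    FanTail C x f0 rest → FanTail C' x f0 rest := by
  intro rest
  induction rest with
  | nil => intro f0 _ _ _; trivial
  | cons f1 rest ih =>
    intro f0 h1 h2 h
    rw [FanTail] at h ⊢
    obtain ⟨⟨a, ha, hfree⟩, htail⟩ := h
    refine ⟨⟨a, ?_, ?_⟩, ?_⟩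
    · rw [h1 f1 (by simp), ha]
    · exact h2 f0 (by simp) f1 (by simp) a ha hfree
    · apply ih f1 (fun v hv => h1 v (by simp [hv]))
        (fun u hu v hv a' ha' hf => h2 u (by simp at hu ⊢; tauto) v (by simp [hv]) a' ha' hf)
        htail

end Fan

section Rotate
variable {V : Type*} [Fintype V] [DecidableEq V]
  {G : SimpleGraph V} [DecidableRel G.Adj]

/-- Rotating a fan and coloring its last edge: given a fan `f0 :: rest` at `x` whose
first edge is uncolored, and a color `d` free at both `x` and the last spoke, there is a
proper coloring whose colored edges are the old ones together with `x f0`. -/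
lemma rotate (x : V) (d : Fin (G.maxDegree + 1)) :
    ∀ (rest : List V) (C : PC G) (f0 : V),
    G.Adj x f0 → (∀ v ∈ rest, G.Adj x v) → (f0 :: rest).Nodup →
    C.c x f0 = none → FanTail C x f0 rest →
    Free C d x → Free C d (lastv f0 rest) →
    ∃ C' : PC G, ∀ u v, ((C'.c u v).isSome ↔
      ((C.c u v).isSome ∨ ((u = x ∧ v = f0) ∨ (u = f0 ∧ v = x)))) := by
  intro rest
  induction rest with
  | nil =>
    intro C f0 hadj _ _ _ _ hdx hdl
    rw [lastv] at hdl
    refine ⟨setc C x f0 d hadj (fun u _ => hdx u) (fun u _ => hdl u), fun u v => ?_⟩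
    rw [setc_c]
    by_cases h : (u = x ∧ v = f0) ∨ (u = f0 ∧ v = x)
    · simp [updf, h]
    · rw [updf_ne C x f0 _ h]
      simp [h]
  | cons f1 rest ih =>
    intro C f0 hadj0 hadj hnd hf0 hft hdx hdl
    obtain ⟨⟨a1, ha1, hfree1⟩, htail⟩ := hft
    have hxf0 : x ≠ f0 := hadj0.ne
    have hxf1 : x ≠ f1 := (hadj f1 (by simp)).ne
    have hf01 : f0 ≠ f1 := by
      intro h; rw [h] at hnd; simp at hnd
    -- first recolor: uncolor x f1, color x f0 with a1
    have hX : ∀ u, u ≠ f0 → (unset C x f1).c x u ≠ some a1 := by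
      intro u _ h
      rw [unset_c] at h
      by_cases hc : (x = x ∧ u = f1) ∨ (x = f1 ∧ u = x)
      · rw [updf, if_pos hc] at h; simp at h
      · rw [updf_ne C x f1 _ hc] at h
        have : u = f1 := C.proper x u f1 (h.trans ha1.symm) (by rw [h]; rfl)
        exact hc (Or.inl ⟨rfl, this⟩)
    have hY : ∀ u, u ≠ x → (unset C x f1).c f0 u ≠ some a1 := by
      intro u _ h
      rw [unset_c, updf_ne' C x f1 _ ⟨hxf0.symm, hf01⟩] at h
      exact hfree1 u h
    set C₁ : PC G := setc (unset C x f1) x f0 a1 hadj0 hX hY with hC₁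
    -- facts about C₁
    have hC₁x : ∀ v, v ≠ f0 → v ≠ f1 → C₁.c x v = C.c x v := by
      intro v hv0 hv1
      rw [hC₁, setc_c, updf_ne _ x f0 _ (by tauto), unset_c, updf_ne _ x f1 _ (by tauto)]
    have hC₁u : ∀ u, u ≠ x → u ≠ f0 → u ≠ f1 → ∀ w, C₁.c u w = C.c u w := by
      intro u hux hu0 hu1 w
      rw [hC₁, setc_c, updf_ne' _ x f0 _ ⟨hux, hu0⟩, unset_c, updf_ne' _ x f1 _ ⟨hux, hu1⟩]
    have hC₁f1 : ∀ w, C₁.c f1 w = if w = x then none else C.c f1 w := by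
      intro w
      rw [hC₁, setc_c, updf_ne' _ x f0 _ ⟨hxf1.symm, hf01.symm⟩, unset_c]
      by_cases hw : w = x
      · rw [updf, if_pos (by tauto)]; rw [if_pos hw]
      · rw [updf_ne _ x f1 _ (by tauto), if_neg hw]
    have hfree₁ : ∀ u, u ≠ x → u ≠ f0 → ∀ a, Free C a u → Free C₁ a u := by
      intro u hux hu0 a hf w
      by_cases hu1 : u = f1
      · subst hu1
        rw [hC₁f1 w]
        by_cases hw : w = x
        · simp [hw]
        · rw [if_neg hw]; exact hf w
      · rw [hC₁u u hux hu0 hu1 w]; exact hf w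
    -- C₁ : x f1 is uncolored
    have hC₁xf1 : C₁.c x f1 = none := by
      rw [hC₁, setc_c, updf_ne _ x f0 _ (by tauto), unset_c, updf, if_pos (by tauto)]
    -- the new fan tail
    have hft₁ : FanTail C₁ x f1 rest := by
      apply fanTail_congr C C₁ x rest f1
      · intro v hv
        have hv0 : v ≠ f0 := by rintro rfl; simp at hnd; tauto
        have hv1 : v ≠ f1 := by rintro rfl; simp at hnd; tauto
        exact hC₁x v hv0 hv1
      · intro u hu v _ a _ hf
        have hux : u ≠ x := by
          rintro rfl
          rcases List.mem_cons.mp hu with h | h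
          · exact hxf1 h
          · exact (hadj _ (by simp [h])).ne rfl
        have hu0 : u ≠ f0 := by
          rintro rfl; simp at hnd hu; tauto
        exact hfree₁ u hux hu0 a hf
      · exact htail
    -- freeness of d transported
    have hdx₁ : Free C₁ d x := by
      intro w h
      rw [hC₁, setc_c] at h
      by_cases hc : (x = x ∧ w = f0) ∨ (x = f0 ∧ w = x)
      · rw [updf, if_pos hc] at h
        have : a1 = d := by simpa using h
        exact hdx f1 (by rw [ha1, this])
      · rw [updf_ne _ x f0 _ hc, unset_c] at h
        by_cases hc2 : (x = x ∧ w = f1) ∨ (x = f1 ∧ w = x)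
        · rw [updf, if_pos hc2] at h; simp at h
        · rw [updf_ne _ x f1 _ hc2] at h; exact hdx w h
    have hdl₁ : Free C₁ d (lastv f1 rest) := by
      have hlx : lastv f1 rest ≠ x := by
        intro h
        have hm := lastv_mem f1 rest
        rw [h] at hm
        rcases List.mem_cons.mp hm with h' | h'
        · exact hxf1 h'
        · exact (hadj x (by simp [h'])).ne rfl
      have hl0 : lastv f1 rest ≠ f0 := by
        intro h
        have hm := lastv_mem f1 rest
        rw [h] at hm
        simp at hnd
        rcases List.mem_cons.mp hm with h' | h'
        · exact hf01 h'
        · tauto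
      rw [lastv] at hdl
      exact hfree₁ _ hlx hl0 d hdl
    obtain ⟨C', hC'⟩ := ih C₁ f1 (hadj f1 (by simp))
      (fun v hv => hadj v (by simp [hv])) (by simp at hnd ⊢; tauto)
      hC₁xf1 hft₁ hdx₁ hdl₁
    refine ⟨C', fun u v => ?_⟩
    rw [hC' u v]
    -- compute (C₁.c u v).isSome
    by_cases h0 : (u = x ∧ v = f0) ∨ (u = f0 ∧ v = x)
    · have : C₁.c u v = some a1 := by rw [hC₁, setc_c, updf, if_pos h0]
      simp only [this]
      simp [h0]
    · by_cases h1 : (u = x ∧ v = f1) ∨ (u = f1 ∧ v = x)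
      · have : C₁.c u v = none := by
          rw [hC₁, setc_c, updf_ne _ x f0 _ h0, unset_c, updf, if_pos h1]
        simp only [this]
        have hCsome : (C.c u v).isSome := by
          rcases h1 with ⟨rfl, rfl⟩ | ⟨rfl, rfl⟩
          · rw [ha1]; rfl
          · rw [C.symm, ha1]; rfl
        simp [hCsome, h0, h1]
      · have : C₁.c u v = C.c u v := by
          rw [hC₁, setc_c, updf_ne _ x f0 _ h0, unset_c, updf_ne _ x f1 _ h1]
        rw [this]
        simp [h0, h1]

end Rotate

section Extend
variable {V : Type*} [Fintype V] [DecidableEq V]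
  {G : SimpleGraph V} [DecidableRel G.Adj]

/-- A maximal fan exists. -/
lemma exists_max_fan (C : PC G) (x y : V) (hxy : G.Adj x y) :
    ∃ rest : List V, ((∀ v ∈ rest, G.Adj x v) ∧ (y :: rest).Nodup ∧ FanTail C x y rest) ∧
      ∀ z a, C.c x z = some a → Free C a (lastv y rest) → z ∈ y :: rest := by
  suffices h : ∀ (fuel : ℕ) (rest : List V),
      ((∀ v ∈ rest, G.Adj x v) ∧ (y :: rest).Nodup ∧ FanTail C x y rest) →
      Fintype.card V ≤ rest.length + 1 + fuel →
      ∃ rest' : List V, ((∀ v ∈ rest', G.Adj x v) ∧ (y :: rest').Nodup ∧ FanTail C x y rest') ∧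
        ∀ z a, C.c x z = some a → Free C a (lastv y rest') → z ∈ y :: rest' by
    apply h (Fintype.card V) []
    · exact ⟨by simp, by simp, trivial⟩
    · omega
  intro fuel
  induction fuel with
  | zero =>
    intro rest hfan hlen
    refine ⟨rest, hfan, fun z a hz hf => ?_⟩
    by_contra hmem
    have hnd : ((y :: rest) ++ [z]).Nodup := by
      rw [List.nodup_append]
      refine ⟨hfan.2.1, by simp, ?_⟩
      intro w hw
      simp only [List.mem_singleton]
      rintro _ rfl rfl
      exact hmem hw
    have := hnd.length_le_card
    simp at this
    omega
  | succ n ih =>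
    intro rest hfan hlen
    by_cases hext : ∃ z a, C.c x z = some a ∧ Free C a (lastv y rest) ∧ z ∉ y :: rest
    · obtain ⟨z, a, hz, hf, hmem⟩ := hext
      apply ih (rest ++ [z])
      · refine ⟨?_, ?_, ?_⟩
        · intro v hv
          rcases List.mem_append.mp hv with h | h
          · exact hfan.1 v h
          · obtain rfl : v = z := by simpa using h
            exact C.adj x v (by rw [hz]; rfl)
        · have : ((y :: rest) ++ [z]).Nodup := by
            rw [List.nodup_append]
            refine ⟨hfan.2.1, by simp, ?_⟩
            intro w hw
            simp only [List.mem_singleton]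
            rintro _ rfl rfl
            exact hmem hw
          simpa using this
        · exact fanTail_join C x y z rest [] hfan.2.2 ⟨a, hz, hf⟩ trivial
      · simp only [List.length_append, List.length_singleton]
        omega
    · push_neg at hext
      refine ⟨rest, hfan, fun z a hz hf => ?_⟩
      by_contra hmem
      exact hmem (hext z a hz hf)

/-- Any uncolored edge can be colored (possibly recoloring others). -/
lemma extend (C : PC G) {x y : V} (hxy : G.Adj x y) :
    ∃ C' : PC G, (∀ u v, (C.c u v).isSome → (C'.c u v).isSome) ∧ (C'.c x y).isSome := by
  by_cases hcol : (C.c x y).isSome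
  · exact ⟨C, fun u v h => h, hcol⟩
  have hnone : C.c x y = none := Option.not_isSome_iff_eq_none.mp hcol
  obtain ⟨rest, ⟨hadjR, hnd, hft⟩, hmax⟩ := exists_max_fan C x y hxy
  obtain ⟨c, hcx⟩ := exists_free C x
  obtain ⟨d, hdfk⟩ := exists_free C (lastv y rest)
  by_cases hdx : Free C d x
  · obtain ⟨C', hC'⟩ := rotate x d rest C y hxy hadjR hnd hnone hft hdx hdfk
    refine ⟨C', fun u v h => ?_, ?_⟩
    · rw [hC' u v]; exact Or.inl h
    · rw [hC' x y]; exact Or.inr (Or.inl ⟨rfl, rfl⟩)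
  · -- the Kempe chain case
    have hcd : c ≠ d := fun h => hdx (h ▸ hcx)
    obtain ⟨z, hz⟩ : ∃ z, C.c x z = some d := by
      by_contra h
      push_neg at h
      exact hdx (fun u => h u)
    have hzmem : z ∈ y :: rest := hmax z d hz hdfk
    have hzy : z ≠ y := by
      rintro rfl
      rw [hnone] at hz
      simp at hz
    have hzrest : z ∈ rest := by
      rcases List.mem_cons.mp hzmem with h | h
      · exact absurd h hzy
      · exact h
    obtain ⟨pre, post, rfl⟩ := List.append_of_mem hzrest
    obtain ⟨hftpre, ⟨a, haz, hafj⟩, hftpost⟩ := fanTail_split C x y z pre post hft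
    rw [hz] at haz
    have had : a = d := (Option.some_injective _ haz).symm
    rw [had] at hafj
    have hyadj : G.Adj x y := hxy
    -- nodup pieces
    have hndy : y ∉ pre ++ z :: post := (List.nodup_cons.mp hnd).1
    have hnd2 : (pre ++ z :: post).Nodup := (List.nodup_cons.mp hnd).2
    have hdisj : ∀ w, w ∈ y :: pre → w ∈ z :: post → False := by
      intro w h1 h2
      rcases List.mem_cons.mp h1 with rfl | h1'
      · exact hndy (List.mem_append.mpr (Or.inr h2))
      · exact (List.disjoint_of_nodup_append hnd2) h1' h2
    have hzpost : z ∉ post := by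
      have := (List.nodup_append.mp hnd2).2.1
      simpa using (List.nodup_cons.mp this).1
    have hzpre : z ∉ pre := by
      intro h
      exact (List.disjoint_of_nodup_append hnd2) h (by simp)
    -- fj and fk
    have hfjmem : lastv y pre ∈ y :: pre := lastv_mem y pre
    have hlast : lastv y (pre ++ z :: post) = lastv z post := lastv_append y z pre post
    have hfkmem : lastv z post ∈ z :: post := lastv_mem z post
    have hfanadj : ∀ v ∈ y :: (pre ++ z :: post), G.Adj x v := by
      intro v hv
      rcases List.mem_cons.mp hv with rfl | hv'
      · exact hxy
      · exact hadjR v hv'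
    have hfjx : lastv y pre ≠ x := by
      intro h
      have := hfanadj (lastv y pre) (by
        rcases List.mem_cons.mp hfjmem with h' | h'
        · simp [h']
        · simp [List.mem_append]; right; left; exact h')
      rw [h] at this
      exact this.ne rfl
    have hfkx : lastv z post ≠ x := by
      intro h
      have := hfanadj (lastv z post) (by
        rcases List.mem_cons.mp hfkmem with h' | h'
        · simp [List.mem_append, h']
        · simp [List.mem_append]; right; right; right; exact h')
      rw [h] at this
      exact this.ne rfl
    have hfjfk : lastv y pre ≠ lastv z post := by
      intro h
      exact hdisj (lastv y pre) hfjmem (h ▸ hfkmem)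
    -- the flipped coloring
    set C₂ := cflip C x c d hcx hcd with hC₂
    have hxInT : InT C x c d x := InT_self C x c d
    have hdx₂ : Free C₂ d x := by
      rw [hC₂, free_cflip_of_inT C x c d hcx hcd hxInT d, swapc_d c d hcd]
      exact hcx
    have hxy₂ : C₂.c x y = none := by
      rw [hC₂, cflip_c_of_inT C x c d hcx hcd hxInT y, hnone]
      rfl
    have hC₂some : ∀ u v, (C₂.c u v).isSome = (C.c u v).isSome := by
      intro u v
      rw [hC₂]
      exact cflip_isSome C x c d hcx hcd u v
    -- transport of fans avoiding z
    have htrans : ∀ (f0' : V) (rest' : List V), (∀ v ∈ rest', v ≠ z) →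
        FanTail C x f0' rest' → FanTail C₂ x f0' rest' := by
      intro f0' rest' hvz hft'
      apply fanTail_congr C C₂ x rest' f0' ?_ ?_ hft'
      · intro v hv
        rw [hC₂, cflip_c_of_inT C x c d hcx hcd hxInT v]
        match hcc : C.c x v with
        | none => rfl
        | some b =>
          have hbc : b ≠ c := by
            rintro rfl
            exact hcx v hcc
          have hbd : b ≠ d := by
            rintro rfl
            exact hvz v hv (C.proper x v z (hcc.trans hz.symm) (by rw [hcc]; rfl))
          rw [Option.map_some, swapc_other c d hbc hbd]
      · intro u hu v hv b hb hfree
        have hbc : b ≠ c := by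
          rintro rfl
          exact hcx v hb
        have hbd : b ≠ d := by
          rintro rfl
          exact hvz v hv (C.proper x v z (hb.trans hz.symm) (by rw [hb]; rfl))
        by_cases hu2 : InT C x c d u
        · rw [hC₂, free_cflip_of_inT C x c d hcx hcd hu2 b, swapc_other c d hbc hbd]
          exact hfree
        · rw [hC₂, free_cflip_of_notT C x c d hcx hcd hu2 b]
          exact hfree
    by_cases hfj : InT C x c d (lastv y pre)
    · by_cases hfk : InT C x c d (lastv z post)
      · exact absurd (no_two_terminals C x c d hcd hfj hfk hfjx hfkx hfjfk
          (fun w => hafj w) (fun w => hlast ▸ hdfk w)) id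
      · -- rotate the full fan under C₂
        have hft₂ : FanTail C₂ x y (pre ++ z :: post) := by
          apply fanTail_join C₂ x y z pre post
          · exact htrans y pre (fun v hv => fun h => hzpre (h ▸ hv)) hftpre
          · refine ⟨c, ?_, ?_⟩
            · rw [hC₂, cflip_c_of_inT C x c d hcx hcd hxInT z, hz, Option.map_some,
                swapc_d c d hcd]
            · rw [hC₂, free_cflip_of_inT C x c d hcx hcd hfj c, swapc_c]
              exact hafj
          · exact htrans z post (fun v hv => fun h => hzpost (h ▸ hv)) hftpost
        have hdfk₂ : Free C₂ d (lastv y (pre ++ z :: post)) := by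
          rw [hlast, hC₂, free_cflip_of_notT C x c d hcx hcd hfk d]
          exact hlast ▸ hdfk
        obtain ⟨C', hC'⟩ := rotate x d (pre ++ z :: post) C₂ y hxy hadjR hnd hxy₂ hft₂
          hdx₂ hdfk₂
        refine ⟨C', fun u v h => ?_, ?_⟩
        · rw [hC' u v]
          exact Or.inl (by rw [hC₂some u v]; exact h)
        · rw [hC' x y]
          exact Or.inr (Or.inl ⟨rfl, rfl⟩)
    · -- rotate the prefix fan under C₂
      have hndpre : (y :: pre).Nodup := by
        refine List.Nodup.sublist ?_ hnd
        exact List.Sublist.cons₂ y (List.sublist_append_left pre (z :: post))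
      have hft₂ : FanTail C₂ x y pre :=
        htrans y pre (fun v hv => fun h => hzpre (h ▸ hv)) hftpre
      have hdfj₂ : Free C₂ d (lastv y pre) := by
        rw [hC₂, free_cflip_of_notT C x c d hcx hcd hfj d]
        exact hafj
      obtain ⟨C', hC'⟩ := rotate x d pre C₂ y hxy
        (fun v hv => hadjR v (by simp [List.mem_append]; tauto)) hndpre hxy₂ hft₂ hdx₂ hdfj₂
      refine ⟨C', fun u v h => ?_, ?_⟩
      · rw [hC' u v]
        exact Or.inl (by rw [hC₂some u v]; exact h)
      · rw [hC' x y]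
        exact Or.inr (Or.inl ⟨rfl, rfl⟩)

end Extend
section Final
variable {V : Type*} [Fintype V] [DecidableEq V]
  {G : SimpleGraph V} [DecidableRel G.Adj]

/-- The empty coloring. -/
def emptyPC (G : SimpleGraph V) [DecidableRel G.Adj] : PC G where
  c _ _ := none
  symm _ _ := rfl
  adj u v h := by simp at h
  proper u v w _ h := by simp at h

lemma all_colored : ∀ S : Finset (Sym2 V), ↑S ⊆ G.edgeSet →
    ∃ C : PC G, ∀ u v : V, s(u, v) ∈ S → (C.c u v).isSome := by
  intro S
  induction S using Finset.induction_on with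
  | empty => exact fun _ => ⟨emptyPC G, by simp⟩
  | insert e S hnotmem ih =>
    intro hsub
    obtain ⟨C, hC⟩ := ih (fun f hf => hsub (by simp [hf]))
    have he : e ∈ G.edgeSet := hsub (by simp)
    induction e using Sym2.inductionOn with
    | hf x y =>
      have hadj : G.Adj x y := he
      obtain ⟨C', hmono, hcol⟩ := extend C hadj
      refine ⟨C', fun u v huv => ?_⟩
      rcases Finset.mem_insert.mp huv with h | h
      · rcases Sym2.eq_iff.mp h with ⟨rfl, rfl⟩ | ⟨rfl, rfl⟩
        · exact hcol
        · rw [C'.symm]; exact hcol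
      · exact hmono u v (hC u v h)

end Final
end Vizing

/-- Vizing's theorem: every finite simple graph has a proper edge coloring with
`Δ(G) + 1` colors, i.e. the edge chromatic number satisfies `χ'(G) ≤ Δ(G) + 1`. -/
theorem vizing {V : Type*} [Fintype V] [DecidableEq V]
    (G : SimpleGraph V) [DecidableRel G.Adj] :
    ∃ C : G.edgeFinset → Fin (G.maxDegree + 1),
      ∀ e f : G.edgeFinset, e ≠ f →
        (∃ v : V, v ∈ (e : Sym2 V) ∧ v ∈ (f : Sym2 V)) → C e ≠ C f := by
  classical
  obtain ⟨C, hC⟩ := all_colored (G := G) G.edgeFinset (by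
    intro f hf
    rw [Finset.mem_coe, SimpleGraph.mem_edgeFinset] at hf
    exact hf)
  set cmap : Sym2 V → Option (Fin (G.maxDegree + 1)) := Sym2.lift ⟨C.c, C.symm⟩ with hcmap
  have hsome : ∀ e : G.edgeFinset, (cmap (e : Sym2 V)).isSome := by
    rintro ⟨e, he⟩
    induction e using Sym2.inductionOn with
    | hf x y =>
      simp only [hcmap, Sym2.lift_mk]
      exact hC x y he
  refine ⟨fun e => (cmap (e : Sym2 V)).get (hsome e), ?_⟩
  rintro e f hef ⟨v, hv1, hv2⟩ heq
  have h1 : cmap (e : Sym2 V) = some ((cmap (e : Sym2 V)).get (hsome e)) :=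
    (Option.some_get (hsome e)).symm
  have h2 : cmap (f : Sym2 V) = some ((cmap (f : Sym2 V)).get (hsome f)) :=
    (Option.some_get (hsome f)).symm
  set a := Sym2.Mem.other hv1 with ha
  set b := Sym2.Mem.other hv2 with hb
  have hea : (e : Sym2 V) = s(v, a) := (Sym2.other_spec hv1).symm
  have hfb : (f : Sym2 V) = s(v, b) := (Sym2.other_spec hv2).symm
  have hce : cmap (e : Sym2 V) = C.c v a := by rw [hea, hcmap, Sym2.lift_mk]
  have hcf : cmap (f : Sym2 V) = C.c v b := by rw [hfb, hcmap, Sym2.lift_mk]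
  have heq' : (cmap (e : Sym2 V)).get (hsome e) = (cmap (f : Sym2 V)).get (hsome f) := heq
  have hab : C.c v a = C.c v b := by
    rw [← hce, ← hcf, h1, h2, heq']
  have hsome' : (C.c v a).isSome := by
    rw [← hce]; exact hsome e
  have : a = b := C.proper v a b hab hsome'
  apply hef
  apply Subtype.ext
  rw [hea, hfb, this]
end

section
/- For a simple graph G on n vertices, ν(G) ≥ min over integers q with 0 ≤ q < (n-1)/2 of max( (1/2)(n − D_{≤q}(G) + q − 1), q ), where D_{≤q}(G) is the number of vertices of G with degree at most q. -/
open Finset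

/-- A finset of edges of `G` that are pairwise vertex-disjoint, i.e. a matching. -/
def IsMatchingFinset {V : Type*} (G : SimpleGraph V) (M : Finset (Sym2 V)) : Prop :=
  ↑M ⊆ G.edgeSet ∧ (M : Set (Sym2 V)).Pairwise fun e f => ∀ v, v ∈ e → v ∉ f

namespace MatchAux

set_option linter.unusedSectionVars false

variable {V : Type*} [Fintype V] [DecidableEq V] {G : SimpleGraph V}

/-- The set of vertices covered by a set of edges. -/
def MV (M : Finset (Sym2 V)) : Finset V := M.biUnion (fun e => Finset.univ.filter (· ∈ e))

lemma mem_MV {M : Finset (Sym2 V)} {v : V} : v ∈ MV M ↔ ∃ e ∈ M, v ∈ e := by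
  simp [MV]

lemma matching_subset {M N : Finset (Sym2 V)} (hNM : N ⊆ M) (hM : IsMatchingFinset G M) :
    IsMatchingFinset G N :=
  ⟨subset_trans (by exact_mod_cast hNM) hM.1, hM.2.mono (by exact_mod_cast hNM)⟩

lemma not_isDiag_of_mem {M : Finset (Sym2 V)} (hM : IsMatchingFinset G M) {e : Sym2 V}
    (he : e ∈ M) : ¬ e.IsDiag :=
  SimpleGraph.not_isDiag_of_mem_edgeSet G (hM.1 he)

lemma partner_unique {M : Finset (Sym2 V)} (hM : IsMatchingFinset G M) {e f : Sym2 V}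
    (he : e ∈ M) (hf : f ∈ M) {v : V} (hve : v ∈ e) (hvf : v ∈ f) : e = f := by
  by_contra hne
  exact hM.2 (by exact_mod_cast he) (by exact_mod_cast hf) hne v hve hvf

lemma exists_partner {M : Finset (Sym2 V)} (hM : IsMatchingFinset G M) {v : V}
    (hv : v ∈ MV M) : ∃ w, w ≠ v ∧ s(v, w) ∈ M ∧ ∀ e ∈ M, v ∈ e → e = s(v, w) := by
  obtain ⟨e, heM, hve⟩ := mem_MV.1 hv
  obtain ⟨w, rfl⟩ := Sym2.mem_iff_exists.1 hve
  refine ⟨w, ?_, heM, fun f hf hvf => partner_unique hM hf heM hvf (by simp)⟩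
  intro h; subst h
  exact not_isDiag_of_mem hM heM (by simp)

lemma matching_insert {M : Finset (Sym2 V)} (hM : IsMatchingFinset G M) {a b : V}
    (hadj : G.Adj a b) (ha : a ∉ MV M) (hb : b ∉ MV M) :
    IsMatchingFinset G (insert s(a, b) M) := by
  constructor
  · intro e he
    rcases Finset.mem_insert.1 (by exact_mod_cast he) with rfl | h
    · exact hadj
    · exact hM.1 h
  · rw [Finset.coe_insert]
    refine Set.Pairwise.insert hM.2 ?_
    intro f hf hne
    constructor
    · intro v hv hvf
      rcases Sym2.mem_iff.1 hv with rfl | rfl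
      · exact ha (mem_MV.2 ⟨f, by exact_mod_cast hf, hvf⟩)
      · exact hb (mem_MV.2 ⟨f, by exact_mod_cast hf, hvf⟩)
    · intro v hvf hv
      rcases Sym2.mem_iff.1 hv with rfl | rfl
      · exact ha (mem_MV.2 ⟨f, by exact_mod_cast hf, hvf⟩)
      · exact hb (mem_MV.2 ⟨f, by exact_mod_cast hf, hvf⟩)

lemma notMem_of_not_cov {M : Finset (Sym2 V)} {a b : V} (ha : a ∉ MV M) :
    s(a, b) ∉ M := fun h => ha (mem_MV.2 ⟨s(a, b), h, by simp⟩)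

lemma mem_MV_insert {M : Finset (Sym2 V)} {a b v : V} :
    v ∈ MV (insert s(a, b) M) ↔ v ∈ MV M ∨ v = a ∨ v = b := by
  simp only [mem_MV, Finset.mem_insert]
  constructor
  · rintro ⟨e, rfl | he, hv⟩
    · rcases Sym2.mem_iff.1 hv with rfl | rfl
      · exact Or.inr (Or.inl rfl)
      · exact Or.inr (Or.inr rfl)
    · exact Or.inl ⟨e, he, hv⟩
  · rintro (⟨e, he, hv⟩ | rfl | rfl)
    · exact ⟨e, Or.inr he, hv⟩
    · exact ⟨_, Or.inl rfl, by simp⟩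
    · exact ⟨_, Or.inl rfl, by simp⟩

lemma mem_MV_erase {M : Finset (Sym2 V)} (hM : IsMatchingFinset G M) {x y : V}
    (he : s(x, y) ∈ M) {v : V} :
    v ∈ MV (M.erase s(x, y)) ↔ v ∈ MV M ∧ v ≠ x ∧ v ≠ y := by
  constructor
  · rintro h
    obtain ⟨e, heM, hv⟩ := mem_MV.1 h
    have h1 : e ∈ M := Finset.mem_of_mem_erase heM
    have h2 : e ≠ s(x, y) := Finset.ne_of_mem_erase heM
    refine ⟨mem_MV.2 ⟨e, h1, hv⟩, ?_, ?_⟩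
    · rintro rfl; exact h2 (partner_unique hM h1 he hv (by simp))
    · rintro rfl; exact h2 (partner_unique hM h1 he hv (by simp))
  · rintro ⟨h, hx, hy⟩
    obtain ⟨e, heM, hv⟩ := mem_MV.1 h
    refine mem_MV.2 ⟨e, Finset.mem_erase.2 ⟨?_, heM⟩, hv⟩
    rintro rfl
    rcases Sym2.mem_iff.1 hv with rfl | rfl
    · exact hx rfl
    · exact hy rfl

lemma card_MV {M : Finset (Sym2 V)} (hM : IsMatchingFinset G M) :
    (MV M).card = 2 * M.card := by
  have hdisj : ∀ e ∈ M, ∀ f ∈ M, e ≠ f →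
      Disjoint (Finset.univ.filter (· ∈ e)) (Finset.univ.filter (· ∈ f)) := by
    intro e he f hf hne
    simp only [Finset.disjoint_left, Finset.mem_filter]
    rintro v ⟨-, hv⟩ ⟨-, hv'⟩
    exact hM.2 (by exact_mod_cast he) (by exact_mod_cast hf) hne v hv hv'
  have hcard : ∀ e ∈ M, (Finset.univ.filter (· ∈ e)).card = 2 := by
    intro e he
    induction e with
    | _ a b =>
      have hab : a ≠ b := by
        intro h; exact not_isDiag_of_mem hM he (by simp [h])
      have : (Finset.univ.filter (· ∈ s(a, b))) = {a, b} := by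
        ext v; simp [Sym2.mem_iff]
      rw [this, Finset.card_insert_of_notMem (by simp [hab]), Finset.card_singleton]
  rw [MV, Finset.card_biUnion hdisj, Finset.sum_congr rfl hcard, Finset.sum_const,
    smul_eq_mul, mul_comm]

lemma MV_empty : MV (∅ : Finset (Sym2 V)) = ∅ := rfl

lemma matching_empty : IsMatchingFinset G (∅ : Finset (Sym2 V)) := by
  constructor <;> simp [IsMatchingFinset]

lemma matching_union {M N : Finset (Sym2 V)} (hM : IsMatchingFinset G M)
    (hN : IsMatchingFinset G N) (hdisj : Disjoint (MV M) (MV N)) :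
    IsMatchingFinset G (M ∪ N) ∧ (M ∪ N).card = M.card + N.card ∧
      MV (M ∪ N) = MV M ∪ MV N := by
  have hMN : Disjoint M N := by
    rw [Finset.disjoint_left]
    intro e heM heN
    obtain ⟨v, hv⟩ : ∃ v, v ∈ e := by
      induction e with
      | _ a b => exact ⟨a, by simp⟩
    exact Finset.disjoint_left.1 hdisj (mem_MV.2 ⟨e, heM, hv⟩) (mem_MV.2 ⟨e, heN, hv⟩)
  refine ⟨⟨?_, ?_⟩, Finset.card_union_of_disjoint hMN, ?_⟩
  · intro e he
    rcases Finset.mem_union.1 (by exact_mod_cast he) with h | h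
    · exact hM.1 h
    · exact hN.1 h
  · rw [Finset.coe_union]
    intro e he f hf hne v hve hvf
    rcases he with he | he <;> rcases hf with hf | hf
    · exact hM.2 he hf hne v hve hvf
    · exact Finset.disjoint_left.1 hdisj (mem_MV.2 ⟨e, by exact_mod_cast he, hve⟩)
        (mem_MV.2 ⟨f, by exact_mod_cast hf, hvf⟩)
    · exact Finset.disjoint_left.1 hdisj (mem_MV.2 ⟨f, by exact_mod_cast hf, hvf⟩)
        (mem_MV.2 ⟨e, by exact_mod_cast he, hve⟩)
    · exact hN.2 he hf hne v hve hvf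
  · ext v
    simp only [Finset.mem_union, mem_MV]
    aesop

lemma exists_maximum_matching (G : SimpleGraph V) :
    ∃ M0 : Finset (Sym2 V), IsMatchingFinset G M0 ∧
      ∀ M, IsMatchingFinset G M → M.card ≤ M0.card := by
  classical
  obtain ⟨M0, hM0, hmax⟩ := Finset.exists_max_image
    (Finset.univ.filter (fun M : Finset (Sym2 V) => IsMatchingFinset G M)) Finset.card
    ⟨∅, by simp [matching_empty]⟩
  exact ⟨M0, (Finset.mem_filter.1 hM0).2, fun M hM => hmax M (by simp [hM])⟩

lemma adj_of_mem {M : Finset (Sym2 V)} (hM : IsMatchingFinset G M) {a b : V}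
    (h : s(a, b) ∈ M) : G.Adj a b := (SimpleGraph.mem_edgeSet G).1 (hM.1 h)

/-- The key exchange lemma: if `A` is a maximum matching missing `x`, and `B` is a matching
covering `x`, then there is a matching `B'` of the same size as `B` whose covered set is that
of `B` with `x` added and some `B`-uncovered vertex `t` removed; moreover `B'` retains all
common edges of `A` and `B`. -/
lemma exchange (G : SimpleGraph V) (k : ℕ)
    (hmax : ∀ K, IsMatchingFinset G K → K.card ≤ k)
    (B : Finset (Sym2 V)) (hB : IsMatchingFinset G B) :
    ∀ n (A : Finset (Sym2 V)), (A \ B).card = n → IsMatchingFinset G A → A.card = k →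
    ∀ x, x ∉ MV A → x ∈ MV B →
    ∃ t, t ≠ x ∧ t ∉ MV B ∧ ∃ B', IsMatchingFinset G B' ∧ B'.card = B.card ∧
      (∀ v, v ∈ MV B' ↔ (v ∈ MV B ∨ v = t) ∧ v ≠ x) ∧ (∀ e ∈ A, e ∈ B → e ∈ B') := by
  intro n
  induction n using Nat.strong_induction_on with
  | _ n IH =>
  intro A hn hA hAc x hxA hxB
  obtain ⟨a, hax, haB, hauniq⟩ := exists_partner hB hxB
  have haBcov : a ∈ MV B := mem_MV.2 ⟨s(x, a), haB, by simp⟩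
  have hadjxa : G.Adj x a := adj_of_mem hB haB
  by_cases haA : a ∈ MV A
  swap
  · exfalso
    have hins : IsMatchingFinset G (insert s(x, a) A) := matching_insert hA hadjxa hxA haA
    have hcard : (insert s(x, a) A).card = k + 1 := by
      rw [Finset.card_insert_of_notMem (notMem_of_not_cov hxA), hAc]
    have := hmax _ hins
    omega
  obtain ⟨b, hba, hbA, hbuniq⟩ := exists_partner hA haA
  have hadjab : G.Adj a b := adj_of_mem hA hbA
  have hbx : b ≠ x := by
    rintro rfl
    exact hxA (mem_MV.2 ⟨s(a, b), hbA, by simp⟩)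
  have hxaA : s(x, a) ∉ A := notMem_of_not_cov hxA
  have habB : s(a, b) ∉ B := by
    intro h
    have := partner_unique hB (v := a) haB h (by simp) (by simp)
    rcases Sym2.eq_iff.1 this with ⟨h1, h2⟩ | ⟨h1, h2⟩
    · exact hax h1.symm
    · exact hbx h1.symm
  by_cases hbB : b ∈ MV B
  swap
  · -- base case : b is free in B
    refine ⟨b, hbx, hbB, insert s(a, b) (B.erase s(x, a)), ?_, ?_, ?_, ?_⟩
    · refine matching_insert (matching_subset (Finset.erase_subset _ _) hB) hadjab ?_ ?_
      · intro h
        exact absurd ((mem_MV_erase hB haB).1 h).2.2 (by simp)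
      · intro h
        exact hbB ((mem_MV_erase hB haB).1 h).1
    · have h1 : s(a, b) ∉ B.erase s(x, a) := fun h => habB (Finset.mem_of_mem_erase h)
      rw [Finset.card_insert_of_notMem h1, Finset.card_erase_of_mem haB]
      have : 0 < B.card := Finset.card_pos.2 ⟨_, haB⟩
      omega
    · intro v
      rw [mem_MV_insert, mem_MV_erase hB haB]
      constructor
      · rintro (⟨hv, hvx, hva⟩ | rfl | rfl)
        · exact ⟨Or.inl hv, hvx⟩
        · exact ⟨Or.inl haBcov, hax⟩
        · exact ⟨Or.inr rfl, hbx⟩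
      · rintro ⟨hv | rfl, hvx⟩
        · by_cases hva : v = a
          · exact Or.inr (Or.inl hva)
          · exact Or.inl ⟨hv, hvx, hva⟩
        · exact Or.inr (Or.inr rfl)
    · intro e heA heB
      have hexa : e ≠ s(x, a) := by
        rintro rfl
        exact hxA (mem_MV.2 ⟨_, heA, by simp⟩)
      exact Finset.mem_insert_of_mem (Finset.mem_erase.2 ⟨hexa, heB⟩)
  · -- recursive case : b is covered in B
    set A' := insert s(x, a) (A.erase s(a, b)) with hA'def
    have hxErase : x ∉ MV (A.erase s(a, b)) := by
      intro h
      exact hxA ((mem_MV_erase hA hbA).1 h).1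
    have haErase : a ∉ MV (A.erase s(a, b)) := by
      intro h
      exact absurd ((mem_MV_erase hA hbA).1 h).2.1 (by simp)
    have hA' : IsMatchingFinset G A' :=
      matching_insert (matching_subset (Finset.erase_subset _ _) hA) hadjxa hxErase haErase
    have hxaErase : s(x, a) ∉ A.erase s(a, b) := fun h => hxaA (Finset.mem_of_mem_erase h)
    have hA'c : A'.card = k := by
      rw [hA'def, Finset.card_insert_of_notMem hxaErase, Finset.card_erase_of_mem hbA]
      have : 0 < A.card := Finset.card_pos.2 ⟨_, hbA⟩
      omega
    have habAB : s(a, b) ∈ A \ B := Finset.mem_sdiff.2 ⟨hbA, habB⟩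
    have hA'B : A' \ B = (A \ B).erase s(a, b) := by
      ext e
      simp only [Finset.mem_sdiff, Finset.mem_erase, hA'def, Finset.mem_insert]
      constructor
      · rintro ⟨rfl | ⟨hne, heA⟩, heB⟩
        · exact absurd haB heB
        · exact ⟨hne, heA, heB⟩
      · rintro ⟨hne, heA, heB⟩
        exact ⟨Or.inr ⟨hne, heA⟩, heB⟩
    have hmeas : (A' \ B).card < n := by
      rw [hA'B, Finset.card_erase_of_mem habAB, hn]
      have : 0 < n := hn ▸ Finset.card_pos.2 ⟨_, habAB⟩
      omega
    have hbA' : b ∉ MV A' := by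
      rw [hA'def]
      intro h
      rcases mem_MV_insert.1 h with h | rfl | rfl
      · exact absurd ((mem_MV_erase hA hbA).1 h).2.2 (by simp)
      · exact hbx rfl
      · exact hba rfl
    obtain ⟨t, htb, htB, B3, hB3, hB3c, hB3cov, hB3com⟩ :=
      IH _ hmeas A' rfl hA' hA'c b hbA' hbB
    have hxaB3 : s(x, a) ∈ B3 := hB3com _ (Finset.mem_insert_self _ _) haB
    have htx : t ≠ x := fun h => htB (h ▸ hxB)
    have hta : t ≠ a := fun h => htB (h ▸ haBcov)
    have htb' : t ≠ b := htb
    have hbB3 : b ∉ MV B3 := by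
      intro h
      exact absurd ((hB3cov b).1 h).2 (by simp)
    refine ⟨t, htx, htB, insert s(a, b) (B3.erase s(x, a)), ?_, ?_, ?_, ?_⟩
    · refine matching_insert (matching_subset (Finset.erase_subset _ _) hB3) hadjab ?_ ?_
      · intro h
        exact absurd ((mem_MV_erase hB3 hxaB3).1 h).2.2 (by simp)
      · intro h
        exact hbB3 ((mem_MV_erase hB3 hxaB3).1 h).1
    · have h1 : s(a, b) ∉ B3.erase s(x, a) := by
        intro h
        exact hbB3 (mem_MV.2 ⟨_, Finset.mem_of_mem_erase h, by simp⟩)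
      rw [Finset.card_insert_of_notMem h1, Finset.card_erase_of_mem hxaB3, hB3c]
      have : 0 < B3.card := Finset.card_pos.2 ⟨_, hxaB3⟩
      rw [hB3c] at this
      omega
    · intro v
      rw [mem_MV_insert, mem_MV_erase hB3 hxaB3]
      constructor
      · rintro (⟨hv, hvx, hva⟩ | rfl | rfl)
        · rcases ((hB3cov v).1 hv).1 with h | rfl
          · exact ⟨Or.inl h, hvx⟩
          · exact ⟨Or.inr rfl, hvx⟩
        · exact ⟨Or.inl haBcov, hax⟩
        · exact ⟨Or.inl hbB, hbx⟩
      · rintro ⟨hv | rfl, hvx⟩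
        · by_cases hva : v = a
          · exact Or.inr (Or.inl hva)
          · by_cases hvb : v = b
            · exact Or.inr (Or.inr hvb)
            · exact Or.inl ⟨(hB3cov v).2 ⟨Or.inl hv, hvb⟩, hvx, hva⟩
        · exact Or.inl ⟨(hB3cov _).2 ⟨Or.inr rfl, htb'⟩, hvx, hta⟩
    · intro e heA heB
      have hexa : e ≠ s(x, a) := by
        rintro rfl
        exact hxA (mem_MV.2 ⟨_, heA, by simp⟩)
      have heab : e ≠ s(a, b) := by
        rintro rfl
        exact habB heB
      have heA' : e ∈ A' := Finset.mem_insert_of_mem (Finset.mem_erase.2 ⟨heab, heA⟩)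
      exact Finset.mem_insert_of_mem (Finset.mem_erase.2 ⟨hexa, hB3com e heA' heB⟩)


lemma sat_avoid (H : SimpleGraph V) (k : ℕ)
    (hmaxH : ∀ K, IsMatchingFinset H K → K.card ≤ k)
    (hsat : ∀ H' : SimpleGraph V, H < H' → ∃ K, IsMatchingFinset H' K ∧ k < K.card)
    {u v : V} (hne : u ≠ v) (hnadj : ¬ H.Adj u v) :
    ∃ N, IsMatchingFinset H N ∧ N.card = k ∧ u ∉ MV N ∧ v ∉ MV N := by
  set H' := H ⊔ SimpleGraph.fromEdgeSet {s(u, v)} with hH'def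
  have hadj' : H'.Adj u v := by
    simp [hH'def, SimpleGraph.fromEdgeSet_adj, hne]
  have hlt : H < H' := by
    refine lt_of_le_of_ne le_sup_left (fun h => hnadj ?_)
    rw [h]; exact hadj'
  obtain ⟨K, hK, hKc⟩ := hsat H' hlt
  have hKedge : ∀ e ∈ K, e ≠ s(u, v) → e ∈ H.edgeSet := by
    intro e heK hene
    have := hK.1 heK
    induction e with
    | _ c d =>
      rcases (SimpleGraph.sup_adj _ _ _ _).1 ((SimpleGraph.mem_edgeSet _).1 this) with h | h
      · exact h
      · rw [SimpleGraph.fromEdgeSet_adj] at h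
        exact absurd h.1 (by simpa using hene)
  by_cases huv : s(u, v) ∈ K
  · refine ⟨K.erase s(u, v), ⟨?_, hK.2.mono (by exact_mod_cast Finset.erase_subset _ _)⟩,
      ?_, ?_, ?_⟩
    · intro e he
      have he' := Finset.mem_erase.1 (by exact_mod_cast he)
      exact hKedge e he'.2 he'.1
    · have h1 : (K.erase s(u, v)).card = K.card - 1 := Finset.card_erase_of_mem huv
      have h2 := hmaxH (K.erase s(u, v))
        ⟨fun e he => hKedge e (Finset.mem_of_mem_erase (by exact_mod_cast he))
          (Finset.ne_of_mem_erase (by exact_mod_cast he)),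
         hK.2.mono (by exact_mod_cast Finset.erase_subset _ _)⟩
      omega
    · intro h
      obtain ⟨e, heK, hue⟩ := mem_MV.1 h
      have h1 : e ∈ K := Finset.mem_of_mem_erase heK
      have h2 : e ≠ s(u, v) := Finset.ne_of_mem_erase heK
      exact hK.2 (by exact_mod_cast h1) (by exact_mod_cast huv) h2 u hue (by simp)
    · intro h
      obtain ⟨e, heK, hue⟩ := mem_MV.1 h
      have h1 : e ∈ K := Finset.mem_of_mem_erase heK
      have h2 : e ≠ s(u, v) := Finset.ne_of_mem_erase heK
      exact hK.2 (by exact_mod_cast h1) (by exact_mod_cast huv) h2 v hue (by simp)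
  · exfalso
    have : IsMatchingFinset H K := by
      refine ⟨fun e he => hKedge e (by exact_mod_cast he) ?_, hK.2⟩
      rintro rfl
      exact huv (by exact_mod_cast he)
    have := hmaxH K this
    omega

lemma gallai (H : SimpleGraph V) (k : ℕ)
    (hmaxH : ∀ K, IsMatchingFinset H K → K.card ≤ k)
    (hsat : ∀ H' : SimpleGraph V, H < H' → ∃ K, IsMatchingFinset H' K ∧ k < K.card)
    {x y z : V} (hxy : H.Adj x y) (hyz : H.Adj y z)
    (hxzne : x ≠ z) (hxz : ¬ H.Adj x z) :
    ∀ w, w ≠ y → H.Adj y w := by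
  intro w hwy
  by_contra hnadj
  obtain ⟨M0, hM0, hM0c, hxM0, hzM0⟩ := sat_avoid H k hmaxH hsat hxzne hxz
  obtain ⟨N0, hN0, hN0c, hyN0, hwN0⟩ := sat_avoid H k hmaxH hsat (Ne.symm hwy) hnadj
  have hyM0 : y ∈ MV M0 := by
    by_contra hyM0
    have hins := matching_insert hM0 hxy hxM0 hyM0
    have hc : (insert s(x, y) M0).card = k + 1 := by
      rw [Finset.card_insert_of_notMem (notMem_of_not_cov hxM0), hM0c]
    have := hmaxH _ hins
    omega
  obtain ⟨t, hty, htM0, B', hB', hB'c, hB'cov, -⟩ :=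
    exchange H k hmaxH M0 hM0 _ N0 rfl hN0 hN0c y hyN0 hyM0
  have hyB' : y ∉ MV B' := fun h => absurd ((hB'cov y).1 h).2 (by simp)
  -- choose u0 ∈ {x, z} different from t
  obtain ⟨u0, hu0M0, hu0t, hu0y⟩ : ∃ u0, u0 ∉ MV M0 ∧ u0 ≠ t ∧ H.Adj u0 y := by
    by_cases hxt : x = t
    · exact ⟨z, hzM0, fun h => hxzne (hxt.trans h.symm), hyz.symm⟩
    · exact ⟨x, hxM0, hxt, hxy⟩
  have hu0B' : u0 ∉ MV B' := by
    intro h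
    rcases ((hB'cov u0).1 h).1 with h' | h'
    · exact hu0M0 h'
    · exact hu0t h'
  have hins := matching_insert hB' hu0y hu0B' hyB'
  have hc : (insert s(u0, y) B').card = k + 1 := by
    rw [Finset.card_insert_of_notMem (notMem_of_not_cov hu0B'), hB'c, hM0c]
  have := hmaxH _ hins
  omega

lemma clique_pairing (H : SimpleGraph V) :
    ∀ n (S : Finset V), S.card = n → (∀ x ∈ S, ∀ y ∈ S, x ≠ y → H.Adj x y) →
    ∃ M, IsMatchingFinset H M ∧ MV M ⊆ S ∧ M.card = S.card / 2 := by
  intro n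
  induction n using Nat.strong_induction_on with
  | _ n IH =>
  intro S hn hclq
  by_cases hS : S.card ≤ 1
  · exact ⟨∅, matching_empty, by simp [MV_empty], by rw [Finset.card_empty]; omega⟩
  · obtain ⟨a, haS, b, hbS, hab⟩ := Finset.one_lt_card.1 (show 1 < S.card by omega)
    set S' := (S.erase a).erase b with hS'def
    have hS'sub : S' ⊆ S := (Finset.erase_subset _ _).trans (Finset.erase_subset _ _)
    have hbS' : b ∈ S.erase a := Finset.mem_erase.2 ⟨Ne.symm hab, hbS⟩
    have hS'c : S'.card = S.card - 2 := by
      rw [hS'def, Finset.card_erase_of_mem hbS', Finset.card_erase_of_mem haS]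
      omega
    obtain ⟨M', hM', hMV', hMc'⟩ := IH (S.card - 2) (by omega) S' (by omega)
      (fun x hx y hy hxy => hclq x (hS'sub hx) y (hS'sub hy) hxy)
    have haM : a ∉ MV M' := fun h => by
      have := hMV' h
      rw [hS'def] at this
      exact absurd (Finset.mem_erase.1 this).2 (by simp)
    have hbM : b ∉ MV M' := fun h => by
      have := hMV' h
      rw [hS'def] at this
      exact absurd (Finset.mem_erase.1 this).1 (by simp)
    refine ⟨insert s(a, b) M', matching_insert hM' (hclq a haS b hbS hab) haM hbM, ?_, ?_⟩
    · intro v hv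
      rcases mem_MV_insert.1 hv with h | rfl | rfl
      · exact hS'sub (hMV' h)
      · exact haS
      · exact hbS
    · rw [Finset.card_insert_of_notMem (notMem_of_not_cov haM), hMc', hS'c]
      omega

lemma cross_pairing (H : SimpleGraph V) :
    ∀ n (P L : Finset V), P.card = n → Disjoint P L → P.card = L.card →
    (∀ p ∈ P, ∀ u ∈ L, H.Adj p u) →
    ∃ M, IsMatchingFinset H M ∧ MV M ⊆ P ∪ L ∧ M.card = P.card := by
  intro n
  induction n using Nat.strong_induction_on with
  | _ n IH =>
  intro P L hn hdisj hcard hadj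
  rcases Finset.eq_empty_or_nonempty P with rfl | ⟨p, hp⟩
  · exact ⟨∅, matching_empty, by simp [MV_empty], by rw [Finset.card_empty, Finset.card_empty]⟩
  · have hL : L.Nonempty := Finset.card_pos.1 (hcard ▸ Finset.card_pos.2 ⟨p, hp⟩)
    obtain ⟨u, hu⟩ := hL
    have hpu : p ≠ u := fun h => Finset.disjoint_left.1 hdisj hp (h ▸ hu)
    have hPc : (P.erase p).card = P.card - 1 := Finset.card_erase_of_mem hp
    have hLc : (L.erase u).card = L.card - 1 := Finset.card_erase_of_mem hu
    obtain ⟨M', hM', hMV', hMc'⟩ := IH (P.card - 1)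
      (by have := Finset.card_pos.2 ⟨p, hp⟩; omega) (P.erase p) (L.erase u) hPc
      (Finset.disjoint_of_subset_left (Finset.erase_subset _ _)
        (Finset.disjoint_of_subset_right (Finset.erase_subset _ _) hdisj))
      (by omega)
      (fun a ha b hb => hadj a (Finset.mem_of_mem_erase ha) b (Finset.mem_of_mem_erase hb))
    have hpM : p ∉ MV M' := fun h => by
      rcases Finset.mem_union.1 (hMV' h) with h' | h'
      · exact absurd (Finset.mem_erase.1 h').1 (by simp)
      · exact Finset.disjoint_left.1 hdisj hp (Finset.mem_of_mem_erase h')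
    have huM : u ∉ MV M' := fun h => by
      rcases Finset.mem_union.1 (hMV' h) with h' | h'
      · exact Finset.disjoint_left.1 hdisj (Finset.mem_of_mem_erase h') hu
      · exact absurd (Finset.mem_erase.1 h').1 (by simp)
    refine ⟨insert s(p, u) M', matching_insert hM' (hadj p hp u hu) hpM huM, ?_, ?_⟩
    · intro v hv
      rcases mem_MV_insert.1 hv with h | rfl | rfl
      · rcases Finset.mem_union.1 (hMV' h) with h' | h'
        · exact Finset.mem_union_left _ (Finset.mem_of_mem_erase h')
        · exact Finset.mem_union_right _ (Finset.mem_of_mem_erase h')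
      · exact Finset.mem_union_left _ hp
      · exact Finset.mem_union_right _ hu
    · rw [Finset.card_insert_of_notMem (notMem_of_not_cov hpM), hMc']
      have := Finset.card_pos.2 ⟨p, hp⟩
      omega

lemma classes_pairing (H : SimpleGraph V) (Q : Finset (Finset V))
    (hdisj : ∀ C ∈ Q, ∀ C' ∈ Q, C ≠ C' → Disjoint C C')
    (hclq : ∀ C ∈ Q, ∀ x ∈ C, ∀ y ∈ C, x ≠ y → H.Adj x y) :
    ∃ M L, IsMatchingFinset H M ∧ MV M ⊆ Q.biUnion id ∧ L ⊆ Q.biUnion id ∧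
      Disjoint L (MV M) ∧ 2 * M.card + L.card = (Q.biUnion id).card ∧
      L.card = (Q.filter (fun C => Odd C.card)).card := by
  classical
  induction Q using Finset.induction_on with
  | empty => exact ⟨∅, ∅, matching_empty, by simp [MV_empty], by simp, by simp, by simp, by simp⟩
  | @insert C Q hCQ IH =>
    obtain ⟨M0, L0, hM0, hM0sub, hL0sub, hL0disj, hcount, hodd⟩ :=
      IH (fun C hC C' hC' h => hdisj C (Finset.mem_insert_of_mem hC) C'
          (Finset.mem_insert_of_mem hC') h)
        (fun C hC => hclq C (Finset.mem_insert_of_mem hC))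
    obtain ⟨MC, hMC, hMCsub, hMCc⟩ := clique_pairing H C.card C rfl
      (hclq C (Finset.mem_insert_self _ _))
    set LC := C \ MV MC with hLCdef
    have hCdisj : Disjoint C (Q.biUnion id) := by
      rw [Finset.disjoint_biUnion_right]
      intro C' hC'
      exact hdisj C (Finset.mem_insert_self _ _) C' (Finset.mem_insert_of_mem hC')
        (fun h => hCQ (h ▸ hC'))
    have hMVMC : (MV MC).card = 2 * MC.card := card_MV hMC
    have hLCc : LC.card = C.card - 2 * (C.card / 2) := by
      rw [hLCdef, Finset.card_sdiff_of_subset hMCsub, hMVMC, hMCc]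
    have hbu : (insert C Q).biUnion id = C ∪ Q.biUnion id := Finset.biUnion_insert
    obtain ⟨hMun, hMunc, hMunMV⟩ := matching_union hM0 hMC
      (Finset.disjoint_of_subset_left hM0sub
        (Finset.disjoint_of_subset_right hMCsub hCdisj.symm))
    refine ⟨M0 ∪ MC, L0 ∪ LC, hMun, ?_, ?_, ?_, ?_, ?_⟩
    · rw [hbu, hMunMV]
      exact Finset.union_subset (hM0sub.trans Finset.subset_union_right)
        (hMCsub.trans Finset.subset_union_left)
    · rw [hbu]
      exact Finset.union_subset (hL0sub.trans Finset.subset_union_right)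
        ((Finset.sdiff_subset).trans Finset.subset_union_left)
    · rw [hMunMV, Finset.disjoint_union_left, Finset.disjoint_union_right,
        Finset.disjoint_union_right]
      refine ⟨⟨hL0disj, ?_⟩, ?_, Finset.sdiff_disjoint⟩
      · exact Finset.disjoint_of_subset_left hL0sub
          (Finset.disjoint_of_subset_right hMCsub hCdisj.symm)
      · exact Finset.disjoint_of_subset_left Finset.sdiff_subset
          (Finset.disjoint_of_subset_right hM0sub hCdisj)
    · have hdLL : Disjoint L0 LC := Finset.disjoint_of_subset_left hL0sub
        (Finset.disjoint_of_subset_right Finset.sdiff_subset hCdisj.symm)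
      rw [hMunc, Finset.card_union_of_disjoint hdLL, hbu,
        Finset.card_union_of_disjoint hCdisj]
      have h2 : 2 * (C.card / 2) ≤ C.card := Nat.mul_div_le _ _
      omega
    · have hdLL : Disjoint L0 LC := Finset.disjoint_of_subset_left hL0sub
        (Finset.disjoint_of_subset_right Finset.sdiff_subset hCdisj.symm)
      rw [Finset.card_union_of_disjoint hdLL, Finset.filter_insert]
      by_cases hoddC : Odd C.card
      · rw [if_pos hoddC, Finset.card_insert_of_notMem (fun h => hCQ (Finset.mem_filter.1 h).1)]
        have : C.card % 2 = 1 := Nat.odd_iff.1 hoddC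
        omega
      · rw [if_neg hoddC]
        have : C.card % 2 = 0 := Nat.even_iff.1 (Nat.not_odd_iff_even.1 hoddC)
        omega

end MatchAux

/-- For a simple graph `G` on `n` vertices,
`ν(G) ≥ min_{0 ≤ q < (n-1)/2} max( (n − D_{≤q}(G) + q − 1)/2 , q )`,
where `D_{≤q}(G)` is the number of vertices of degree at most `q`. -/
theorem matching_number_lower_bound
    {V : Type*} [Fintype V] [DecidableEq V] (G : SimpleGraph V) [DecidableRel G.Adj] :
    ∃ M : Finset (Sym2 V), IsMatchingFinset G M ∧
      sInf {x : ℝ | ∃ q : ℕ, 2 * q + 1 < Fintype.card V ∧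
          x = max (((Fintype.card V : ℝ) -
              ((Finset.univ.filter fun v => G.degree v ≤ q).card : ℝ) + (q : ℝ) - 1) / 2)
            (q : ℝ)} ≤ (M.card : ℝ) := by
  classical
  obtain ⟨M0, hM0, hM0max⟩ := MatchAux.exists_maximum_matching G
  refine ⟨M0, hM0, ?_⟩
  set n := Fintype.card V with hn
  set k := M0.card with hk
  have hbdd : BddBelow {x : ℝ | ∃ q : ℕ, 2 * q + 1 < n ∧
      x = max (((n : ℝ) - ((Finset.univ.filter fun v => G.degree v ≤ q).card : ℝ)
        + (q : ℝ) - 1) / 2) (q : ℝ)} := by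
    refine ⟨0, ?_⟩
    rintro x ⟨q, -, rfl⟩
    exact le_trans (Nat.cast_nonneg q) (le_max_right _ _)
  have key : ∀ q : ℕ, 2 * q + 1 < n → q ≤ k →
      n + q ≤ 2 * k + (Finset.univ.filter fun v => G.degree v ≤ q).card + 1 →
      sInf {x : ℝ | ∃ q : ℕ, 2 * q + 1 < n ∧
        x = max (((n : ℝ) - ((Finset.univ.filter fun v => G.degree v ≤ q).card : ℝ)
          + (q : ℝ) - 1) / 2) (q : ℝ)} ≤ (k : ℝ) := by
    intro q hq hqk hD
    have hmem : max (((n : ℝ) - ((Finset.univ.filter fun v => G.degree v ≤ q).card : ℝ)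
        + (q : ℝ) - 1) / 2) (q : ℝ) ∈ {x : ℝ | ∃ q : ℕ, 2 * q + 1 < n ∧
        x = max (((n : ℝ) - ((Finset.univ.filter fun v => G.degree v ≤ q).card : ℝ)
          + (q : ℝ) - 1) / 2) (q : ℝ)} := ⟨q, hq, rfl⟩
    refine le_trans (csInf_le hbdd hmem) (max_le ?_ (by exact_mod_cast hqk))
    rw [div_le_iff₀ (by norm_num : (0:ℝ) < 2)]
    have h1 : (n : ℝ) + q ≤ 2 * k +
        ((Finset.univ.filter fun v => G.degree v ≤ q).card : ℝ) + 1 := by exact_mod_cast hD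
    linarith
  by_cases hn1 : n ≤ 1
  · have hempty : {x : ℝ | ∃ q : ℕ, 2 * q + 1 < n ∧
        x = max (((n : ℝ) - ((Finset.univ.filter fun v => G.degree v ≤ q).card : ℝ)
          + (q : ℝ) - 1) / 2) (q : ℝ)} = ∅ :=
      Set.eq_empty_iff_forall_notMem.2 (by rintro x ⟨q, hq, -⟩; omega)
    rw [hempty, Real.sInf_empty]
    exact Nat.cast_nonneg k
  push_neg at hn1
  by_cases heasy : n ≤ 2 * k + 1
  · exact key 0 (by omega) (by omega) (by omega)
  push_neg at heasy
  -- hard case : n ≥ 2k + 2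
  obtain ⟨H, hGH, hHmax⟩ := Finite.exists_le_maximal
    (p := fun H : SimpleGraph V => ∀ K, IsMatchingFinset H K → K.card ≤ k) hM0max
  have hHbound : ∀ K, IsMatchingFinset H K → K.card ≤ k := hHmax.prop
  have hsat : ∀ H' : SimpleGraph V, H < H' → ∃ K, IsMatchingFinset H' K ∧ k < K.card := by
    intro H' hlt
    have hnp := hHmax.not_prop_of_gt hlt
    push_neg at hnp
    obtain ⟨K, hK, hKc⟩ := hnp
    exact ⟨K, hK, by omega⟩
  haveI : DecidableRel H.Adj := fun a b => Classical.dec _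
  set Apred : V → Prop := fun v => ∀ w, w ≠ v → H.Adj v w with hApred
  haveI : DecidablePred Apred := fun v => Classical.dec _
  set A : Finset V := Finset.univ.filter Apred with hA
  set R : Finset V := Finset.univ.filter (fun v => ¬ Apred v) with hR
  set sA := A.card with hsA
  have hAR : Disjoint A R := by
    rw [Finset.disjoint_left]
    intro v hv hv'
    rw [hA] at hv; rw [hR] at hv'
    exact (Finset.mem_filter.1 hv').2 (Finset.mem_filter.1 hv).2
  have hnsplit : sA + R.card = n := by
    have hu : A ∪ R = Finset.univ := by
      ext v
      simp only [hA, hR, Finset.mem_union, Finset.mem_filter, Finset.mem_univ, true_and,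
        iff_true]
      exact em (Apred v)
    rw [hsA, hn, ← Finset.card_univ, ← hu, Finset.card_union_of_disjoint hAR]
  have hGal : ∀ x y z : V, H.Adj x y → H.Adj y z → x ≠ z → ¬ H.Adj x z → Apred y := by
    intro x y z h1 h2 h3 h4 w hw
    exact MatchAux.gallai H k hHbound hsat h1 h2 h3 h4 w hw
  have hstep : ∀ v w z : V, ¬ Apred w → (w = v ∨ H.Adj v w) → (z = w ∨ H.Adj w z) →
      (z = v ∨ H.Adj v z) := by
    intro v w z hw h1 h2
    rcases h1 with rfl | h1
    · exact h2
    rcases h2 with rfl | h2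
    · exact Or.inr h1
    by_cases hzv : z = v
    · exact Or.inl hzv
    right
    by_contra h3
    exact hw (hGal v w z h1 h2 (fun h => hzv h.symm) h3)
  have hsymmrel : ∀ v w : V, (w = v ∨ H.Adj v w) → (v = w ∨ H.Adj w v) := by
    rintro v w (rfl | h)
    · exact Or.inl rfl
    · exact Or.inr h.symm
  set Cl : V → Finset V :=
    fun v => Finset.univ.filter (fun w => ¬ Apred w ∧ (w = v ∨ H.Adj v w)) with hCl
  have hmemCl : ∀ v w, w ∈ Cl v ↔ (¬ Apred w ∧ (w = v ∨ H.Adj v w)) := by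
    intro v w
    rw [hCl]
    simp
  have hClself : ∀ v, ¬ Apred v → v ∈ Cl v := fun v hv => (hmemCl v v).2 ⟨hv, Or.inl rfl⟩
  have hClsub : ∀ v, Cl v ⊆ R := by
    intro v w hw
    rw [hR]
    exact Finset.mem_filter.2 ⟨Finset.mem_univ _, ((hmemCl v w).1 hw).1⟩
  have hCleq : ∀ v w, ¬ Apred v → w ∈ Cl v → Cl w = Cl v := by
    intro v w hv hw
    obtain ⟨hwA, hwr⟩ := (hmemCl v w).1 hw
    ext z
    rw [hmemCl, hmemCl]
    constructor
    · rintro ⟨hz, hzr⟩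
      exact ⟨hz, hstep v w z hwA hwr hzr⟩
    · rintro ⟨hz, hzr⟩
      exact ⟨hz, hstep w v z hv (hsymmrel v w hwr) hzr⟩
  have hCladj : ∀ v, ¬ Apred v → ∀ x ∈ Cl v, ∀ y ∈ Cl v, x ≠ y → H.Adj x y := by
    intro v hv x hx y hy hxy
    have hy' : y ∈ Cl x := (hCleq v x hv hx) ▸ hy
    rcases ((hmemCl x y).1 hy').2 with rfl | h
    · exact absurd rfl hxy
    · exact h
  have hdegH : ∀ v, ¬ Apred v → H.degree v + 1 = sA + (Cl v).card := by
    intro v hv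
    have hnb : H.neighborFinset v = A ∪ (Cl v).erase v := by
      ext w
      rw [SimpleGraph.mem_neighborFinset, Finset.mem_union, Finset.mem_erase]
      constructor
      · intro hadj
        by_cases hw : Apred w
        · exact Or.inl (by rw [hA]; exact Finset.mem_filter.2 ⟨Finset.mem_univ _, hw⟩)
        · exact Or.inr ⟨hadj.ne', (hmemCl v w).2 ⟨hw, Or.inr hadj⟩⟩
      · rintro (hw | ⟨hwv, hw⟩)
        · have hwA : Apred w := (Finset.mem_filter.1 (by rw [hA] at hw; exact hw)).2
          have hne : w ≠ v := fun h => hv (h ▸ hwA)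
          exact (hwA v (Ne.symm hne)).symm
        · rcases ((hmemCl v w).1 hw).2 with rfl | h
          · exact absurd rfl hwv
          · exact h
    have hdisj2 : Disjoint A ((Cl v).erase v) :=
      Finset.disjoint_of_subset_right ((Finset.erase_subset _ _).trans (hClsub v)) hAR
    have hvCl : v ∈ Cl v := hClself v hv
    have h1 : 1 ≤ (Cl v).card := Finset.card_pos.2 ⟨v, hvCl⟩
    have hd : H.degree v = (A ∪ (Cl v).erase v).card := by
      rw [← hnb, SimpleGraph.degree]
    rw [hd, Finset.card_union_of_disjoint hdisj2, Finset.card_erase_of_mem hvCl]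
    omega
  set Q : Finset (Finset V) := R.image Cl with hQ
  have hQmem : ∀ C ∈ Q, ∃ v, ¬ Apred v ∧ C = Cl v := by
    intro C hC
    obtain ⟨v, hvR, rfl⟩ := Finset.mem_image.1 (by rw [hQ] at hC; exact hC)
    have hvR' : v ∈ Finset.univ.filter (fun v => ¬ Apred v) := by rw [hR] at hvR; exact hvR
    exact ⟨v, (Finset.mem_filter.1 hvR').2, rfl⟩
  have hQdisj : ∀ C ∈ Q, ∀ C' ∈ Q, C ≠ C' → Disjoint C C' := by
    intro C hC C' hC' hne
    obtain ⟨v, hv, rfl⟩ := hQmem C hC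
    obtain ⟨v', hv', rfl⟩ := hQmem C' hC'
    rw [Finset.disjoint_left]
    intro w hw hw'
    exact hne ((hCleq v w hv hw).symm.trans (hCleq v' w hv' hw'))
  have hQclq : ∀ C ∈ Q, ∀ x ∈ C, ∀ y ∈ C, x ≠ y → H.Adj x y := by
    intro C hC
    obtain ⟨v, hv, rfl⟩ := hQmem C hC
    exact hCladj v hv
  have hQunion : Q.biUnion id = R := by
    ext w
    simp only [Finset.mem_biUnion, id]
    constructor
    · rintro ⟨C, hC, hw⟩
      obtain ⟨v, hv, rfl⟩ := hQmem C hC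
      exact hClsub v hw
    · intro hw
      have hw' : w ∈ Finset.univ.filter (fun v => ¬ Apred v) := by rw [hR] at hw; exact hw
      have hwA : ¬ Apred w := (Finset.mem_filter.1 hw').2
      exact ⟨Cl w, by rw [hQ]; exact Finset.mem_image_of_mem _ hw, hClself w hwA⟩
  obtain ⟨M1, L, hM1, hM1sub, hLsub, hLdisj, hcount, hoddc⟩ :=
    MatchAux.classes_pairing H Q hQdisj hQclq
  rw [hQunion] at hM1sub hLsub hcount
  set o := (Q.filter (fun C => Odd C.card)).card with ho
  have hadjAR : ∀ p ∈ A, ∀ u, u ∈ R → H.Adj p u := by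
    intro p hp u hu
    have hpA : Apred p := (Finset.mem_filter.1 (by rw [hA] at hp; exact hp)).2
    have hne : u ≠ p := fun h => Finset.disjoint_left.1 hAR hp (h ▸ hu)
    exact hpA u hne
  have hkey : sA + (n - 2*k) ≤ o := by
    by_cases hso : sA ≤ L.card
    · obtain ⟨L', hL'sub, hL'c⟩ := Finset.exists_subset_card_eq hso
      obtain ⟨M2, hM2, hM2sub, hM2c⟩ := MatchAux.cross_pairing H sA A L' rfl
        (Finset.disjoint_of_subset_right (hL'sub.trans hLsub) hAR)
        (by rw [hL'c])
        (fun p hp u hu => hadjAR p hp u ((hL'sub.trans hLsub) hu))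
      have hdisjMV : Disjoint (MatchAux.MV M1) (MatchAux.MV M2) := by
        refine Finset.disjoint_of_subset_right hM2sub ?_
        rw [Finset.disjoint_union_right]
        exact ⟨Finset.disjoint_of_subset_left hM1sub hAR.symm,
          Finset.disjoint_of_subset_right hL'sub hLdisj.symm⟩
      obtain ⟨hMun, hMunc, -⟩ := MatchAux.matching_union hM1 hM2 hdisjMV
      have htot := hHbound _ hMun
      rw [hMunc, hM2c] at htot
      omega
    · push_neg at hso
      exfalso
      obtain ⟨A'', hA''sub, hA''c⟩ := Finset.exists_subset_card_eq (le_of_lt hso)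
      obtain ⟨M2, hM2, hM2sub, hM2c⟩ := MatchAux.cross_pairing H L.card A'' L
        (by rw [hA''c])
        (Finset.disjoint_of_subset_left hA''sub
          (Finset.disjoint_of_subset_right hLsub hAR))
        (by rw [hA''c])
        (fun p hp u hu => hadjAR p (hA''sub hp) u (hLsub hu))
      obtain ⟨M3, hM3, hM3sub, hM3c⟩ := MatchAux.clique_pairing H (A \ A'').card (A \ A'') rfl
        (fun x hx y hy hxy => by
          have hxA : Apred x := (Finset.mem_filter.1
            (by rw [← hA]; exact (Finset.mem_sdiff.1 hx).1)).2
          exact hxA y (Ne.symm hxy))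
      have hdisj12 : Disjoint (MatchAux.MV M1) (MatchAux.MV M2) := by
        refine Finset.disjoint_of_subset_right hM2sub ?_
        rw [Finset.disjoint_union_right]
        exact ⟨Finset.disjoint_of_subset_left hM1sub
            (Finset.disjoint_of_subset_right hA''sub hAR.symm), hLdisj.symm⟩
      obtain ⟨hMun, hMunc, hMunMV⟩ := MatchAux.matching_union hM1 hM2 hdisj12
      have hdisj3 : Disjoint (MatchAux.MV (M1 ∪ M2)) (MatchAux.MV M3) := by
        rw [hMunMV, Finset.disjoint_union_left]
        constructor
        · exact Finset.disjoint_of_subset_left hM1sub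
            (Finset.disjoint_of_subset_right (hM3sub.trans Finset.sdiff_subset) hAR.symm)
        · refine Finset.disjoint_of_subset_left hM2sub
            (Finset.disjoint_of_subset_right hM3sub ?_)
          rw [Finset.disjoint_union_left]
          exact ⟨Finset.sdiff_disjoint.symm,
            Finset.disjoint_of_subset_left hLsub
              (Finset.disjoint_of_subset_right Finset.sdiff_subset hAR.symm)⟩
      obtain ⟨hMun3, hMunc3, -⟩ := MatchAux.matching_union hMun hM3 hdisj3
      have htot := hHbound _ hMun3
      rw [hMunc3, hMunc, hM2c, hM3c] at htot
      have hsdc : (A \ A'').card = sA - L.card := by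
        rw [Finset.card_sdiff_of_subset hA''sub, hA''c]
      rw [hsdc] at htot
      omega
  set Qodd := Q.filter (fun C => Odd C.card) with hQodd
  have hQoddne : Qodd.Nonempty := Finset.card_pos.1 (by omega)
  obtain ⟨C0, hC0mem, hC0max⟩ := Finset.exists_max_image Qodd Finset.card hQoddne
  set Q' := Qodd.erase C0 with hQ'
  have hQ'c : Q'.card = o - 1 := by rw [hQ', Finset.card_erase_of_mem hC0mem, ho]
  have hQ'ne : Q'.Nonempty := Finset.card_pos.1 (by omega)
  obtain ⟨C1, hC1mem, hC1max⟩ := Finset.exists_max_image Q' Finset.card hQ'ne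
  set c' := C1.card with hc'
  have hQsub' : Q' ⊆ Q := (Finset.erase_subset _ _).trans (Finset.filter_subset _ _)
  have hQpos : ∀ C ∈ Q, 1 ≤ C.card := by
    intro C hC
    obtain ⟨v, hv, rfl⟩ := hQmem C hC
    exact Finset.card_pos.2 ⟨v, hClself v hv⟩
  have hc'pos : 1 ≤ c' := hQpos C1 (hQsub' hC1mem)
  set q := sA + c' - 1 with hq
  have hdegsub : ∀ C ∈ Q', ∀ v ∈ C, H.degree v ≤ q := by
    intro C hC v hv
    obtain ⟨u, hu, rfl⟩ := hQmem C (hQsub' hC)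
    have hvA : ¬ Apred v := ((hmemCl u v).1 hv).1
    have hClv : Cl v = Cl u := hCleq u v hu hv
    have hdeg := hdegH v hvA
    rw [hClv] at hdeg
    have hCc : (Cl u).card ≤ c' := hC1max _ hC
    omega
  set W := Q'.biUnion id with hW
  have hWD : W ⊆ Finset.univ.filter (fun v => G.degree v ≤ q) := by
    intro v hv
    obtain ⟨C, hC, hvC⟩ := Finset.mem_biUnion.1 hv
    refine Finset.mem_filter.2 ⟨Finset.mem_univ _, le_trans ?_ (hdegsub C hC v hvC)⟩
    exact Finset.card_le_card (fun w hw => by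
      rw [SimpleGraph.mem_neighborFinset] at hw ⊢
      exact hGH hw)
  have hsumQ' : (o - 2) + c' ≤ ∑ C ∈ Q', C.card := by
    rw [← Finset.add_sum_erase _ _ hC1mem]
    have h1 : (Q'.erase C1).card • 1 ≤ ∑ C ∈ Q'.erase C1, C.card :=
      Finset.card_nsmul_le_sum _ _ _
        (fun C hC => hQpos C (hQsub' (Finset.mem_of_mem_erase hC)))
    rw [smul_eq_mul, mul_one] at h1
    have h2 : (Q'.erase C1).card = o - 2 := by
      rw [Finset.card_erase_of_mem hC1mem, hQ'c]
      omega
    omega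
  have hWcard : (o - 2) + c' ≤ W.card := by
    have hWc0 : W.card = ∑ C ∈ Q', C.card := by
      rw [hW, show Q'.biUnion id = Q'.biUnion (fun C => C) from rfl]
      exact Finset.card_biUnion (fun C hC C' hC' h => hQdisj C (hQsub' hC) C' (hQsub' hC') h)
    rw [hWc0]
    exact hsumQ'
  have hnbound : sA + ((o - 2) + c' + C0.card) ≤ n := by
    have h1 : ∑ C ∈ Qodd, C.card ≤ ∑ C ∈ Q, C.card :=
      Finset.sum_le_sum_of_subset (Finset.filter_subset _ _)
    have h2 : ∑ C ∈ Q, C.card = R.card := by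
      rw [← hQunion, show Q.biUnion id = Q.biUnion (fun C => C) from rfl]
      exact (Finset.card_biUnion hQdisj).symm
    have h3 : C0.card + ∑ C ∈ Q', C.card = ∑ C ∈ Qodd, C.card :=
      Finset.add_sum_erase _ _ hC0mem
    omega
  have hC0c : c' ≤ C0.card := hC0max C1 (Finset.mem_of_mem_erase hC1mem)
  have hqk : q ≤ k := by omega
  have hDb : n + q ≤ 2*k + (Finset.univ.filter fun v => G.degree v ≤ q).card + 1 := by
    have hD1 : W.card ≤ (Finset.univ.filter fun v => G.degree v ≤ q).card :=
      Finset.card_le_card hWD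
    omega
  exact key q (by omega) hqk hDb
end

section
/- Generalized Vizing bound: Let G be a simple graph and let D_i(G) denote the number of vertices of G of degree exactly i. Then for every integer q with 1 ≤ q < n (where n = |V(G)|), ν(G) ≥ ( |E(G)| − Σ_{i ≥ q} i · D_i(G) ) / q. -/
open Finset

namespace GVB

variable {V : Type*} [Fintype V] [DecidableEq V] (G : SimpleGraph V) [DecidableRel G.Adj]

/-- The subgraph of `G` induced on the finset `s` (as a graph on all of `V`). -/
def gr (s : Finset V) : SimpleGraph V where
  Adj a b := G.Adj a b ∧ a ∈ s ∧ b ∈ s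
  symm := ⟨fun a b h => ⟨h.1.symm, h.2.2, h.2.1⟩⟩
  loopless := ⟨fun a h => G.loopless.irrefl a h.1⟩

instance (s : Finset V) : DecidableRel (gr G s).Adj := fun a b =>
  inferInstanceAs (Decidable (G.Adj a b ∧ a ∈ s ∧ b ∈ s))

/-- Edges of `G` inside `s`. -/
def ES (s : Finset V) : Finset (Sym2 V) := (gr G s).edgeFinset

/-- `v` is covered by the edge set `M`. -/
def cov (M : Finset (Sym2 V)) (v : V) : Prop := ∃ e ∈ M, v ∈ e

/-- `M` is a matching inside `s`. -/
def IsMat (s : Finset V) (M : Finset (Sym2 V)) : Prop := IsMatchingFinset (gr G s) M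

variable {G}

lemma sym2_exists_eq (e : Sym2 V) : ∃ a b, e = s(a, b) :=
  Sym2.ind (fun a b => ⟨a, b, rfl⟩) e

lemma mem_ES {s : Finset V} {a b : V} :
    s(a, b) ∈ ES G s ↔ G.Adj a b ∧ a ∈ s ∧ b ∈ s := by
  rw [ES, SimpleGraph.mem_edgeFinset]
  simp [gr]

lemma ES_mono {s t : Finset V} (h : s ⊆ t) : ES G s ⊆ ES G t := by
  intro e he
  induction e with
  | _ a b =>
    rw [mem_ES] at he ⊢
    exact ⟨he.1, h he.2.1, h he.2.2⟩

lemma mem_s_of_mem_ES {s : Finset V} {e : Sym2 V} (he : e ∈ ES G s) {v : V} (hv : v ∈ e) :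
    v ∈ s := by
  induction e with
  | _ a b =>
    rw [mem_ES] at he
    rcases Sym2.mem_iff.mp hv with rfl | rfl
    · exact he.2.1
    · exact he.2.2

lemma ne_of_mem_ES {s : Finset V} {a b : V} (he : s(a, b) ∈ ES G s) : a ≠ b :=
  (mem_ES.mp he).1.ne

lemma IsMat.subset_ES {s : Finset V} {M : Finset (Sym2 V)} (hM : IsMat G s M) :
    M ⊆ ES G s := fun e he => SimpleGraph.mem_edgeFinset.mpr (hM.1 he)

lemma isMat_of {s : Finset V} {M : Finset (Sym2 V)} (h1 : M ⊆ ES G s)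
    (h2 : (M : Set (Sym2 V)).Pairwise fun e f => ∀ v, v ∈ e → v ∉ f) : IsMat G s M :=
  ⟨fun e he => SimpleGraph.mem_edgeFinset.mp (h1 he), h2⟩

lemma isMat_mono {s t : Finset V} {M : Finset (Sym2 V)} (hM : IsMat G s M) (h : s ⊆ t) :
    IsMat G t M :=
  isMat_of (fun e he => ES_mono h (hM.subset_ES he)) hM.2

lemma isMat_empty (s : Finset V) : IsMat G s (∅ : Finset (Sym2 V)) := by
  constructor <;> simp

lemma cov_mem_s {s : Finset V} {M : Finset (Sym2 V)} (hM : IsMat G s M) {v : V}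
    (hv : cov M v) : v ∈ s := by
  obtain ⟨e, heM, hve⟩ := hv
  exact mem_s_of_mem_ES (hM.subset_ES heM) hve

open Classical in
/-- The matching number of the graph induced on `s`. -/
noncomputable def nu (G : SimpleGraph V) [DecidableRel G.Adj] (s : Finset V) : ℕ :=
  Nat.findGreatest (fun n => ∃ M, IsMat G s M ∧ M.card = n) (ES G s).card

lemma exists_max_matching (s : Finset V) : ∃ M, IsMat G s M ∧ M.card = nu G s := by
  classical
  exact Nat.findGreatest_spec (P := fun n => ∃ M, IsMat G s M ∧ M.card = n) (m := 0)
    (Nat.zero_le _) ⟨∅, isMat_empty s, rfl⟩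

lemma card_le_nu {s : Finset V} {M : Finset (Sym2 V)} (hM : IsMat G s M) :
    M.card ≤ nu G s := by
  classical
  exact Nat.le_findGreatest (P := fun n => ∃ M, IsMat G s M ∧ M.card = n)
    (Finset.card_le_card hM.subset_ES) ⟨M, hM, rfl⟩

lemma nu_mono {s t : Finset V} (h : s ⊆ t) : nu G s ≤ nu G t := by
  obtain ⟨M, hM, hcard⟩ := exists_max_matching (G := G) s
  rw [← hcard]
  exact card_le_nu (isMat_mono hM h)


lemma dis_symm : Symmetric (fun (e f : Sym2 V) => ∀ v, v ∈ e → v ∉ f) := by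
  intro e f h v hvf hve
  exact h v hve hvf

lemma isMat_subset {s : Finset V} {M M' : Finset (Sym2 V)} (hM : IsMat G s M)
    (h : M' ⊆ M) : IsMat G s M' :=
  isMat_of (fun e he => hM.subset_ES (h he)) (hM.2.mono (Finset.coe_subset.mpr h))

lemma dis_of_mem {s : Finset V} {M : Finset (Sym2 V)} (hM : IsMat G s M)
    {e f : Sym2 V} (he : e ∈ M) (hf : f ∈ M) (hne : e ≠ f) {v : V} (hv : v ∈ e) : v ∉ f :=
  hM.2 he hf hne v hv

lemma cov_insert {M : Finset (Sym2 V)} {e : Sym2 V} {x : V} :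
    cov (insert e M) x ↔ x ∈ e ∨ cov M x := by
  simp [cov]

lemma cov_erase {s : Finset V} {M : Finset (Sym2 V)} (hM : IsMat G s M) {f : Sym2 V}
    (hf : f ∈ M) {x : V} : cov (M.erase f) x ↔ cov M x ∧ x ∉ f := by
  constructor
  · rintro ⟨e, heM, hxe⟩
    have hef : e ≠ f := (Finset.mem_erase.mp heM).1
    exact ⟨⟨e, (Finset.mem_erase.mp heM).2, hxe⟩, dis_of_mem hM (Finset.mem_erase.mp heM).2 hf hef hxe⟩
  · rintro ⟨⟨e, heM, hxe⟩, hxf⟩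
    exact ⟨e, Finset.mem_erase.mpr ⟨fun h => hxf (h ▸ hxe), heM⟩, hxe⟩

lemma isMat_insert {s : Finset V} {M : Finset (Sym2 V)} (hM : IsMat G s M)
    {e : Sym2 V} (he : e ∈ ES G s) (hdis : ∀ v, v ∈ e → ¬cov M v) :
    IsMat G s (insert e M) := by
  refine isMat_of (fun g hg => ?_) ?_
  · rcases Finset.mem_insert.mp hg with rfl | hg
    · exact he
    · exact hM.subset_ES hg
  · rw [Finset.coe_insert]
    refine (haveI : Std.Symm (fun (e f : Sym2 V) => ∀ v, v ∈ e → v ∉ f) := ⟨dis_symm⟩;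
      Set.pairwise_insert_of_symm) |>.mpr ⟨hM.2, fun f hf _ v hv hvf => ?_⟩
    exact hdis v hv ⟨f, hf, hvf⟩

open Classical in
/-- The set of vertices covered by `M`. -/
noncomputable def covF (M : Finset (Sym2 V)) : Finset V :=
  Finset.univ.filter (fun v => cov M v)

lemma mem_covF {M : Finset (Sym2 V)} {v : V} : v ∈ covF M ↔ cov M v := by
  classical
  simp [covF]

lemma card_covF {s : Finset V} {M : Finset (Sym2 V)} (hM : IsMat G s M) :
    (covF M).card = 2 * M.card := by
  classical
  revert hM
  induction M using Finset.induction_on with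
  | empty => intro _; simp [covF, cov]
  | @insert e M' heM' ih =>
    intro hM
    have hM' : IsMat G s M' := isMat_subset hM (Finset.subset_insert _ _)
    obtain ⟨a, b, rfl⟩ := sym2_exists_eq e
    have hab : a ≠ b := ne_of_mem_ES (hM.subset_ES (Finset.mem_insert_self _ _))
    have hcov : covF (insert s(a,b) M') = insert a (insert b (covF M')) := by
      ext x
      simp only [mem_covF, cov_insert, Finset.mem_insert, Sym2.mem_iff]
      tauto
    have hna : ¬cov M' a := fun hc => by
      obtain ⟨f, hfM, haf⟩ := hc
      exact dis_of_mem hM (Finset.mem_insert_self _ _) (Finset.mem_insert_of_mem hfM)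
        (fun h => heM' (h ▸ hfM)) (Sym2.mem_mk_left a b) haf
    have hnb : ¬cov M' b := fun hc => by
      obtain ⟨f, hfM, hbf⟩ := hc
      exact dis_of_mem hM (Finset.mem_insert_self _ _) (Finset.mem_insert_of_mem hfM)
        (fun h => heM' (h ▸ hfM)) (Sym2.mem_mk_right a b) hbf
    rw [hcov, Finset.card_insert_of_notMem, Finset.card_insert_of_notMem,
      Finset.card_insert_of_notMem heM', ih hM']
    · ring
    · rw [mem_covF]; exact hnb
    · simp only [Finset.mem_insert, mem_covF]
      push_neg
      exact ⟨hab, hna⟩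


/-- Swapping one matching edge `s(x1,x2)` for a new edge `s(u,x1)` at an uncovered vertex `u`. -/
lemma swap {s : Finset V} {M : Finset (Sym2 V)} (hM : IsMat G s M) {x1 x2 u : V}
    (hf : s(x1, x2) ∈ M) (he : s(u, x1) ∈ ES G s) (hMu : ¬cov M u) :
    IsMat G s (insert s(u, x1) (M.erase s(x1, x2))) ∧
    (insert s(u, x1) (M.erase s(x1, x2))).card = M.card ∧
    (∀ x, cov (insert s(u, x1) (M.erase s(x1, x2))) x ↔ (cov M x ∧ x ≠ x2) ∨ x = u) := by
  have hx1x2 : x1 ≠ x2 := ne_of_mem_ES (hM.subset_ES hf)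
  have hux1 : u ≠ x1 := ne_of_mem_ES he
  have hux2 : u ≠ x2 := fun h => hMu ⟨s(x1, x2), hf, h ▸ Sym2.mem_mk_right x1 x2⟩
  have heM : s(u, x1) ∉ M := fun h => hMu ⟨s(u, x1), h, Sym2.mem_mk_left u x1⟩
  have hef : s(u, x1) ≠ s(x1, x2) := fun h => heM (h ▸ hf)
  have herase : s(u, x1) ∉ M.erase s(x1, x2) := fun h => heM (Finset.mem_erase.mp h).2
  refine ⟨?_, ?_, ?_⟩
  · refine isMat_insert (isMat_subset hM (Finset.erase_subset _ _)) he ?_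
    intro v hv hcv
    rw [cov_erase hM hf] at hcv
    rcases Sym2.mem_iff.mp hv with h | h
    · exact hMu (h ▸ hcv.1)
    · exact (h ▸ hcv.2) (Sym2.mem_mk_left x1 x2)
  · rw [Finset.card_insert_of_notMem herase, Finset.card_erase_of_mem hf]
    have : 0 < M.card := Finset.card_pos.mpr ⟨_, hf⟩
    omega
  · intro x
    rw [cov_insert, cov_erase hM hf]
    constructor
    · rintro (h | ⟨hc, hnf⟩)
      · rcases Sym2.mem_iff.mp h with h' | h'
        · exact Or.inr h'
        · exact Or.inl ⟨⟨_, hf, h' ▸ Sym2.mem_mk_left x1 x2⟩, fun hh => hx1x2 (h' ▸ hh)⟩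
      · exact Or.inl ⟨hc, fun h => hnf (h ▸ Sym2.mem_mk_right x1 x2)⟩
    · rintro (⟨hc, hx2⟩ | h)
      · by_cases hx1 : x = x1
        · exact Or.inl (hx1 ▸ Sym2.mem_mk_right u x1)
        · refine Or.inr ⟨hc, fun h => ?_⟩
          rcases Sym2.mem_iff.mp h with h' | h'
          · exact hx1 h'
          · exact hx2 h'
      · exact Or.inl (h ▸ Sym2.mem_mk_left u x1)

/-- The alternating-path exchange lemma: if `M` is a maximum matching, `N` a matching,
and `u` is covered by `N` but not `M`, then we can trade `u` for some vertex `y`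
covered by `M` but not `N`. -/
lemma lemB {s : Finset V} : ∀ (k : ℕ) (M N : Finset (Sym2 V)) (u : V),
    ((M \ N) ∪ (N \ M)).card ≤ k →
    IsMat G s M → (∀ X, IsMat G s X → X.card ≤ M.card) →
    IsMat G s N → cov N u → ¬cov M u →
    ∃ y M' N', y ≠ u ∧ cov M y ∧ ¬cov N y ∧
      IsMat G s M' ∧ M'.card = M.card ∧
      (∀ x, cov M' x ↔ ((cov M x ∧ x ≠ y) ∨ x = u)) ∧
      IsMat G s N' ∧ N'.card = N.card ∧ N' ⊆ M ∪ N ∧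
      (∀ x, cov N' x ↔ ((cov N x ∧ x ≠ u) ∨ x = y)) := by
  intro k
  induction k with
  | zero =>
    intro M N u hk hM hMmax hN hNu hMu
    obtain ⟨e, heN, hue⟩ := hNu
    have heM : e ∉ M := fun h => hMu ⟨e, h, hue⟩
    have : e ∈ (M \ N) ∪ (N \ M) := Finset.mem_union_right _ (Finset.mem_sdiff.mpr ⟨heN, heM⟩)
    have := Finset.card_pos.mpr ⟨e, this⟩
    omega
  | succ k ih =>
    intro M N u hk hM hMmax hN hNu hMu
    obtain ⟨e, heN, hue⟩ := hNu
    obtain ⟨x1, rfl⟩ := Sym2.mem_iff_exists.mp hue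
    have hux1 : u ≠ x1 := ne_of_mem_ES (hN.subset_ES heN)
    have heM : s(u, x1) ∉ M := fun h => hMu ⟨_, h, Sym2.mem_mk_left u x1⟩
    have hcovNu : cov N u := ⟨_, heN, Sym2.mem_mk_left u x1⟩
    have hcovNx1 : cov N x1 := ⟨_, heN, Sym2.mem_mk_right u x1⟩
    -- x1 must be covered by M, else M ∪ {e} is a bigger matching
    have hx1M : cov M x1 := by
      by_contra hx1M
      have hins : IsMat G s (insert s(u, x1) M) := by
        refine isMat_insert hM (hN.subset_ES heN) ?_
        intro v hv
        rcases Sym2.mem_iff.mp hv with rfl | rfl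
        · exact hMu
        · exact hx1M
      have := hMmax _ hins
      rw [Finset.card_insert_of_notMem heM] at this
      omega
    obtain ⟨f, hfM, hx1f⟩ := hx1M
    obtain ⟨x2, rfl⟩ := Sym2.mem_iff_exists.mp hx1f
    have hx1x2 : x1 ≠ x2 := ne_of_mem_ES (hM.subset_ES hfM)
    have hcovMx2 : cov M x2 := ⟨_, hfM, Sym2.mem_mk_right x1 x2⟩
    have hux2 : u ≠ x2 := fun h => hMu (h ▸ hcovMx2)
    have hef : s(u, x1) ≠ s(x1, x2) := by
      intro h
      exact heM (h ▸ hfM)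
    have hfN : s(x1, x2) ∉ N := fun h =>
      dis_of_mem hN heN h hef (Sym2.mem_mk_right u x1) (Sym2.mem_mk_left x1 x2)
    obtain ⟨hM₁mat, hM₁card, hM₁cov⟩ := swap hM hfM (hN.subset_ES heN) hMu
    set M₁ : Finset (Sym2 V) := insert s(u, x1) (M.erase s(x1, x2)) with hM₁def
    have hM₁sub : ∀ g ∈ M₁, g ∈ M ∪ N := by
      intro g hg
      rcases Finset.mem_insert.mp hg with rfl | hg
      · exact Finset.mem_union_right _ heN
      · exact Finset.mem_union_left _ (Finset.mem_erase.mp hg).2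
    have hM₁max : ∀ X, IsMat G s X → X.card ≤ M₁.card := fun X hX => hM₁card ▸ hMmax X hX
    have hnotcovM₁x2 : ¬cov M₁ x2 := by
      rw [hM₁cov x2]
      rintro (⟨_, h⟩ | h)
      · exact h rfl
      · exact hux2 h.symm
    by_cases hcovNx2 : cov N x2
    · -- recursive case
      have hmeas : ((M₁ \ N) ∪ (N \ M₁)).card ≤ k := by
        have hXeq : (M₁ \ N) ∪ (N \ M₁)
            = (((M \ N) ∪ (N \ M)).erase s(u, x1)).erase s(x1, x2) := by
          ext g
          simp only [Finset.mem_union, Finset.mem_sdiff, Finset.mem_erase, hM₁def,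
            Finset.mem_insert]
          constructor
          · rintro (⟨hg1, hg2⟩ | ⟨hg1, hg2⟩)
            · rcases hg1 with rfl | hg1
              · exact absurd heN hg2
              · exact ⟨hg1.1, fun h => hg2 (h ▸ heN), Or.inl ⟨hg1.2, hg2⟩⟩
            · have hgne : g ≠ s(u, x1) := fun h => hg2 (Or.inl h)
              have hgnf : g ≠ s(x1, x2) := fun h => hfN (h ▸ hg1)
              exact ⟨hgnf, hgne, Or.inr ⟨hg1, fun h => hg2 (Or.inr ⟨hgnf, h⟩)⟩⟩
          · rintro ⟨hgnf, hgne, (⟨hgM, hgN⟩ | ⟨hgN, hgM⟩)⟩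
            · exact Or.inl ⟨Or.inr ⟨hgnf, hgM⟩, hgN⟩
            · refine Or.inr ⟨hgN, ?_⟩
              rintro (h | h)
              · exact hgne h
              · exact hgM h.2
        have he' : s(u, x1) ∈ (M \ N) ∪ (N \ M) :=
          Finset.mem_union_right _ (Finset.mem_sdiff.mpr ⟨heN, heM⟩)
        have hf' : s(x1, x2) ∈ ((M \ N) ∪ (N \ M)).erase s(u, x1) :=
          Finset.mem_erase.mpr ⟨Ne.symm hef,
            Finset.mem_union_left _ (Finset.mem_sdiff.mpr ⟨hfM, hfN⟩)⟩
        rw [hXeq, Finset.card_erase_of_mem hf', Finset.card_erase_of_mem he']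
        omega
      obtain ⟨y, M'', N'', hyx2, hcovM₁y, hcovNy, hM''mat, hM''card, hM''cov,
        hN''mat, hN''card, hN''sub, hN''cov⟩ :=
        ih M₁ N x2 hmeas hM₁mat hM₁max hN hcovNx2 hnotcovM₁x2
      have hyu : y ≠ u := fun h => hcovNy (h ▸ hcovNu)
      have hyx1 : y ≠ x1 := fun h => hcovNy (h ▸ hcovNx1)
      have hcovMy : cov M y := by
        rcases (hM₁cov y).mp hcovM₁y with ⟨h, _⟩ | h
        · exact h
        · exact absurd h hyu
      -- e ∈ N''
      have heN'' : s(u, x1) ∈ N'' := by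
        have hcovN''u : cov N'' u := (hN''cov u).mpr (Or.inl ⟨hcovNu, hux2⟩)
        obtain ⟨g, hgN'', hug⟩ := hcovN''u
        rcases Finset.mem_union.mp (hN''sub hgN'') with hgM₁ | hgN
        · rcases Finset.mem_insert.mp hgM₁ with rfl | hgM
          · exact hgN''
          · exact absurd ⟨g, (Finset.mem_erase.mp hgM).2, hug⟩ hMu
        · by_cases hge : g = s(u, x1)
          · exact hge ▸ hgN''
          · exact absurd (Sym2.mem_mk_left u x1) (dis_of_mem hN hgN heN hge hug)
      have hfN'' : s(x1, x2) ∉ N'' := by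
        intro h
        rcases Finset.mem_union.mp (hN''sub h) with hgM₁ | hgN
        · rcases Finset.mem_insert.mp hgM₁ with h' | h'
          · exact hef h'.symm
          · exact (Finset.mem_erase.mp h').1 rfl
        · exact hfN hgN
      have hnotcovN''x2 : ¬cov N'' x2 := by
        rw [hN''cov x2]
        rintro (⟨_, h⟩ | h)
        · exact h rfl
        · exact hyx2 h.symm
      have heN''' : s(x1, u) ∈ N'' := by rw [Sym2.eq_swap]; exact heN''
      have hfES : s(x2, x1) ∈ ES G s := by rw [Sym2.eq_swap]; exact hM.subset_ES hfM
      obtain ⟨hN'mat, hN'card, hN'cov⟩ := swap hN''mat heN''' hfES hnotcovN''x2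
      refine ⟨y, M'', insert s(x2, x1) (N''.erase s(x1, u)), hyu, hcovMy, hcovNy,
        hM''mat, by rw [hM''card, hM₁card], ?_, hN'mat, by rw [hN'card, hN''card], ?_, ?_⟩
      · intro x
        rw [hM''cov x, hM₁cov x]
        constructor
        · rintro (⟨(⟨hc, hx2⟩ | rfl), hy⟩ | rfl)
          · exact Or.inl ⟨hc, hy⟩
          · exact Or.inr rfl
          · exact Or.inl ⟨hcovMx2, Ne.symm hyx2⟩
        · rintro (⟨hc, hy⟩ | rfl)
          · by_cases hx2 : x = x2
            · exact Or.inr hx2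
            · exact Or.inl ⟨Or.inl ⟨hc, hx2⟩, hy⟩
          · exact Or.inl ⟨Or.inr rfl, Ne.symm hyu⟩
      · intro g hg
        rcases Finset.mem_insert.mp hg with rfl | hg
        · exact Finset.mem_union_left _ (by rw [Sym2.eq_swap]; exact hfM)
        · rcases Finset.mem_union.mp (hN''sub (Finset.mem_erase.mp hg).2) with h | h
          · exact hM₁sub _ h
          · exact Finset.mem_union_right _ h
      · intro x
        rw [hN'cov x, hN''cov x]
        constructor
        · rintro (⟨(⟨hc, hx2⟩ | rfl), hu⟩ | rfl)
          · exact Or.inl ⟨hc, hu⟩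
          · exact Or.inr rfl
          · exact Or.inl ⟨hcovNx2, Ne.symm hux2⟩
        · rintro (⟨hc, hu⟩ | rfl)
          · by_cases hx2 : x = x2
            · exact Or.inr hx2
            · exact Or.inl ⟨Or.inl ⟨hc, hx2⟩, hu⟩
          · exact Or.inl ⟨Or.inr rfl, hyu⟩
    · -- base case: x2 is not covered by N
      have heN' : s(x1, u) ∈ N := by rw [Sym2.eq_swap]; exact heN
      have hfES : s(x2, x1) ∈ ES G s := by rw [Sym2.eq_swap]; exact hM.subset_ES hfM
      obtain ⟨hN'mat, hN'card, hN'cov⟩ := swap hN heN' hfES hcovNx2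
      refine ⟨x2, M₁, insert s(x2, x1) (N.erase s(x1, u)), Ne.symm hux2, hcovMx2, hcovNx2,
        hM₁mat, hM₁card, hM₁cov, hN'mat, hN'card, ?_, hN'cov⟩
      intro g hg
      rcases Finset.mem_insert.mp hg with rfl | hg
      · exact Finset.mem_union_left _ (by rw [Sym2.eq_swap]; exact hfM)
      · exact Finset.mem_union_right _ (Finset.mem_erase.mp hg).2


lemma card_lt_nu_of_augment {s : Finset V} {M : Finset (Sym2 V)} {a b : V}
    (hM : IsMat G s M) (hab : s(a, b) ∈ ES G s) (ha : ¬cov M a) (hb : ¬cov M b) :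
    M.card < nu G s := by
  have hins : IsMat G s (insert s(a, b) M) := by
    refine isMat_insert hM hab ?_
    intro v hv
    rcases Sym2.mem_iff.mp hv with h | h
    · exact h ▸ ha
    · exact h ▸ hb
  have h2 := card_le_nu hins
  rw [Finset.card_insert_of_notMem (fun h => ha ⟨_, h, Sym2.mem_mk_left a b⟩)] at h2
  omega

/-- Gallai's lemma step: in a connected induced subgraph in which no vertex is essential,
every maximum matching misses at most one vertex. -/
lemma gallai_bound {s : Finset V}
    (hconn : ∀ u ∈ s, ∀ w ∈ s, (gr G s).Reachable u w)
    (hiness : ∀ u ∈ s, nu G s ≤ nu G (s.erase u))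
    {M : Finset (Sym2 V)} (hM : IsMat G s M) (hMcard : M.card = nu G s) :
    s.card ≤ 2 * nu G s + 1 := by
  classical
  -- it suffices that at most one vertex of `s` is uncovered
  have key : (s.filter (fun v => ¬cov M v)).card ≤ 1 := by
    by_contra hU
    push_neg at hU
    obtain ⟨u₀, hu₀, w₀, hw₀, huw₀⟩ := Finset.one_lt_card.mp hU
    rw [Finset.mem_filter] at hu₀ hw₀
    set D : Set ℕ := {n | ∃ (M' : Finset (Sym2 V)) (u w : V), IsMat G s M' ∧
      M'.card = nu G s ∧ u ∈ s ∧ w ∈ s ∧ u ≠ w ∧ ¬cov M' u ∧ ¬cov M' w ∧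
      ∃ p : (gr G s).Walk u w, p.length = n} with hD
    have hDne : D.Nonempty := by
      obtain ⟨p⟩ := hconn u₀ hu₀.1 w₀ hw₀.1
      exact ⟨p.length, M, u₀, w₀, hM, hMcard, hu₀.1, hw₀.1, huw₀, hu₀.2, hw₀.2, p, rfl⟩
    obtain ⟨M₀, u, w, hM₀, hM₀card, hus, hws, huw, hMu, hMw, p, hplen⟩ := Nat.sInf_mem hDne
    have hmin : ∀ m ∈ D, sInf D ≤ m := fun m hm => Nat.sInf_le hm
    cases p with
    | nil => exact huw rfl
    | @cons _ z _ h q =>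
      have hz : z ∈ s := h.2.2
      have huz : u ≠ z := h.1.ne
      have hadjES : s(u, z) ∈ ES G s := by
        rw [mem_ES]
        exact ⟨h.1, h.2.1, h.2.2⟩
      by_cases hzw : z = w
      · -- u and w adjacent: augment
        subst hzw
        have := card_lt_nu_of_augment hM₀ hadjES hMu hMw
        omega
      · -- length of q is at least 1, so sInf D ≥ 2
        have hq1 : 1 ≤ q.length := by
          by_contra hq
          exact hzw (SimpleGraph.Walk.eq_of_length_eq_zero (p := q) (by omega))
        have hd2 : 2 ≤ sInf D := by
          rw [← hplen]
          simp only [SimpleGraph.Walk.length_cons]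
          omega
        have hcovz : cov M₀ z := by
          by_contra hcovz
          have h1D : (1 : ℕ) ∈ D :=
            ⟨M₀, u, z, hM₀, hM₀card, hus, hz, huz, hMu, hcovz,
              SimpleGraph.Walk.cons h SimpleGraph.Walk.nil, rfl⟩
          have := hmin 1 h1D
          omega
        -- a maximum matching avoiding z
        obtain ⟨N, hNmat', hNcard'⟩ := exists_max_matching (G := G) (s.erase z)
        have hNmat : IsMat G s N := isMat_mono hNmat' (Finset.erase_subset _ _)
        have hNcard : N.card = nu G s := by
          have h1 := hiness z hz
          have h2 := card_le_nu hNmat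
          omega
        have hNz : ¬cov N z := fun hc => by
          have := cov_mem_s hNmat' hc
          exact (Finset.mem_erase.mp this).1 rfl
        have hNu : cov N u := by
          by_contra hNu
          have h1D : (1 : ℕ) ∈ D :=
            ⟨N, u, z, hNmat, hNcard, hus, hz, huz, hNu, hNz,
              SimpleGraph.Walk.cons h SimpleGraph.Walk.nil, rfl⟩
          have := hmin 1 h1D
          omega
        have hNw : cov N w := by
          by_contra hNw
          have hqD : q.length ∈ D := ⟨N, z, w, hNmat, hNcard, hz, hws, hzw, hNz, hNw, q, rfl⟩
          have := hmin _ hqD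
          rw [← hplen] at this
          simp only [SimpleGraph.Walk.length_cons] at this
          omega
        -- apply the exchange lemma
        have hM₀max : ∀ X, IsMat G s X → X.card ≤ M₀.card := fun X hX =>
          hM₀card ▸ card_le_nu hX
        obtain ⟨y, M', N', hyu, hcovM₀y, hcovNy, hM'mat, hM'card, hM'cov,
          hN'mat, hN'card, _, hN'cov⟩ :=
          lemB (((M₀ \ N) ∪ (N \ M₀)).card) M₀ N u le_rfl hM₀ hM₀max hNmat hNu hMu
        by_cases hyz : y = z
        · -- M' misses z and w; q is a shorter walk
          subst hyz
          have hM'z : ¬cov M' y := by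
            rw [hM'cov y]
            rintro (⟨_, hc⟩ | hc)
            · exact hc rfl
            · exact huz hc.symm
          have hM'w : ¬cov M' w := by
            rw [hM'cov w]
            rintro (⟨hc, _⟩ | hc)
            · exact hMw hc
            · exact huw hc.symm
          have hqD : q.length ∈ D := ⟨M', y, w, hM'mat, by omega, hz, hws, hzw, hM'z, hM'w, q, rfl⟩
          have := hmin _ hqD
          rw [← hplen] at this
          simp only [SimpleGraph.Walk.length_cons] at this
          omega
        · -- N' misses u and z, which are adjacent
          have hN'u : ¬cov N' u := by
            rw [hN'cov u]
            rintro (⟨_, hc⟩ | hc)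
            · exact hc rfl
            · exact hyu hc.symm
          have hN'z : ¬cov N' z := by
            rw [hN'cov z]
            rintro (⟨hc, _⟩ | hc)
            · exact hNz hc
            · exact hyz hc.symm
          have h1D : (1 : ℕ) ∈ D :=
            ⟨N', u, z, hN'mat, by omega, hus, hz, huz, hN'u, hN'z,
              SimpleGraph.Walk.cons h SimpleGraph.Walk.nil, rfl⟩
          have := hmin 1 h1D
          omega
  -- conclude the cardinality bound
  have hsplit := Finset.card_filter_add_card_filter_not (s := s)
    (p := fun v => cov M v)
  have hsub : s.filter (fun v => cov M v) ⊆ covF M := by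
    intro v hv
    rw [mem_covF]
    exact (Finset.mem_filter.mp hv).2
  have := Finset.card_le_card hsub
  rw [card_covF hM] at this
  omega


/-- Maximum degree of the induced subgraph on `s`. -/
def maxdeg (G : SimpleGraph V) [DecidableRel G.Adj] (s : Finset V) : ℕ :=
  Finset.univ.sup fun v => (gr G s).degree v

lemma degree_le_maxdeg {s : Finset V} (v : V) : (gr G s).degree v ≤ maxdeg G s :=
  Finset.le_sup (f := fun v => (gr G s).degree v) (Finset.mem_univ v)

lemma gr_degree_mono {s t : Finset V} (h : s ⊆ t) (v : V) :
    (gr G s).degree v ≤ (gr G t).degree v := by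
  rw [← SimpleGraph.card_neighborFinset_eq_degree, ← SimpleGraph.card_neighborFinset_eq_degree]
  refine Finset.card_le_card ?_
  intro w hw
  rw [SimpleGraph.mem_neighborFinset] at hw ⊢
  exact ⟨hw.1, h hw.2.1, h hw.2.2⟩

lemma maxdeg_mono {s t : Finset V} (h : s ⊆ t) : maxdeg G s ≤ maxdeg G t :=
  Finset.sup_le fun v _ => le_trans (gr_degree_mono h v) (degree_le_maxdeg v)

lemma gr_degree_eq_zero {s : Finset V} {v : V} (hv : v ∉ s) : (gr G s).degree v = 0 := by
  rw [← SimpleGraph.card_neighborFinset_eq_degree, Finset.card_eq_zero]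
  ext w
  simp only [SimpleGraph.mem_neighborFinset, Finset.notMem_empty, iff_false]
  rintro ⟨_, h, _⟩
  exact hv h

lemma ES_card_le_erase {s : Finset V} (v : V) :
    (ES G s).card ≤ (ES G (s.erase v)).card + (gr G s).degree v := by
  have hsub : ES G s \ ES G (s.erase v) ⊆ (gr G s).incidenceFinset v := by
    intro e he
    obtain ⟨h1, h2⟩ := Finset.mem_sdiff.mp he
    obtain ⟨a, b, rfl⟩ := sym2_exists_eq e
    have hve : v ∈ s(a, b) := by
      by_contra hve
      rw [Sym2.mem_iff] at hve
      push_neg at hve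
      obtain ⟨hadj, ha, hb⟩ := mem_ES.mp h1
      exact h2 (mem_ES.mpr ⟨hadj, Finset.mem_erase.mpr ⟨fun h => hve.1 h.symm, ha⟩,
        Finset.mem_erase.mpr ⟨fun h => hve.2 h.symm, hb⟩⟩)
    rw [SimpleGraph.mem_incidenceFinset]
    exact ⟨SimpleGraph.mem_edgeFinset.mp h1, hve⟩
  calc (ES G s).card ≤ (ES G s \ ES G (s.erase v)).card + (ES G (s.erase v)).card :=
        Finset.card_le_card_sdiff_add_card
    _ ≤ (ES G (s.erase v)).card + (gr G s).degree v := by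
        have := Finset.card_le_card hsub
        rw [SimpleGraph.card_incidenceFinset_eq_degree] at this
        omega

lemma nu_superadd {s t : Finset V} (h : Disjoint s t) :
    nu G s + nu G t ≤ nu G (s ∪ t) := by
  obtain ⟨M1, hM1, hc1⟩ := exists_max_matching (G := G) s
  obtain ⟨M2, hM2, hc2⟩ := exists_max_matching (G := G) t
  have hdisjM : Disjoint M1 M2 := by
    rw [Finset.disjoint_left]
    intro e he1 he2
    obtain ⟨a, b, rfl⟩ := sym2_exists_eq e
    have ha1 : a ∈ s := mem_s_of_mem_ES (hM1.subset_ES he1) (Sym2.mem_mk_left a b)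
    have ha2 : a ∈ t := mem_s_of_mem_ES (hM2.subset_ES he2) (Sym2.mem_mk_left a b)
    exact Finset.disjoint_left.mp h ha1 ha2
  have hmat : IsMat G (s ∪ t) (M1 ∪ M2) := by
    refine isMat_of ?_ ?_
    · intro e he
      rcases Finset.mem_union.mp he with he | he
      · exact ES_mono Finset.subset_union_left (hM1.subset_ES he)
      · exact ES_mono Finset.subset_union_right (hM2.subset_ES he)
    · intro e he f hf hne
      rw [Finset.coe_union, Set.mem_union] at he hf
      rcases he with he | he <;> rcases hf with hf | hf
      · exact hM1.2 he hf hne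
      · intro x hx hxf
        exact Finset.disjoint_left.mp h (mem_s_of_mem_ES (hM1.subset_ES he) hx)
          (mem_s_of_mem_ES (hM2.subset_ES hf) hxf)
      · intro x hx hxf
        exact Finset.disjoint_left.mp h (mem_s_of_mem_ES (hM1.subset_ES hf) hxf)
          (mem_s_of_mem_ES (hM2.subset_ES he) hx)
      · exact hM2.2 he hf hne
  have := card_le_nu hmat
  rw [Finset.card_union_of_disjoint hdisjM] at this
  omega

lemma ES_split {s C : Finset V} (hCs : C ⊆ s)
    (hcl : ∀ a ∈ C, ∀ b, (gr G s).Adj a b → b ∈ C) :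
    ES G s = ES G C ∪ ES G (s \ C) ∧ Disjoint (ES G C) (ES G (s \ C)) := by
  constructor
  · ext e
    obtain ⟨a, b, rfl⟩ := sym2_exists_eq e
    rw [Finset.mem_union, mem_ES, mem_ES, mem_ES]
    constructor
    · rintro ⟨hadj, ha, hb⟩
      by_cases haC : a ∈ C
      · exact Or.inl ⟨hadj, haC, hcl a haC b ⟨hadj, ha, hb⟩⟩
      · by_cases hbC : b ∈ C
        · exact absurd (hcl b hbC a ⟨hadj.symm, hb, ha⟩) haC
        · exact Or.inr ⟨hadj, Finset.mem_sdiff.mpr ⟨ha, haC⟩, Finset.mem_sdiff.mpr ⟨hb, hbC⟩⟩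
    · rintro (⟨hadj, ha, hb⟩ | ⟨hadj, ha, hb⟩)
      · exact ⟨hadj, hCs ha, hCs hb⟩
      · exact ⟨hadj, (Finset.mem_sdiff.mp ha).1, (Finset.mem_sdiff.mp hb).1⟩
  · rw [Finset.disjoint_left]
    intro e he1 he2
    obtain ⟨a, b, rfl⟩ := sym2_exists_eq e
    have h1 := (mem_ES.mp he1).2.1
    have h2 := (mem_ES.mp he2).2.1
    exact (Finset.mem_sdiff.mp h2).2 h1

lemma twice_ES (s : Finset V) : 2 * (ES G s).card = ∑ v ∈ s, (gr G s).degree v := by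
  rw [ES, ← SimpleGraph.sum_degrees_eq_twice_card_edges]
  exact (Finset.sum_subset (Finset.subset_univ s)
    (fun x _ hx => gr_degree_eq_zero hx)).symm

/-- The key inequality: `|E(G[s])| ≤ (Δ(G[s]) + 1) · ν(G[s])`. -/
theorem key (s : Finset V) : (ES G s).card ≤ (maxdeg G s + 1) * nu G s := by
  classical
  induction s using Finset.strongInduction with
  | _ s ih =>
  by_cases hE : ES G s = ∅
  · simp [hE]
  obtain ⟨e₀, he₀⟩ := Finset.nonempty_iff_ne_empty.mpr hE
  obtain ⟨a₀, b₀, rfl⟩ := sym2_exists_eq e₀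
  have hΔ1 : 1 ≤ maxdeg G s := by
    have hb : b₀ ∈ (gr G s).neighborFinset a₀ := by
      rw [SimpleGraph.mem_neighborFinset]
      exact (SimpleGraph.mem_edgeFinset.mp he₀)
    have h1 : 1 ≤ (gr G s).degree a₀ := by
      rw [← SimpleGraph.card_neighborFinset_eq_degree]
      exact Finset.card_pos.mpr ⟨b₀, hb⟩
    exact le_trans h1 (degree_le_maxdeg a₀)
  by_cases hA : ∃ u ∈ s, nu G (s.erase u) < nu G s
  · -- an essential vertex exists: delete it
    obtain ⟨u, hus, hlt⟩ := hA
    have h1 := ES_card_le_erase (G := G) (s := s) u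
    have h2 := ih (s.erase u) (Finset.erase_ssubset hus)
    have h3 : maxdeg G (s.erase u) ≤ maxdeg G s := maxdeg_mono (Finset.erase_subset _ _)
    have h4 : (gr G s).degree u ≤ maxdeg G s := degree_le_maxdeg u
    have h5 : nu G (s.erase u) + 1 ≤ nu G s := hlt
    have h6 : (maxdeg G (s.erase u) + 1) * nu G (s.erase u)
        ≤ (maxdeg G s + 1) * nu G (s.erase u) :=
      Nat.mul_le_mul_right _ (by omega)
    have h7 : (maxdeg G s + 1) * (nu G (s.erase u) + 1) ≤ (maxdeg G s + 1) * nu G s :=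
      Nat.mul_le_mul_left _ h5
    have h8 : (maxdeg G s + 1) * (nu G (s.erase u) + 1)
        = (maxdeg G s + 1) * nu G (s.erase u) + (maxdeg G s + 1) := by ring
    omega
  · push_neg at hA
    obtain ⟨vc, -, hvc⟩ := Finset.exists_mem_eq_sup Finset.univ ⟨a₀, Finset.mem_univ a₀⟩
      (fun v => (gr G s).degree v)
    have hvcs : vc ∈ s := by
      by_contra hvcs
      have := gr_degree_eq_zero (G := G) (s := s) hvcs
      have : maxdeg G s = 0 := by rw [maxdeg, hvc, this]
      omega
    set C := s.filter (fun w => (gr G s).Reachable vc w) with hCdef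
    have hCs : C ⊆ s := Finset.filter_subset _ _
    have hvcC : vc ∈ C := Finset.mem_filter.mpr ⟨hvcs, SimpleGraph.Reachable.refl _⟩
    have hcl : ∀ x ∈ C, ∀ b, (gr G s).Adj x b → b ∈ C := by
      intro x hx b hadj
      rw [hCdef, Finset.mem_filter] at hx ⊢
      exact ⟨hadj.2.2, hx.2.trans hadj.reachable⟩
    by_cases hsC : s ⊆ C
    · -- connected case: Gallai
      have hconn : ∀ u ∈ s, ∀ w ∈ s, (gr G s).Reachable u w := fun u hu w hw =>
        ((Finset.mem_filter.mp (hsC hu)).2.symm).trans (Finset.mem_filter.mp (hsC hw)).2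
      obtain ⟨M, hM, hMcard⟩ := exists_max_matching (G := G) s
      have hb := gallai_bound hconn hA hM hMcard
      have hnb : insert vc ((gr G s).neighborFinset vc) ⊆ s := by
        intro x hx
        rcases Finset.mem_insert.mp hx with rfl | hx
        · exact hvcs
        · exact ((SimpleGraph.mem_neighborFinset _ _ _).mp hx).2.2
      have hcard : maxdeg G s + 1 ≤ s.card := by
        have hle := Finset.card_le_card hnb
        rw [Finset.card_insert_of_notMem (by simp [SimpleGraph.mem_neighborFinset]),
          SimpleGraph.card_neighborFinset_eq_degree] at hle
        rw [maxdeg, hvc]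
        omega
      have hhs := twice_ES (G := G) s
      have hsum : ∑ v ∈ s, (gr G s).degree v ≤ s.card * maxdeg G s := by
        have := Finset.sum_le_card_nsmul s (fun v => (gr G s).degree v) (maxdeg G s)
          (fun v _ => degree_le_maxdeg v)
        simpa using this
      have hfin : 2 * (ES G s).card ≤ 2 * ((maxdeg G s + 1) * nu G s) := by
        have hΔν : maxdeg G s ≤ 2 * nu G s := by omega
        calc 2 * (ES G s).card = ∑ v ∈ s, (gr G s).degree v := hhs
          _ ≤ s.card * maxdeg G s := hsum
          _ ≤ (2 * nu G s + 1) * maxdeg G s := Nat.mul_le_mul_right _ hb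
          _ = 2 * nu G s * maxdeg G s + maxdeg G s := by ring
          _ ≤ 2 * nu G s * maxdeg G s + 2 * nu G s := by omega
          _ = 2 * ((maxdeg G s + 1) * nu G s) := by ring
      omega
    · -- split into a component and the rest
      obtain ⟨w₀, hw₀s, hw₀C⟩ := Finset.not_subset.mp hsC
      have hCss : C ⊂ s := ⟨hCs, fun h => hw₀C (h hw₀s)⟩
      have hsCss : s \ C ⊂ s := Finset.sdiff_ssubset hCs ⟨vc, hvcC⟩
      obtain ⟨hEeq, hEdisj⟩ := ES_split hCs hcl
      have h1 := ih C hCss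
      have h2 := ih (s \ C) hsCss
      have h3 := nu_superadd (G := G) (Finset.disjoint_sdiff (s := C) (t := s))
      rw [Finset.union_sdiff_of_subset hCs] at h3
      have h4 : maxdeg G C ≤ maxdeg G s := maxdeg_mono hCs
      have h5 : maxdeg G (s \ C) ≤ maxdeg G s := maxdeg_mono (Finset.sdiff_subset)
      have h6 : (maxdeg G C + 1) * nu G C ≤ (maxdeg G s + 1) * nu G C :=
        Nat.mul_le_mul_right _ (by omega)
      have h7 : (maxdeg G (s \ C) + 1) * nu G (s \ C) ≤ (maxdeg G s + 1) * nu G (s \ C) :=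
        Nat.mul_le_mul_right _ (by omega)
      have h8 : (maxdeg G s + 1) * nu G C + (maxdeg G s + 1) * nu G (s \ C)
          = (maxdeg G s + 1) * (nu G C + nu G (s \ C)) := by ring
      have h9 : (maxdeg G s + 1) * (nu G C + nu G (s \ C)) ≤ (maxdeg G s + 1) * nu G s :=
        Nat.mul_le_mul_left _ h3
      rw [hEeq, Finset.card_union_of_disjoint hEdisj]
      omega


lemma gr_degree_le {s : Finset V} (v : V) : (gr G s).degree v ≤ G.degree v := by
  rw [← SimpleGraph.card_neighborFinset_eq_degree, ← SimpleGraph.card_neighborFinset_eq_degree]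
  refine Finset.card_le_card ?_
  intro w hw
  rw [SimpleGraph.mem_neighborFinset] at hw ⊢
  exact hw.1

end GVB

set_option maxHeartbeats 1000000 in
/-- Generalized Vizing bound: for every `1 ≤ q < n`,
`ν(G) ≥ (|E(G)| − Σ_{i ≥ q} i·D_i(G)) / q`, where
`Σ_{i ≥ q} i·D_i(G) = Σ_{v : deg v ≥ q} deg v`. -/
theorem generalized_vizing_bound
    {V : Type*} [Fintype V] [DecidableEq V] (G : SimpleGraph V) [DecidableRel G.Adj] :
    ∃ M : Finset (Sym2 V), IsMatchingFinset G M ∧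
      ∀ q : ℕ, 1 ≤ q → q < Fintype.card V →
        ((G.edgeFinset.card : ℝ) -
            ∑ v ∈ Finset.univ.filter fun v => q ≤ G.degree v, (G.degree v : ℝ)) / q
          ≤ (M.card : ℝ) := by
  classical
  open GVB in
  obtain ⟨M, hM, hMcard⟩ := exists_max_matching (G := G) Finset.univ
  refine ⟨M, ⟨fun e he => ?_, hM.2⟩, ?_⟩
  · -- M is a matching of G
    have h := hM.1 he
    obtain ⟨a, b, rfl⟩ := sym2_exists_eq e
    rw [SimpleGraph.mem_edgeSet] at h ⊢
    exact h.1
  intro q hq1 _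
  set high := Finset.univ.filter fun v => q ≤ G.degree v with hhigh
  set low := Finset.univ.filter (fun v => ¬ q ≤ G.degree v) with hlow
  -- Step 1: edges outside ES low are incident to a high-degree vertex
  have hstep1 : G.edgeFinset.card ≤ (∑ v ∈ high, G.degree v) + (ES G low).card := by
    have hsub : G.edgeFinset \ ES G low ⊆ high.biUnion (fun v => G.incidenceFinset v) := by
      intro e he
      obtain ⟨h1, h2⟩ := Finset.mem_sdiff.mp he
      obtain ⟨a, b, rfl⟩ := sym2_exists_eq e
      have hadj : G.Adj a b := SimpleGraph.mem_edgeFinset.mp h1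
      have hx : a ∉ low ∨ b ∉ low := by
        by_contra hx
        push_neg at hx
        exact h2 (mem_ES.mpr ⟨hadj, hx.1, hx.2⟩)
      rw [Finset.mem_biUnion]
      rcases hx with hx | hx
      · refine ⟨a, ?_, ?_⟩
        · rw [hhigh, Finset.mem_filter]
          rw [hlow, Finset.mem_filter] at hx
          push_neg at hx
          exact ⟨Finset.mem_univ a, hx (Finset.mem_univ a)⟩
        · rw [SimpleGraph.mem_incidenceFinset]
          exact ⟨SimpleGraph.mem_edgeFinset.mp h1, Sym2.mem_mk_left a b⟩
      · refine ⟨b, ?_, ?_⟩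
        · rw [hhigh, Finset.mem_filter]
          rw [hlow, Finset.mem_filter] at hx
          push_neg at hx
          exact ⟨Finset.mem_univ b, hx (Finset.mem_univ b)⟩
        · rw [SimpleGraph.mem_incidenceFinset]
          exact ⟨SimpleGraph.mem_edgeFinset.mp h1, Sym2.mem_mk_right a b⟩
    have hB : (G.edgeFinset \ ES G low).card ≤ ∑ v ∈ high, G.degree v := by
      calc (G.edgeFinset \ ES G low).card ≤ (high.biUnion (fun v => G.incidenceFinset v)).card :=
            Finset.card_le_card hsub
        _ ≤ ∑ v ∈ high, (G.incidenceFinset v).card := Finset.card_biUnion_le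
        _ = ∑ v ∈ high, G.degree v := by
            simp [SimpleGraph.card_incidenceFinset_eq_degree]
    have := Finset.card_le_card_sdiff_add_card (s := G.edgeFinset) (t := ES G low)
    omega
  -- Step 2: the low part has small max degree
  have hstep2 : (ES G low).card ≤ q * nu G low := by
    have hmd : maxdeg G low + 1 ≤ q := by
      have : maxdeg G low < q := by
        rw [maxdeg]
        rw [Finset.sup_lt_iff (by simp only [bot_eq_zero]; omega : (⊥ : ℕ) < q)]
        intro v _
        by_cases hv : v ∈ low
        · have h1 := gr_degree_le (G := G) (s := low) v
          have h2 : ¬ q ≤ G.degree v := (Finset.mem_filter.mp hv).2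
          omega
        · rw [gr_degree_eq_zero hv]
          omega
      omega
    calc (ES G low).card ≤ (maxdeg G low + 1) * nu G low := key low
      _ ≤ q * nu G low := Nat.mul_le_mul_right _ hmd
  have hstep3 : nu G low ≤ M.card := by
    rw [hMcard]
    exact nu_mono (Finset.subset_univ low)
  -- combine over ℕ
  have hnat : G.edgeFinset.card ≤ (∑ v ∈ high, G.degree v) + q * M.card := by
    have := Nat.mul_le_mul_left q hstep3
    omega
  -- pass to ℝ
  have hqpos : (0 : ℝ) < q := by
    have : 0 < q := hq1
    exact_mod_cast this
  rw [div_le_iff₀ hqpos]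
  have hcast : ((∑ v ∈ high, G.degree v : ℕ) : ℝ) = ∑ v ∈ high, (G.degree v : ℝ) := by
    push_cast
    rfl
  have := (Nat.cast_le (α := ℝ)).mpr hnat
  push_cast at this
  linarith
end

section
/- For every positive integer k ≥ 3, there exists a connected, vertex-transitive, 4-regular simple graph G on 4k vertices such that for every vertex v, the subgraph induced by the neighborhood of v is isomorphic to K_3 plus an isolated vertex; consequently the complement of the induced neighborhood of v contains no matching of size 2, so no vertex is DP-removable. -/
open SimpleGraph Set

namespace IrredAux

def rev : Fin 4 → Fin 4 := ![3, 2, 1, 0]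
def swp : Fin 4 → Fin 4 := ![1, 0, 3, 2]

def HG (k : ℕ) : SimpleGraph (ZMod k × Fin 4) where
  Adj x y :=
    (x.1 = y.1 ∧ x.2 ≠ y.2) ∨
    (y.1 = x.1 + 1 ∧ ((x.2 = 2 ∧ y.2 = 0) ∨ (x.2 = 3 ∧ y.2 = 1))) ∨
    (x.1 = y.1 + 1 ∧ ((y.2 = 2 ∧ x.2 = 0) ∨ (y.2 = 3 ∧ x.2 = 1)))
  symm := by
    constructor
    rintro x y (⟨h1, h2⟩ | h | h)
    · exact Or.inl ⟨h1.symm, h2.symm⟩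
    · exact Or.inr (Or.inr h)
    · exact Or.inr (Or.inl h)
  loopless := by
    constructor
    rintro x (⟨_, h⟩ | ⟨_, ⟨h1, h2⟩ | ⟨h1, h2⟩⟩ | ⟨_, ⟨h1, h2⟩ | ⟨h1, h2⟩⟩) <;> simp_all

variable {k : ℕ}

lemma HG_adj {x y : ZMod k × Fin 4} : (HG k).Adj x y ↔
    (x.1 = y.1 ∧ x.2 ≠ y.2) ∨
    (y.1 = x.1 + 1 ∧ ((x.2 = 2 ∧ y.2 = 0) ∨ (x.2 = 3 ∧ y.2 = 1))) ∨
    (x.1 = y.1 + 1 ∧ ((y.2 = 2 ∧ x.2 = 0) ∨ (y.2 = 3 ∧ x.2 = 1))) := Iff.rfl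

/-- shift automorphism -/
def shiftIso (a : ZMod k) : HG k ≃g HG k where
  toFun x := (x.1 + a, x.2)
  invFun x := (x.1 - a, x.2)
  left_inv x := by simp
  right_inv x := by simp
  map_rel_iff' := by
    rintro ⟨i, s⟩ ⟨j, t⟩
    have h1 : i + a = j + a ↔ i = j := add_left_inj a
    have h2 : j + a = i + a + 1 ↔ j = i + 1 := by
      rw [add_right_comm]; exact add_left_inj a
    have h3 : i + a = j + a + 1 ↔ i = j + 1 := by
      rw [add_right_comm]; exact add_left_inj a
    simp only [HG_adj, Equiv.coe_fn_mk, h1, h2, h3]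

/-- swap 0↔1, 2↔3 within blocks -/
def swpIso : HG k ≃g HG k where
  toFun x := (x.1, swp x.2)
  invFun x := (x.1, swp x.2)
  left_inv x := by
    have : ∀ s : Fin 4, swp (swp s) = s := by decide
    simp [this]
  right_inv x := by
    have : ∀ s : Fin 4, swp (swp s) = s := by decide
    simp [this]
  map_rel_iff' := by
    rintro ⟨i, s⟩ ⟨j, t⟩
    have f1 : ∀ s t : Fin 4, (swp s ≠ swp t ↔ s ≠ t) := by decide
    have f2 : ∀ s t : Fin 4,
        (((swp s = 2 ∧ swp t = 0) ∨ (swp s = 3 ∧ swp t = 1)) ↔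
          ((s = 2 ∧ t = 0) ∨ (s = 3 ∧ t = 1))) := by decide
    simp only [HG_adj, Equiv.coe_fn_mk, f1, f2]

set_option maxHeartbeats 1000000 in
/-- reflection automorphism -/
def revIso : HG k ≃g HG k where
  toFun x := (-1 - x.1, rev x.2)
  invFun x := (-1 - x.1, rev x.2)
  left_inv x := by
    have : ∀ s : Fin 4, rev (rev s) = s := by decide
    simp [this]
  right_inv x := by
    have : ∀ s : Fin 4, rev (rev s) = s := by decide
    simp [this]
  map_rel_iff' := by
    rintro ⟨i, s⟩ ⟨j, t⟩
    have e1 : -1 - i = -1 - j ↔ i = j := sub_right_inj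
    have e2 : -1 - j = -1 - i + 1 ↔ i = j + 1 := by
      constructor <;> intro h <;> linear_combination h
    have e3 : -1 - i = -1 - j + 1 ↔ j = i + 1 := by
      constructor <;> intro h <;> linear_combination h
    have f1 : ∀ s t : Fin 4, (rev s ≠ rev t ↔ s ≠ t) := by decide
    have f2 : ∀ s t : Fin 4,
        (((rev s = 2 ∧ rev t = 0) ∨ (rev s = 3 ∧ rev t = 1)) ↔
          ((t = 2 ∧ s = 0) ∨ (t = 3 ∧ s = 1))) := by decide
    simp only [HG_adj, Equiv.coe_fn_mk, e1, e2, e3, f1, f2]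
    tauto

lemma trans_to (v : ZMod k × Fin 4) : ∃ φ : HG k ≃g HG k, φ (0, 0) = v := by
  obtain ⟨i, s⟩ := v
  fin_cases s
  · exact ⟨shiftIso i, by simp [shiftIso]⟩
  · refine ⟨swpIso.trans (shiftIso i), ?_⟩
    simp only [RelIso.trans_apply]
    simp [swpIso, shiftIso, swp]
  · refine ⟨(swpIso.trans revIso).trans (shiftIso (i + 1)), ?_⟩
    simp only [RelIso.trans_apply]
    simp only [swpIso, revIso, shiftIso, swp, rev]
    refine Prod.ext ?_ ?_ <;> simp <;> ring
  · refine ⟨revIso.trans (shiftIso (i + 1)), ?_⟩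
    simp only [RelIso.trans_apply]
    simp only [revIso, shiftIso, rev]
    refine Prod.ext ?_ ?_ <;> simp <;> ring

lemma HG_trans (u v : ZMod k × Fin 4) : ∃ φ : HG k ≃g HG k, φ u = v := by
  obtain ⟨ψu, hu⟩ := trans_to u
  obtain ⟨ψv, hv⟩ := trans_to v
  refine ⟨ψu.symm.trans ψv, ?_⟩
  have : ψu.symm u = (0, 0) := by rw [← hu]; exact ψu.symm_apply_apply _
  rw [RelIso.trans_apply, this, hv]

lemma HG_conn (hk : 3 ≤ k) : (HG k).Connected := by
  haveI : NeZero k := ⟨by omega⟩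
  rw [connected_iff]
  refine ⟨?_, ⟨(0, 0)⟩⟩
  have key : ∀ n : ℕ, (HG k).Reachable ((n : ZMod k), 0) (0, 0) := by
    intro n
    induction n with
    | zero => rw [Nat.cast_zero]
    | succ n ih =>
      have h1 : (HG k).Adj ((((n : ℕ) + 1 : ℕ) : ZMod k), 0) ((n : ZMod k), 2) := by
        rw [HG_adj]
        refine Or.inr (Or.inr ⟨by push_cast; ring, Or.inl ⟨rfl, rfl⟩⟩)
      have h2 : (HG k).Adj ((n : ZMod k), 2) ((n : ZMod k), 0) :=
        HG_adj.mpr (Or.inl ⟨rfl, by simp⟩)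
      exact h1.reachable.trans (h2.reachable.trans ih)
  have base : ∀ x : ZMod k × Fin 4, (HG k).Reachable x (0, 0) := by
    rintro ⟨i, s⟩
    have hi : ((i.val : ℕ) : ZMod k) = i := by rw [ZMod.natCast_val, ZMod.cast_id]
    have h2 : (HG k).Reachable (i, 0) (0, 0) := by rw [← hi]; exact key i.val
    rcases eq_or_ne s 0 with rfl | hs
    · exact h2
    · have ha : (HG k).Adj (i, s) (i, 0) := HG_adj.mpr (Or.inl ⟨rfl, hs⟩)
      exact ha.reachable.trans h2
  intro x y
  exact (base x).trans (base y).symm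

lemma neg_one_ne_zero' (hk : 3 ≤ k) : (-1 : ZMod k) ≠ 0 := by
  haveI : Fact (1 < k) := ⟨by omega⟩
  intro h
  exact one_ne_zero (by linear_combination -h : (1 : ZMod k) = 0)

lemma nbhd_base (hk : 3 ≤ k) :
    (HG k).neighborSet (0, 0) =
      {((0 : ZMod k), (1 : Fin 4)), (0, 2), (0, 3), (-1, 2)} := by
  ext ⟨j, t⟩
  constructor
  · intro h
    rw [mem_neighborSet, HG_adj] at h
    simp only [Set.mem_insert_iff, Set.mem_singleton_iff, Prod.mk.injEq]
    obtain (⟨h1, h2⟩ | ⟨h1, h⟩ | ⟨h1, h⟩) := h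
    · subst h1
      fin_cases t <;> simp_all
    · exfalso
      rcases h with ⟨ha, _⟩ | ⟨ha, _⟩ <;> exact absurd ha (by simp)
    · have hj : j = -1 := by linear_combination -h1
      have ht : t = 2 := by
        rcases h with ⟨ha, _⟩ | ⟨_, hb⟩
        · exact ha
        · exact absurd hb (by simp)
      tauto
  · intro h
    rw [mem_neighborSet, HG_adj]
    simp only [Set.mem_insert_iff, Set.mem_singleton_iff, Prod.mk.injEq] at h
    obtain (⟨rfl, rfl⟩ | ⟨rfl, rfl⟩ | ⟨rfl, rfl⟩ | ⟨rfl, rfl⟩) := h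
    · exact Or.inl ⟨rfl, by simp⟩
    · exact Or.inl ⟨rfl, by simp⟩
    · exact Or.inl ⟨rfl, by simp⟩
    · exact Or.inr (Or.inr ⟨by ring, Or.inl ⟨rfl, rfl⟩⟩)

lemma map_neighborSet (φ : HG k ≃g HG k) (x : ZMod k × Fin 4) :
    (HG k).neighborSet (φ x) = φ '' (HG k).neighborSet x := by
  ext y
  constructor
  · intro h
    refine ⟨φ.symm y, ?_, φ.apply_symm_apply y⟩
    rw [mem_neighborSet] at h ⊢
    rw [← φ.apply_symm_apply y] at h
    exact φ.map_rel_iff.mp h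
  · rintro ⟨z, hz, rfl⟩
    exact φ.map_rel_iff.mpr hz

lemma nbhd_struct (hk : 3 ≤ k) (v : ZMod k × Fin 4) :
    ∃ a b c d, (HG k).neighborSet v = {a, b, c, d} ∧
      a ≠ b ∧ a ≠ c ∧ a ≠ d ∧ b ≠ c ∧ b ≠ d ∧ c ≠ d ∧
      (HG k).Adj a b ∧ (HG k).Adj a c ∧ (HG k).Adj b c ∧
      ¬ (HG k).Adj a d ∧ ¬ (HG k).Adj b d ∧ ¬ (HG k).Adj c d := by
  have h10 : (-1 : ZMod k) ≠ 0 := neg_one_ne_zero' hk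
  obtain ⟨φ, hφ⟩ := trans_to (k := k) v
  have hAB : ((0 : ZMod k), (1 : Fin 4)) ≠ (0, 2) :=
    fun h => absurd (congrArg Prod.snd h) (by simp)
  have hAC : ((0 : ZMod k), (1 : Fin 4)) ≠ (0, 3) :=
    fun h => absurd (congrArg Prod.snd h) (by simp)
  have hAD : ((0 : ZMod k), (1 : Fin 4)) ≠ (-1, 2) :=
    fun h => absurd (congrArg Prod.snd h) (by simp)
  have hBC : ((0 : ZMod k), (2 : Fin 4)) ≠ (0, 3) :=
    fun h => absurd (congrArg Prod.snd h) (by simp)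
  have hBD : ((0 : ZMod k), (2 : Fin 4)) ≠ (-1, 2) :=
    fun h => h10 (congrArg Prod.fst h).symm
  have hCD : ((0 : ZMod k), (3 : Fin 4)) ≠ (-1, 2) :=
    fun h => absurd (congrArg Prod.snd h) (by simp)
  have aAB : (HG k).Adj ((0 : ZMod k), (1 : Fin 4)) (0, 2) :=
    HG_adj.mpr (Or.inl ⟨rfl, by simp⟩)
  have aAC : (HG k).Adj ((0 : ZMod k), (1 : Fin 4)) (0, 3) :=
    HG_adj.mpr (Or.inl ⟨rfl, by simp⟩)
  have aBC : (HG k).Adj ((0 : ZMod k), (2 : Fin 4)) (0, 3) :=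
    HG_adj.mpr (Or.inl ⟨rfl, by simp⟩)
  have nAD : ¬ (HG k).Adj ((0 : ZMod k), (1 : Fin 4)) (-1, 2) := by
    intro h
    rw [HG_adj] at h
    obtain (⟨h1, _⟩ | ⟨_, ⟨ha, _⟩ | ⟨ha, _⟩⟩ | ⟨_, ⟨_, hb⟩ | ⟨ha, _⟩⟩) := h
    · exact h10 h1.symm
    · exact absurd ha (by simp)
    · exact absurd ha (by simp)
    · exact absurd hb (by simp)
    · exact absurd ha (by simp)
  have nBD : ¬ (HG k).Adj ((0 : ZMod k), (2 : Fin 4)) (-1, 2) := by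
    intro h
    rw [HG_adj] at h
    obtain (⟨_, h2⟩ | ⟨_, ⟨_, hb⟩ | ⟨ha, _⟩⟩ | ⟨_, ⟨_, hb⟩ | ⟨ha, _⟩⟩) := h
    · exact h2 rfl
    · exact absurd hb (by simp)
    · exact absurd ha (by simp)
    · exact absurd hb (by simp)
    · exact absurd ha (by simp)
  have nCD : ¬ (HG k).Adj ((0 : ZMod k), (3 : Fin 4)) (-1, 2) := by
    intro h
    rw [HG_adj] at h
    obtain (⟨h1, _⟩ | ⟨_, ⟨ha, _⟩ | ⟨_, hb⟩⟩ | ⟨_, ⟨_, hb⟩ | ⟨ha, _⟩⟩) := h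
    · exact h10 h1.symm
    · exact absurd ha (by simp)
    · exact absurd hb (by simp)
    · exact absurd hb (by simp)
    · exact absurd ha (by simp)
  refine ⟨φ (0, 1), φ (0, 2), φ (0, 3), φ (-1, 2), ?_, φ.toEquiv.injective.ne hAB,
    φ.toEquiv.injective.ne hAC, φ.toEquiv.injective.ne hAD, φ.toEquiv.injective.ne hBC,
    φ.toEquiv.injective.ne hBD, φ.toEquiv.injective.ne hCD, φ.map_rel_iff.mpr aAB,
    φ.map_rel_iff.mpr aAC, φ.map_rel_iff.mpr aBC, fun h => nAD (φ.map_rel_iff.mp h),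
    fun h => nBD (φ.map_rel_iff.mp h), fun h => nCD (φ.map_rel_iff.mp h)⟩
  rw [← hφ, map_neighborSet, nbhd_base hk]
  simp only [Set.image_insert_eq, Set.image_singleton]

lemma ncard4 {V : Type*} {a b c d : V} (hab : a ≠ b) (hac : a ≠ c) (had : a ≠ d)
    (hbc : b ≠ c) (hbd : b ≠ d) (hcd : c ≠ d) : ({a, b, c, d} : Set V).ncard = 4 := by
  rw [Set.ncard_insert_of_notMem (by simp [hab, hac, had]),
    Set.ncard_insert_of_notMem (by simp [hbc, hbd]),
    Set.ncard_insert_of_notMem (by simp [hcd]), Set.ncard_singleton]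

lemma no_match {V : Type*} {G : SimpleGraph V} {v a b c d : V}
    (hset : G.neighborSet v = {a, b, c, d})
    (hab : a ≠ b) (hac : a ≠ c) (had : a ≠ d) (hbc : b ≠ c) (hbd : b ≠ d) (hcd : c ≠ d)
    (aab : G.Adj a b) (aac : G.Adj a c) (abc : G.Adj b c)
    (nad : ¬ G.Adj a d) (nbd : ¬ G.Adj b d) (ncd : ¬ G.Adj c d) :
    ¬ ∃ u₁ w₁ u₂ w₂ : V,
      u₁ ∈ G.neighborSet v ∧ w₁ ∈ G.neighborSet v ∧
      u₂ ∈ G.neighborSet v ∧ w₂ ∈ G.neighborSet v ∧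
      u₁ ≠ w₁ ∧ u₂ ≠ w₂ ∧ u₁ ≠ u₂ ∧ u₁ ≠ w₂ ∧ w₁ ≠ u₂ ∧ w₁ ≠ w₂ ∧
      ¬ G.Adj u₁ w₁ ∧ ¬ G.Adj u₂ w₂ := by
  have aba := aab.symm
  have aca := aac.symm
  have acb := abc.symm
  have key : ∀ x y, x ∈ G.neighborSet v → y ∈ G.neighborSet v → x ≠ y → ¬ G.Adj x y →
      x = d ∨ y = d := by
    intro x y hx hy hxy hnadj
    rw [hset] at hx hy
    simp only [Set.mem_insert_iff, Set.mem_singleton_iff] at hx hy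
    rcases hx with rfl | rfl | rfl | rfl <;> rcases hy with rfl | rfl | rfl | rfl <;> tauto
  rintro ⟨u₁, w₁, u₂, w₂, h1, h2, h3, h4, h5, h6, h7, h8, h9, h10, h11, h12⟩
  rcases key _ _ h1 h2 h5 h11 with rfl | rfl <;>
    rcases key _ _ h3 h4 h6 h12 with rfl | rfl <;> simp_all

end IrredAux

open IrredAux in
/-- For every `k ≥ 3` there is a connected, vertex-transitive, 4-regular simple graph on
`4k` vertices in which the induced neighborhood of every vertex is a `K₃` plus an
isolated vertex; consequently the complement of every induced neighborhood has no
matching of size 2, so no vertex is DP-removable. -/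
theorem exists_irreducible_four_regular (k : ℕ) (hk : 3 ≤ k) :
    ∃ G : SimpleGraph (Fin (4 * k)),
      G.Connected ∧
      (∀ u v : Fin (4 * k), ∃ φ : G ≃g G, φ u = v) ∧
      (∀ v, (G.neighborSet v).ncard = 4) ∧
      (∀ v, ∃ a b c d : Fin (4 * k),
        G.neighborSet v = {a, b, c, d} ∧
        a ≠ b ∧ a ≠ c ∧ a ≠ d ∧ b ≠ c ∧ b ≠ d ∧ c ≠ d ∧
        G.Adj a b ∧ G.Adj a c ∧ G.Adj b c ∧
        ¬ G.Adj a d ∧ ¬ G.Adj b d ∧ ¬ G.Adj c d) ∧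
      (∀ v, ¬ ∃ u₁ w₁ u₂ w₂ : Fin (4 * k),
        u₁ ∈ G.neighborSet v ∧ w₁ ∈ G.neighborSet v ∧
        u₂ ∈ G.neighborSet v ∧ w₂ ∈ G.neighborSet v ∧
        u₁ ≠ w₁ ∧ u₂ ≠ w₂ ∧ u₁ ≠ u₂ ∧ u₁ ≠ w₂ ∧ w₁ ≠ u₂ ∧ w₁ ≠ w₂ ∧
        ¬ G.Adj u₁ w₁ ∧ ¬ G.Adj u₂ w₂) := by
  haveI : NeZero k := ⟨by omega⟩
  have card : Fintype.card (Fin (4 * k)) = Fintype.card (ZMod k × Fin 4) := by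
    simp [ZMod.card, mul_comm]
  let e : Fin (4 * k) ≃ ZMod k × Fin 4 := Fintype.equivOfCardEq card
  let G : SimpleGraph (Fin (4 * k)) := (HG k).comap e.toEmbedding
  let ι : G ≃g HG k := SimpleGraph.Iso.comap e (HG k)
  have hι : ∀ x, ι x = e x := fun _ => rfl
  have hGadj : ∀ u w, G.Adj u w ↔ (HG k).Adj (e u) (e w) := fun _ _ => Iff.rfl
  have struct : ∀ v, ∃ a b c d : Fin (4 * k),
      G.neighborSet v = {a, b, c, d} ∧
      a ≠ b ∧ a ≠ c ∧ a ≠ d ∧ b ≠ c ∧ b ≠ d ∧ c ≠ d ∧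
      G.Adj a b ∧ G.Adj a c ∧ G.Adj b c ∧
      ¬ G.Adj a d ∧ ¬ G.Adj b d ∧ ¬ G.Adj c d := by
    intro v
    obtain ⟨a, b, c, d, hset, hab, hac, had, hbc, hbd, hcd, aab, aac, abc, nad, nbd, ncd⟩ :=
      nbhd_struct hk (e v)
    have hmem : ∀ x, x ∈ G.neighborSet v ↔ e x ∈ (HG k).neighborSet (e v) := fun _ => Iff.rfl
    refine ⟨e.symm a, e.symm b, e.symm c, e.symm d, ?_,
      fun h => hab (by simpa using congrArg e h),
      fun h => hac (by simpa using congrArg e h),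
      fun h => had (by simpa using congrArg e h),
      fun h => hbc (by simpa using congrArg e h),
      fun h => hbd (by simpa using congrArg e h),
      fun h => hcd (by simpa using congrArg e h),
      ?_, ?_, ?_, ?_, ?_, ?_⟩
    · ext x
      rw [hmem x, hset]
      simp only [Set.mem_insert_iff, Set.mem_singleton_iff, ← Equiv.eq_symm_apply]
    · rw [hGadj]; simpa using aab
    · rw [hGadj]; simpa using aac
    · rw [hGadj]; simpa using abc
    · rw [hGadj]; simpa using nad
    · rw [hGadj]; simpa using nbd
    · rw [hGadj]; simpa using ncd
  refine ⟨G, ?_, ?_, ?_, struct, ?_⟩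
  · exact (SimpleGraph.Iso.connected_iff ι).mpr (HG_conn hk)
  · intro u v
    obtain ⟨ψ, hψ⟩ := HG_trans (k := k) (ι u) (ι v)
    refine ⟨(ι.trans ψ).trans ι.symm, ?_⟩
    rw [RelIso.trans_apply, RelIso.trans_apply, hψ]
    exact ι.symm_apply_apply v
  · intro v
    obtain ⟨a, b, c, d, hset, hab, hac, had, hbc, hbd, hcd, _⟩ := struct v
    rw [hset]
    exact ncard4 hab hac had hbc hbd hcd
  · intro v
    obtain ⟨a, b, c, d, hset, hab, hac, had, hbc, hbd, hcd, aab, aac, abc, nad, nbd, ncd⟩ :=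
      struct v
    exact no_match hset hab hac had hbc hbd hcd aab aac abc nad nbd ncd
end

section
/- If I is an independent set of vertices in a simple graph G and u, v ∈ I are both DP-removable, then DP-removing u and then v yields the same set of possible resulting graphs as DP-removing v and then u (the two removal operations commute). -/
/-- DP-removal of an (even-degree) vertex `w`: choose a matching `M` of size `d(w)/2` in
the complement of the induced subgraph on the neighborhood of `w`, delete `w` together
with its incident edges, and add the pairs of `M` as new edges. -/
def DPRemove {V : Type*} (G : SimpleGraph V) (w : V) (G' : SimpleGraph V) : Prop :=
  ∃ M : Finset (Sym2 V),
    (∀ e ∈ M, ¬ e.IsDiag ∧ e ∉ G.edgeSet ∧ ∀ v ∈ e, v ∈ G.neighborSet w) ∧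
    ((M : Set (Sym2 V)).Pairwise fun e f => ∀ v, v ∈ e → v ∉ f) ∧
    2 * M.card = (G.neighborSet w).ncard ∧
    G' = SimpleGraph.fromEdgeSet ((G.edgeSet \ G.incidenceSet w) ∪ ↑M)

/-- Adjacency in the graph obtained by deleting the edges at `w` and adding `M`. -/
lemma dp_rem_adj {V : Type*} (G : SimpleGraph V) (w : V) (M : Finset (Sym2 V)) (a b : V) :
    (SimpleGraph.fromEdgeSet ((G.edgeSet \ G.incidenceSet w) ∪ ↑M)).Adj a b ↔
      ((G.Adj a b ∧ w ≠ a ∧ w ≠ b) ∨ s(a, b) ∈ M) ∧ a ≠ b := by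
  simp only [SimpleGraph.fromEdgeSet_adj, Set.mem_union, Set.mem_diff,
    SimpleGraph.mem_edgeSet, SimpleGraph.mk'_mem_incidenceSet_iff, Finset.mem_coe]
  tauto

set_option maxHeartbeats 1000000 in
/-- The key one-directional lemma: if `u, v` are distinct non-adjacent vertices, then any
graph obtained by DP-removing `u` then `v` can be obtained by DP-removing `v` then `u`. -/
lemma dp_key {V : Type*} [Fintype V] [DecidableEq V]
    (G : SimpleGraph V) (u v : V) (huv : u ≠ v) (hadj : ¬ G.Adj u v)
    (H : SimpleGraph V)
    (h : ∃ G₁, DPRemove G u G₁ ∧ DPRemove G₁ v H) :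
    ∃ G₂, DPRemove G v G₂ ∧ DPRemove G₂ u H := by
  obtain ⟨G₁, ⟨M₁, hM₁, hP₁, hc₁, hG₁⟩, ⟨M₂, hM₂, hP₂, hc₂, hH⟩⟩ := h
  -- basic facts about M₁
  have hM₁u : ∀ e ∈ M₁, u ∉ e := fun e he hx => G.irrefl ((hM₁ e he).2.2 u hx)
  have hM₁v : ∀ e ∈ M₁, v ∉ e := fun e he hx => hadj ((hM₁ e he).2.2 v hx)
  have hA1 : ∀ a b, G₁.Adj a b ↔ ((G.Adj a b ∧ u ≠ a ∧ u ≠ b) ∨ s(a, b) ∈ M₁) ∧ a ≠ b := by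
    intro a b; rw [hG₁]; exact dp_rem_adj G u M₁ a b
  -- the neighborhood of v is unchanged
  have hN : G₁.neighborSet v = G.neighborSet v := by
    ext x
    simp only [SimpleGraph.mem_neighborSet, hA1]
    constructor
    · rintro ⟨(⟨h, -⟩ | hm), -⟩
      · exact h
      · exact absurd (Sym2.mem_mk_left v x) (hM₁v _ hm)
    · intro h
      exact ⟨Or.inl ⟨h, huv, fun hxu => hadj (hxu ▸ h).symm⟩, h.ne⟩
  -- basic facts about M₂
  have hM₂N : ∀ e ∈ M₂, ∀ x ∈ e, x ∈ G.neighborSet v := by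
    intro e he x hx; rw [← hN]; exact (hM₂ e he).2.2 x hx
  have hM₂v : ∀ e ∈ M₂, v ∉ e := fun e he hx => G.irrefl (hM₂N e he v hx)
  have hM₂u : ∀ e ∈ M₂, u ∉ e := fun e he hx => hadj (hM₂N e he u hx).symm
  have hM₂E : ∀ e ∈ M₂, e ∉ G.edgeSet := by
    intro e he heE
    apply (hM₂ e he).2.1
    rw [hG₁, SimpleGraph.edgeSet_fromEdgeSet]
    refine ⟨Or.inl ⟨heE, fun hin => hM₂u e he hin.2⟩, G.not_isDiag_of_mem_edgeSet heE⟩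
  have hM₂M₁ : ∀ e ∈ M₂, e ∉ M₁ := by
    intro e he he1
    apply (hM₂ e he).2.1
    rw [hG₁, SimpleGraph.edgeSet_fromEdgeSet]
    exact ⟨Or.inr he1, (hM₁ e he1).1⟩
  -- the intermediate graph in the other order
  refine ⟨SimpleGraph.fromEdgeSet ((G.edgeSet \ G.incidenceSet v) ∪ ↑M₂),
    ⟨M₂, fun e he => ⟨(hM₂ e he).1, hM₂E e he, hM₂N e he⟩, hP₂, by rw [← hN]; exact hc₂, rfl⟩,
    ?_⟩
  set G₂ := SimpleGraph.fromEdgeSet ((G.edgeSet \ G.incidenceSet v) ∪ ↑M₂) with hG₂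
  have hA2 : ∀ a b, G₂.Adj a b ↔ ((G.Adj a b ∧ v ≠ a ∧ v ≠ b) ∨ s(a, b) ∈ M₂) ∧ a ≠ b :=
    fun a b => dp_rem_adj G v M₂ a b
  -- the neighborhood of u is unchanged in G₂
  have hN2 : G₂.neighborSet u = G.neighborSet u := by
    ext x
    simp only [SimpleGraph.mem_neighborSet, hA2]
    constructor
    · rintro ⟨(⟨h, -⟩ | hm), -⟩
      · exact h
      · exact absurd (Sym2.mem_mk_left u x) (hM₂u _ hm)
    · intro h
      exact ⟨Or.inl ⟨h, huv.symm, fun hxv => hadj (hxv ▸ h)⟩, h.ne⟩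
  have hM₁E2 : ∀ e ∈ M₁, e ∉ G₂.edgeSet := by
    intro e he heE
    rw [hG₂, SimpleGraph.edgeSet_fromEdgeSet] at heE
    rcases heE.1 with h | h
    · exact (hM₁ e he).2.1 h.1
    · exact hM₂M₁ e h he
  refine ⟨M₁, fun e he => ⟨(hM₁ e he).1, hM₁E2 e he, by rw [hN2]; exact (hM₁ e he).2.2⟩,
    hP₁, by rw [hN2]; exact hc₁, ?_⟩
  rw [hH]
  ext a b
  rw [dp_rem_adj G₁ v M₂ a b, dp_rem_adj G₂ u M₁ a b, hA1 a b, hA2 a b]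
  have f1 : s(a, b) ∈ M₁ → a ≠ b := fun hm hab =>
    (hM₁ _ hm).1 (by rw [hab]; exact Sym2.mk_isDiag_iff.2 rfl)
  have f2 : s(a, b) ∈ M₁ → v ≠ a ∧ v ≠ b := fun hm =>
    ⟨fun h => hM₁v _ hm (h ▸ Sym2.mem_mk_left a b),
     fun h => hM₁v _ hm (h ▸ Sym2.mem_mk_right a b)⟩
  have f3 : s(a, b) ∈ M₂ → a ≠ b := fun hm hab =>
    (hM₂ _ hm).1 (by rw [hab]; exact Sym2.mk_isDiag_iff.2 rfl)
  have f4 : s(a, b) ∈ M₂ → u ≠ a ∧ u ≠ b := fun hm =>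
    ⟨fun h => hM₂u _ hm (h ▸ Sym2.mem_mk_left a b),
     fun h => hM₂u _ hm (h ▸ Sym2.mem_mk_right a b)⟩
  tauto

/-- If `I` is an independent set and `u, v ∈ I` are both DP-removable, then DP-removing
`u` then `v` yields exactly the same possible resulting graphs as DP-removing `v` then
`u`: the two removal operations commute. -/
theorem dp_removal_commutes {V : Type*} [Fintype V] [DecidableEq V]
    (G : SimpleGraph V) (I : Set V)
    (hI : ∀ a ∈ I, ∀ b ∈ I, a ≠ b → ¬ G.Adj a b)
    (u v : V) (hu : u ∈ I) (hv : v ∈ I) (huv : u ≠ v)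
    (hru : ∃ G₁, DPRemove G u G₁) (hrv : ∃ G₂, DPRemove G v G₂) :
    {H : SimpleGraph V | ∃ G₁, DPRemove G u G₁ ∧ DPRemove G₁ v H} =
    {H : SimpleGraph V | ∃ G₂, DPRemove G v G₂ ∧ DPRemove G₂ u H} := by
  ext H
  constructor
  · exact dp_key G u v huv (hI u hu v hv huv) H
  · exact dp_key G v u huv.symm (hI v hv u hu huv.symm) H
end

section
/- Let 1/2 < c ≤ 1 and K ≥ 0 be constants, and let G be a simple graph on n vertices whose degree sequence d satisfies d(i) ≥ (2c−1)i − K for all 1 ≤ i ≤ n (in increasing order). If (2c−1)n − K − 2 ≥ 0, then the matching number satisfies ν(G) ≥ ((2c−1)/(2c)) · (n − 1 − (K+1)/(2c−1)). -/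
set_option linter.unusedSectionVars false

namespace LDPG
open Finset
open scoped Classical

lemma num {ι : Type*} [DecidableEq ι] (a B : ℝ) (ha : 0 < a) (hB : -1 ≤ B) :
    ∀ (U : Finset ι) (s : ι → ℝ), (∀ u ∈ U, 1 ≤ s u) →
      (∀ A ⊆ U, A.Nonempty → ∃ u ∈ A, a * ∑ x ∈ A, s x ≤ s u + B) →
      (1 + a) * U.card ≤ (1 - a) * ∑ u ∈ U, s u + 2 * B + 2 * a + 4 := by
  intro U
  induction U using Finset.strongInduction with
  | _ U IH =>
  intro s hs hcon
  rcases U.eq_empty_or_nonempty with rfl | hne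
  · simp only [card_empty, Nat.cast_zero, mul_zero, sum_empty]
    nlinarith
  obtain ⟨ustar, hust, hmax⟩ := Finset.exists_max_image U s hne
  obtain ⟨u0, hu0, hu0c⟩ := hcon U (subset_refl U) hne
  have hPst : a * ∑ x ∈ U, s x ≤ s ustar + B := le_trans hu0c (by linarith [hmax u0 hu0])
  have hst1 : 1 ≤ s ustar := hs _ hust
  have hsplit : ∑ x ∈ U, s x = s ustar + ∑ x ∈ U.erase ustar, s x :=
    (Finset.add_sum_erase U s hust).symm
  have hc1 : 1 ≤ U.card := Finset.card_pos.2 hne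
  have hcerase : ((U.erase ustar).card : ℝ) = (U.card : ℝ) - 1 := by
    rw [Finset.card_erase_of_mem hust]
    push_cast [hc1]
    ring
  have herasesum : ((U.erase ustar).card : ℝ) ≤ ∑ x ∈ U.erase ustar, s x := by
    calc ((U.erase ustar).card : ℝ) = ∑ _x ∈ U.erase ustar, (1 : ℝ) := by simp
    _ ≤ _ := Finset.sum_le_sum (fun x hx => hs x (Finset.mem_of_mem_erase hx))
  have hUP : (U.card : ℝ) ≤ (∑ x ∈ U, s x) - s ustar + 1 := by
    rw [hsplit]; linarith
  by_cases hcase : (1 - a) * s ustar ≤ a + 3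
  · have h1a : (0:ℝ) ≤ 1 + a := by linarith
    nlinarith [mul_le_mul_of_nonneg_left hUP h1a]
  · push_neg at hcase
    have hIH := IH (U.erase ustar) (Finset.erase_ssubset hust) s
      (fun u hu => hs u (Finset.mem_of_mem_erase hu))
      (fun A hA hAne => hcon A (le_trans hA (Finset.erase_subset _ _)) hAne)
    have : (1 + a) ≤ (1 - a) * s ustar := by linarith
    have hcard : (U.card : ℝ) = ((U.erase ustar).card : ℝ) + 1 := by rw [hcerase]; ring
    rw [hcard, hsplit]
    linarith

variable {V : Type*} [Fintype V] [DecidableEq V]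

noncomputable def cov (M : Finset (Sym2 V)) : Finset V :=
  univ.filter (fun v => ∃ e ∈ M, v ∈ e)

lemma mem_cov {M : Finset (Sym2 V)} {v : V} : v ∈ cov M ↔ ∃ e ∈ M, v ∈ e := by
  simp [cov]

def MaxM (G : SimpleGraph V) (M : Finset (Sym2 V)) : Prop :=
  IsMatchingFinset G M ∧ ∀ M', IsMatchingFinset G M' → M'.card ≤ M.card

lemma matching_empty (G : SimpleGraph V) : IsMatchingFinset G (∅ : Finset (Sym2 V)) := by
  constructor
  · simp
  · simp

lemma matching_subset {G : SimpleGraph V} {M M' : Finset (Sym2 V)}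
    (hM : IsMatchingFinset G M) (h : M' ⊆ M) : IsMatchingFinset G M' := by
  refine ⟨subset_trans (by exact_mod_cast h) hM.1, hM.2.mono (by exact_mod_cast h)⟩

lemma exists_maxM (G : SimpleGraph V) : ∃ M, MaxM G M := by
  obtain ⟨M, hM, hmax⟩ := Finset.exists_max_image
    (univ.filter fun M => IsMatchingFinset G M) Finset.card
    ⟨∅, by simp [matching_empty]⟩
  exact ⟨M, (mem_filter.1 hM).2, fun M' h' => hmax M' (by simp [h'])⟩

lemma cov_mono {M M' : Finset (Sym2 V)} (h : M' ⊆ M) : cov M' ⊆ cov M := by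
  intro v hv
  rw [mem_cov] at hv ⊢
  obtain ⟨e, he, hve⟩ := hv
  exact ⟨e, h he, hve⟩

lemma matching_insert {G : SimpleGraph V} {M : Finset (Sym2 V)} {e : Sym2 V}
    (hM : IsMatchingFinset G M) (he : e ∈ G.edgeSet) (hfree : ∀ v ∈ e, v ∉ cov M) :
    IsMatchingFinset G (insert e M) := by
  have heM : ∀ f ∈ M, ∀ v, v ∈ e → v ∉ f := by
    intro f hf v hve hvf
    exact hfree v hve (mem_cov.2 ⟨f, hf, hvf⟩)
  constructor
  · intro f hf
    rcases Finset.mem_insert.1 (by exact_mod_cast hf) with rfl | hf'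
    · exact he
    · exact hM.1 hf'
  · intro f hf g hg hfg
    simp only [Finset.coe_insert, Set.mem_insert_iff, Finset.mem_coe] at hf hg
    rcases hf with rfl | hf <;> rcases hg with rfl | hg
    · exact absurd rfl hfg
    · exact heM g hg
    · intro v hvf hve
      exact heM f hf v hve hvf
    · exact hM.2 hf hg hfg

lemma not_mem_of_free {M : Finset (Sym2 V)} {e : Sym2 V} {v : V}
    (hv : v ∉ cov M) (hve : v ∈ e) : e ∉ M := fun he => hv (mem_cov.2 ⟨e, he, hve⟩)

lemma matching_unique {G : SimpleGraph V} {M : Finset (Sym2 V)} (hM : IsMatchingFinset G M)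
    {e f : Sym2 V} {v : V} (he : e ∈ M) (hf : f ∈ M) (hve : v ∈ e) (hvf : v ∈ f) : e = f := by
  by_contra hne
  exact hM.2 he hf hne v hve hvf

lemma edge_filter_card {G : SimpleGraph V} {e : Sym2 V} (he : e ∈ G.edgeSet) :
    (univ.filter (fun v : V => v ∈ e)).card = 2 := by
  induction e with
  | _ x y =>
    have hxy : G.Adj x y := he
    have : (univ.filter (fun v : V => v ∈ s(x, y))) = {x, y} := by
      ext z; simp [Sym2.mem_iff]
    rw [this, card_insert_of_notMem (by simp [hxy.ne]), card_singleton]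

lemma card_cov {G : SimpleGraph V} {M : Finset (Sym2 V)} (hM : IsMatchingFinset G M) :
    (cov M).card = 2 * M.card := by
  have : cov M = M.biUnion (fun e => univ.filter (fun v : V => v ∈ e)) := by
    ext v; simp [mem_cov]
  rw [this, card_biUnion]
  · rw [Finset.sum_congr rfl (fun e he => edge_filter_card (hM.1 he))]
    simp [mul_comm]
  · intro e he f hf hef
    rw [Function.onFun, Finset.disjoint_filter]
    intro v _ hve hvf
    exact hM.2 he hf hef v hve hvf
lemma no_two_missed (G : SimpleGraph V)
    (hav : ∀ w : V, ∃ N, MaxM G N ∧ w ∉ cov N) :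
    ∀ d : ℕ, ∀ M : Finset (Sym2 V), ∀ u v : V, MaxM G M → u ∉ cov M → v ∉ cov M → u ≠ v →
      G.Reachable u v → G.dist u v ≤ d → False := by
  intro d
  induction d using Nat.strong_induction_on with
  | _ d IH =>
  intro M u v hM hu hv huv hr hd
  by_cases hadj : G.Adj u v
  · -- extend M by the edge uv
    have hfree : ∀ w ∈ s(u, v), w ∉ cov M := by
      intro w hw
      rcases Sym2.mem_iff.1 hw with rfl | rfl
      exacts [hu, hv]
    have hM' := matching_insert hM.1 (G.mem_edgeSet.2 hadj) hfree
    have hnotmem : s(u, v) ∉ M := not_mem_of_free hu (by simp)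
    have := hM.2 _ hM'
    rw [card_insert_of_notMem hnotmem] at this
    omega
  · obtain ⟨p, hp⟩ := hr.exists_walk_length_eq_dist
    cases p with
    | nil => exact huv rfl
    | @cons _ t _ h q =>
      simp only [SimpleGraph.Walk.length_cons] at hp
      have htv : t ≠ v := by
        rintro rfl
        exact hadj h
      have hql : 1 ≤ q.length := by
        rcases Nat.eq_zero_or_pos q.length with h0 | h1
        · exact absurd (SimpleGraph.Walk.eq_of_length_eq_zero h0) htv
        · exact h1
      have hd2 : 2 ≤ G.dist u v := by omega
      have hdd : 2 ≤ d := le_trans hd2 hd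
      by_cases htc : t ∈ cov M
      · -- choose N maximizing |M ∩ N| among max matchings missing t
        obtain ⟨N₀, hN₀⟩ := hav t
        obtain ⟨N, hNmem, hNmax⟩ := Finset.exists_max_image
          ((univ : Finset (Finset (Sym2 V))).filter (fun N => MaxM G N ∧ t ∉ cov N))
          (fun N => (M ∩ N).card) ⟨N₀, by simp [hN₀]⟩
        obtain ⟨hN, htN⟩ := (mem_filter.1 hNmem).2
        have hcards : M.card = N.card := le_antisymm (hN.2 M hM.1) (hM.2 N hN.1)
        have hut : u ≠ t := h.ne
        have huN : u ∈ cov N := by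
          by_contra huN
          exact IH 1 (by omega) N t u hN htN huN (Ne.symm hut) h.symm.reachable
            (SimpleGraph.dist_le (SimpleGraph.Walk.cons h.symm SimpleGraph.Walk.nil))
        have hvN : v ∈ cov N := by
          by_contra hvN
          exact IH (d - 1) (by omega) N t v hN htN hvN htv q.reachable
            (le_trans (SimpleGraph.dist_le q) (by omega))
        -- missed sets have equal cardinality
        have hcc : (cov M).card = (cov N).card := by
          rw [card_cov hM.1, card_cov hN.1, hcards]
        -- find x missed by N, ≠ t, covered by M
        have hx : ∃ x, x ∉ cov N ∧ x ≠ t ∧ x ∈ cov M := by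
          by_contra hcon
          push_neg at hcon
          have hsub : insert u (insert v ((univ \ cov N).erase t)) ⊆ univ \ cov M := by
            intro x hx
            rcases Finset.mem_insert.1 hx with rfl | hx
            · simp [hu]
            rcases Finset.mem_insert.1 hx with rfl | hx
            · simp [hv]
            · have hx' := Finset.mem_of_mem_erase hx
              have hxt := Finset.ne_of_mem_erase hx
              have : x ∉ cov N := (Finset.mem_sdiff.1 hx').2
              simp [hcon x this hxt]
          have hcard1 : ((univ \ cov N).erase t).card = (univ \ cov N).card - 1 :=
            Finset.card_erase_of_mem (by simp [htN])
          have huvN : u ∉ (univ \ cov N).erase t := by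
            intro hmem
            exact (Finset.mem_sdiff.1 (Finset.mem_of_mem_erase hmem)).2 huN
          have hvvN : v ∉ (univ \ cov N).erase t := by
            intro hmem
            exact (Finset.mem_sdiff.1 (Finset.mem_of_mem_erase hmem)).2 hvN
          have hcard2 : (insert u (insert v ((univ \ cov N).erase t))).card
              = (univ \ cov N).card + 1 := by
            rw [Finset.card_insert_of_notMem (by simp [huvN, huv]),
              Finset.card_insert_of_notMem hvvN, hcard1]
            have : 1 ≤ (univ \ cov N).card := by
              refine Finset.card_pos.2 ⟨t, ?_⟩
              simp [htN]
            omega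
          have hle := Finset.card_le_card hsub
          rw [hcard2] at hle
          rw [Finset.card_sdiff_of_subset (Finset.subset_univ _), Finset.card_sdiff_of_subset (Finset.subset_univ _)]
            at hle
          have h1 := Finset.card_le_card (Finset.subset_univ (cov M))
          have h2 := Finset.card_le_card (Finset.subset_univ (cov N))
          omega
        obtain ⟨x, hxN, hxt, hxM⟩ := hx
        obtain ⟨e, heM, hxe⟩ := mem_cov.1 hxM
        obtain ⟨y, rfl⟩ := Sym2.mem_iff_exists.1 hxe
        have hadjxy : G.Adj x y := G.mem_edgeSet.1 (hM.1.1 heM)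
        have heN : s(x, y) ∉ N := not_mem_of_free hxN (by simp)
        by_cases hyN : y ∈ cov N
        · -- exchange: N' = insert e (N.erase f)
          obtain ⟨f, hfN, hyf⟩ := mem_cov.1 hyN
          have hef : s(x, y) ≠ f := by rintro rfl; exact heN hfN
          have hfM : f ∉ M := by
            intro hfM
            exact hef (matching_unique hM.1 heM hfM (by simp) hyf)
          have hfree : ∀ w ∈ s(x, y), w ∉ cov (N.erase f) := by
            intro w hw
            rcases Sym2.mem_iff.1 hw with rfl | rfl
            · exact fun hc => hxN (cov_mono (Finset.erase_subset _ _) hc)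
            · intro hc
              obtain ⟨g, hg, hyg⟩ := mem_cov.1 hc
              have hgN : g ∈ N := Finset.mem_of_mem_erase hg
              have : g = f := matching_unique hN.1 hgN hfN hyg hyf
              exact (Finset.ne_of_mem_erase hg) this
          have hN'm : IsMatchingFinset G (insert s(x, y) (N.erase f)) :=
            matching_insert (matching_subset hN.1 (Finset.erase_subset _ _)) (hM.1.1 heM) hfree
          have heNf : s(x, y) ∉ N.erase f := fun hc => heN (Finset.mem_of_mem_erase hc)
          have hcardN' : (insert s(x, y) (N.erase f)).card = N.card := by
            rw [Finset.card_insert_of_notMem heNf, Finset.card_erase_of_mem hfN]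
            have : 1 ≤ N.card := Finset.card_pos.2 ⟨f, hfN⟩
            omega
          have hN'max : MaxM G (insert s(x, y) (N.erase f)) :=
            ⟨hN'm, fun M'' h'' => le_trans (hN.2 M'' h'') (le_of_eq hcardN'.symm)⟩
          have hyt : y ≠ t := by
            rintro rfl
            exact htN hyN
          have htN' : t ∉ cov (insert s(x, y) (N.erase f)) := by
            intro hc
            obtain ⟨g, hg, htg⟩ := mem_cov.1 hc
            rcases Finset.mem_insert.1 hg with rfl | hg
            · rcases Sym2.mem_iff.1 htg with rfl | rfl
              · exact hxt rfl
              · exact hyt rfl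
            · exact htN (mem_cov.2 ⟨g, Finset.mem_of_mem_erase hg, htg⟩)
          have hmemN' : (insert s(x, y) (N.erase f)) ∈
              (univ : Finset (Finset (Sym2 V))).filter (fun N => MaxM G N ∧ t ∉ cov N) := by
            simp [hN'max, htN']
          have hle := hNmax _ hmemN'
          have hss : M ∩ N ⊂ M ∩ (insert s(x, y) (N.erase f)) := by
            constructor
            · intro g hg
              obtain ⟨hgM, hgN⟩ := Finset.mem_inter.1 hg
              have hgf : g ≠ f := fun hgf => hfM (hgf ▸ hgM)
              exact Finset.mem_inter.2 ⟨hgM,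
                Finset.mem_insert_of_mem (Finset.mem_erase.2 ⟨hgf, hgN⟩)⟩
            · intro hsub
              have : s(x, y) ∈ M ∩ N :=
                hsub (Finset.mem_inter.2 ⟨heM, Finset.mem_insert_self _ _⟩)
              exact heN (Finset.mem_inter.1 this).2
          exact absurd hle (not_le.2 (Finset.card_lt_card hss))
        · -- y not covered by N : extend N
          have hfree : ∀ w ∈ s(x, y), w ∉ cov N := by
            intro w hw
            rcases Sym2.mem_iff.1 hw with rfl | rfl
            exacts [hxN, hyN]
          have hN' := matching_insert hN.1 (hM.1.1 heM) hfree
          have := hN.2 _ hN'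
          rw [card_insert_of_notMem heN] at this
          omega
      · exact IH 1 (by omega) M u t hM hu htc h.ne h.reachable
          (SimpleGraph.dist_le (SimpleGraph.Walk.cons h SimpleGraph.Walk.nil))

noncomputable def degc (G : SimpleGraph V) (w : V) : ℕ :=
  (univ.filter (fun x => G.Adj w x)).card

def Hyp (G : SimpleGraph V) (a K : ℝ) : Prop :=
  ∀ s : Finset V, s.Nonempty → ∃ w ∈ s, a * s.card - K ≤ (degc G w : ℝ)

def Gdel (G : SimpleGraph V) (v : V) : SimpleGraph V where
  Adj x y := G.Adj x y ∧ x ≠ v ∧ y ≠ v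
  symm := ⟨fun x y ⟨h, hx, hy⟩ => ⟨h.symm, hy, hx⟩⟩
  loopless := ⟨fun x ⟨h, _, _⟩ => G.irrefl h⟩

lemma Gdel_edgeSet {G : SimpleGraph V} {v : V} {e : Sym2 V} :
    e ∈ (Gdel G v).edgeSet ↔ e ∈ G.edgeSet ∧ v ∉ e := by
  induction e with
  | _ x y =>
    show (G.Adj x y ∧ x ≠ v ∧ y ≠ v) ↔ G.Adj x y ∧ ¬(v ∈ s(x, y))
    rw [Sym2.mem_iff]
    constructor
    · rintro ⟨h, hx, hy⟩
      refine ⟨h, ?_⟩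
      rintro (rfl | rfl)
      exacts [hx rfl, hy rfl]
    · rintro ⟨h, hm⟩
      push_neg at hm
      exact ⟨h, fun hx => hm.1 hx.symm, fun hy => hm.2 hy.symm⟩

lemma degc_Gdel_ge {G : SimpleGraph V} {v w : V} (hw : w ≠ v) :
    (degc G w : ℝ) - 1 ≤ (degc (Gdel G v) w : ℝ) := by
  have hsub : (univ.filter (fun x => G.Adj w x)).erase v ⊆
      univ.filter (fun x => (Gdel G v).Adj w x) := by
    intro x hx
    obtain ⟨hxv, hx'⟩ := Finset.mem_erase.1 hx
    exact mem_filter.2 ⟨mem_univ _, ⟨(mem_filter.1 hx').2, hw, hxv⟩⟩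
  have h1 := Finset.card_le_card hsub
  have h2 : (univ.filter (fun x => G.Adj w x)).card - 1 ≤
      ((univ.filter (fun x => G.Adj w x)).erase v).card := Finset.pred_card_le_card_erase
  have h3 : degc G w ≤ degc (Gdel G v) w + 1 := by
    unfold degc; omega
  have := Nat.cast_le (α := ℝ) |>.2 h3
  push_cast at this
  linarith

lemma Hyp_Gdel {G : SimpleGraph V} {v : V} {a K : ℝ} (ha : 0 < a) (hK : 0 ≤ K)
    (h : Hyp G a K) : Hyp (Gdel G v) a (K + 1 + a) := by
  intro s hs
  by_cases hv : v ∈ s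
  · rcases (s.erase v).eq_empty_or_nonempty with he | hne
    · refine ⟨v, hv, ?_⟩
      have hsub : s ⊆ {v} := by
        intro x hx
        by_contra hxv
        have hx' : x ∈ s.erase v := Finset.mem_erase.2 ⟨by simpa using hxv, hx⟩
        rw [he] at hx'
        exact absurd hx' (Finset.notMem_empty x)
      have hs1 : s.card = 1 := le_antisymm (le_trans (card_le_card hsub) (by simp))
        (card_pos.2 hs)
      rw [hs1]
      have h0 : (0:ℝ) ≤ (degc (Gdel G v) v : ℝ) := Nat.cast_nonneg _
      push_cast
      linarith
    · obtain ⟨w, hw, hb⟩ := h (s.erase v) hne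
      have hwv : w ≠ v := (Finset.mem_erase.1 hw).1
      refine ⟨w, Finset.mem_of_mem_erase hw, ?_⟩
      have hc1 : 1 ≤ s.card := card_pos.2 hs
      have hcard : ((s.erase v).card : ℝ) = (s.card : ℝ) - 1 := by
        rw [Finset.card_erase_of_mem hv]
        push_cast [hc1]
        ring
      rw [hcard] at hb
      have := degc_Gdel_ge (G := G) (v := v) hwv
      linarith
  · obtain ⟨w, hw, hb⟩ := h s hs
    have hwv : w ≠ v := fun h' => hv (h' ▸ hw)
    refine ⟨w, hw, ?_⟩
    have := degc_Gdel_ge (G := G) (v := v) hwv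
    linarith

lemma main (a : ℝ) (ha : 0 < a) (ha1 : a ≤ 1) :
    ∀ m : ℕ, ∀ G : SimpleGraph V, G.edgeFinset.card ≤ m → ∀ K : ℝ, 0 ≤ K → Hyp G a K →
      ∀ M, MaxM G M → (a * ((Fintype.card V : ℝ) - 1) - (K + 1)) / (1 + a) ≤ M.card := by
  intro m
  induction m using Nat.strong_induction_on with
  | _ m IH =>
  intro G hGm K hK hHyp M hM
  have h1a : (0:ℝ) < 1 + a := by linarith
  by_cases hcase : ∃ v : V, ∀ N, MaxM G N → v ∈ cov N
  · obtain ⟨v, hvall⟩ := hcase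
    obtain ⟨M', hM'⟩ := exists_maxM (Gdel G v)
    have hM'G : IsMatchingFinset G M' :=
      ⟨fun e he => (Gdel_edgeSet.1 (hM'.1.1 he)).1, hM'.1.2⟩
    have hvM' : v ∉ cov M' := by
      intro hc
      obtain ⟨e, he, hv⟩ := mem_cov.1 hc
      exact (Gdel_edgeSet.1 (hM'.1.1 (Finset.mem_coe.2 he))).2 hv
    have hlt : M'.card < M.card := by
      have h1 : M'.card ≤ M.card := hM.2 _ hM'G
      rcases lt_or_eq_of_le h1 with h | h
      · exact h
      · exact absurd (hvall M' ⟨hM'G, fun M'' h'' => h ▸ hM.2 M'' h''⟩) hvM'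
    have hvM := hvall M hM
    obtain ⟨e0, he0M, hve0⟩ := mem_cov.1 hvM
    have he0 : e0 ∈ G.edgeSet := hM.1.1 he0M
    have he0' : e0 ∉ (Gdel G v).edgeSet := fun hc => (Gdel_edgeSet.1 hc).2 hve0
    have hss : (Gdel G v).edgeFinset ⊂ G.edgeFinset := by
      constructor
      · intro e he
        rw [SimpleGraph.mem_edgeFinset] at *
        exact (Gdel_edgeSet.1 he).1
      · intro hsub
        exact he0' (SimpleGraph.mem_edgeFinset.1 (hsub (SimpleGraph.mem_edgeFinset.2 he0)))
    have hcardlt : (Gdel G v).edgeFinset.card < G.edgeFinset.card := Finset.card_lt_card hss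
    have hIH := IH (Gdel G v).edgeFinset.card (lt_of_lt_of_le hcardlt hGm) (Gdel G v) le_rfl
      (K + 1 + a) (by linarith) (Hyp_Gdel ha hK hHyp) M' hM'
    rw [div_le_iff₀ h1a] at hIH ⊢
    have hcast : (M'.card : ℝ) + 1 ≤ (M.card : ℝ) := by exact_mod_cast hlt
    nlinarith
  · push_neg at hcase
    set U := (univ : Finset V) \ cov M with hU
    set R : V → Finset V := fun u => univ.filter (fun w => G.Reachable u w) with hR
    have hdisj : ∀ u ∈ U, ∀ u' ∈ U, u ≠ u' → Disjoint (R u) (R u') := by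
      intro u hu u' hu' hne
      rw [Finset.disjoint_left]
      intro w hw hw'
      have hru : G.Reachable u w := (mem_filter.1 hw).2
      have hru' : G.Reachable u' w := (mem_filter.1 hw').2
      exact no_two_missed G hcase (G.dist u u') M u u' hM
        (Finset.mem_sdiff.1 hu).2 (Finset.mem_sdiff.1 hu').2 hne (hru.trans hru'.symm) le_rfl
    have hself : ∀ u : V, u ∈ R u := fun u => mem_filter.2 ⟨mem_univ _, SimpleGraph.Reachable.refl u⟩
    have hs1 : ∀ u ∈ U, (1:ℝ) ≤ ((R u).card : ℝ) := by
      intro u hu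
      exact_mod_cast Finset.card_pos.2 ⟨u, hself u⟩
    have hcon : ∀ A ⊆ U, A.Nonempty →
        ∃ u ∈ A, a * ∑ x ∈ A, ((R x).card : ℝ) ≤ ((R u).card : ℝ) + (K - 1) := by
      intro A hA hAne
      obtain ⟨u1, hu1⟩ := hAne
      have hWne : (A.biUnion R).Nonempty := ⟨u1, Finset.mem_biUnion.2 ⟨u1, hu1, hself u1⟩⟩
      obtain ⟨w, hwW, hb⟩ := hHyp (A.biUnion R) hWne
      obtain ⟨u0, hu0A, hwR⟩ := Finset.mem_biUnion.1 hwW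
      have hWcard : (A.biUnion R).card = ∑ x ∈ A, (R x).card :=
        Finset.card_biUnion (fun u hu u' hu' h => hdisj u (hA hu) u' (hA hu') h)
      have hdegb : (degc G w : ℝ) ≤ ((R u0).card : ℝ) - 1 := by
        have hsub : univ.filter (fun x => G.Adj w x) ⊆ (R u0).erase w := by
          intro x hx
          have hadj : G.Adj w x := (mem_filter.1 hx).2
          refine Finset.mem_erase.2 ⟨hadj.ne', ?_⟩
          exact mem_filter.2 ⟨mem_univ _, ((mem_filter.1 hwR).2).trans hadj.reachable⟩
        have hle : degc G w ≤ ((R u0).erase w).card := Finset.card_le_card hsub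
        rw [Finset.card_erase_of_mem hwR] at hle
        have h2 : 1 ≤ (R u0).card := Finset.card_pos.2 ⟨w, hwR⟩
        have : (degc G w : ℝ) ≤ ((R u0).card - 1 : ℕ) := by exact_mod_cast hle
        rw [Nat.cast_sub h2] at this
        exact_mod_cast this
      refine ⟨u0, hu0A, ?_⟩
      have hb' : a * ((A.biUnion R).card : ℝ) - K ≤ (degc G w : ℝ) := hb
      rw [hWcard] at hb'
      push_cast at hb'
      linarith
    have hnum := num a (K - 1) ha (by linarith) U (fun u => ((R u).card : ℝ)) hs1 hcon
    have hcovM : (cov M).card = 2 * M.card := card_cov hM.1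
    have hUcard : U.card = Fintype.card V - 2 * M.card := by
      rw [hU, Finset.card_sdiff_of_subset (subset_univ _), hcovM, Finset.card_univ]
    have h2M : 2 * M.card ≤ Fintype.card V := by
      rw [← hcovM, ← Finset.card_univ]
      exact Finset.card_le_card (subset_univ _)
    have hUreal : (U.card : ℝ) = (Fintype.card V : ℝ) - 2 * M.card := by
      rw [hUcard, Nat.cast_sub h2M]
      push_cast
      ring
    have hsumle : ∑ u ∈ U, ((R u).card : ℝ) ≤ (Fintype.card V : ℝ) := by
      have h1 : ∑ u ∈ U, (R u).card = (U.biUnion R).card := (Finset.card_biUnion hdisj).symm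
      have h2 : (U.biUnion R).card ≤ Fintype.card V := by
        rw [← Finset.card_univ]
        exact Finset.card_le_card (subset_univ _)
      calc ∑ u ∈ U, ((R u).card : ℝ) = ((∑ u ∈ U, (R u).card : ℕ) : ℝ) := by push_cast; ring
        _ ≤ _ := by rw [h1]; exact_mod_cast h2
    have h1a' : (0:ℝ) ≤ 1 - a := by linarith
    rw [div_le_iff₀ h1a]
    rw [hUreal] at hnum
    nlinarith [mul_le_mul_of_nonneg_left hsumle h1a']

lemma nu_bound (a : ℝ) (ha : 0 < a) (ha1 : a ≤ 1) (G : SimpleGraph V) (K : ℝ) (hK : 0 ≤ K)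
    (hHyp : Hyp G a K) {M : Finset (Sym2 V)} (hM : MaxM G M) :
    (a * ((Fintype.card V : ℝ) - 1) - (K + 1)) / (1 + a) ≤ M.card :=
  main a ha ha1 G.edgeFinset.card G le_rfl K hK hHyp M hM

end LDPG

/-- If `1/2 < c ≤ 1`, `K ≥ 0`, and the increasing degree sequence of `G` satisfies
`d(i) ≥ (2c−1)·i − K` for `1 ≤ i ≤ n`, and `(2c−1)·n − K − 2 ≥ 0`, then
`ν(G) ≥ ((2c−1)/(2c)) · (n − 1 − (K+1)/(2c−1))`. -/
theorem linear_dpg_matching_lower_bound {V : Type*} [Fintype V] [DecidableEq V]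
    (G : SimpleGraph V) [DecidableRel G.Adj]
    (c K : ℝ) (hc : 1 / 2 < c) (hc1 : c ≤ 1) (hK : 0 ≤ K)
    (n : ℕ) (hn : n = Fintype.card V)
    (e : Fin n ≃ V) (hmono : Monotone fun i => G.degree (e i))
    (hdeg : ∀ i : Fin n, (2 * c - 1) * ((i : ℝ) + 1) - K ≤ (G.degree (e i) : ℝ))
    (hnontriv : 0 ≤ (2 * c - 1) * (n : ℝ) - K - 2) :
    ∃ M : Finset (Sym2 V), IsMatchingFinset G M ∧
      ((2 * c - 1) / (2 * c)) * ((n : ℝ) - 1 - (K + 1) / (2 * c - 1)) ≤ (M.card : ℝ) := by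
  have ha : 0 < 2 * c - 1 := by linarith
  have ha1 : 2 * c - 1 ≤ 1 := by linarith
  have hdegc : ∀ w, (LDPG.degc G w : ℝ) = (G.degree w : ℝ) := by
    intro w
    have : LDPG.degc G w = G.degree w := by
      unfold LDPG.degc SimpleGraph.degree
      congr 1
      ext x
      simp [SimpleGraph.mem_neighborFinset]
    rw [this]
  have hHyp : LDPG.Hyp G (2 * c - 1) K := by
    intro s hs
    obtain ⟨j, hjJ, hjmax⟩ := Finset.exists_max_image (s.image (fun v => e.symm v))
      (fun i => (i : ℕ)) (hs.image _)
    obtain ⟨w, hws, hwj⟩ := Finset.mem_image.1 hjJ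
    have hcardle : s.card ≤ (j : ℕ) + 1 := by
      have h1 : (s.image (fun v => e.symm v)).card = s.card :=
        Finset.card_image_of_injective _ (Equiv.injective _)
      have h2 : (s.image (fun v => e.symm v)).image (fun i : Fin n => (i : ℕ))
          ⊆ Finset.range ((j : ℕ) + 1) := by
        intro k hk
        obtain ⟨i, hi, rfl⟩ := Finset.mem_image.1 hk
        exact Finset.mem_range.2 (Nat.lt_succ_of_le (hjmax i hi))
      have h3 := Finset.card_le_card h2
      rw [Finset.card_image_of_injective _ Fin.val_injective, Finset.card_range, h1] at h3
      exact h3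
    refine ⟨w, hws, ?_⟩
    have hwe : w = e j := by rw [← hwj]; simp
    rw [hdegc w, hwe]
    have hj := hdeg j
    have hcast : (s.card : ℝ) ≤ (j : ℕ) + 1 := by exact_mod_cast hcardle
    calc (2 * c - 1) * s.card - K ≤ (2 * c - 1) * ((j : ℕ) + 1) - K := by nlinarith
      _ ≤ _ := hj
  obtain ⟨M, hM⟩ := LDPG.exists_maxM G
  have hbound := LDPG.nu_bound (2 * c - 1) ha ha1 G K hK hHyp hM
  refine ⟨M, hM.1, ?_⟩
  have hcV : ((Fintype.card V : ℝ)) = (n : ℝ) := by rw [hn]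
  rw [hcV] at hbound
  have h2c : (2 * c) ≠ 0 := by linarith
  have h2c1 : (2 * c - 1) ≠ 0 := ne_of_gt ha
  have heq : ((2 * c - 1) / (2 * c)) * ((n : ℝ) - 1 - (K + 1) / (2 * c - 1))
      = ((2 * c - 1) * ((n : ℝ) - 1) - (K + 1)) / (1 + (2 * c - 1)) := by
    have : (1 + (2 * c - 1)) = 2 * c := by ring
    rw [this]
    field_simp
  rw [heq]
  exact hbound
end
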